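/- arXiv:1907.04562 — 11 statements merged into one kernel-verified Lean document; each statement's English description precedes it below -/
import Mathlib

section
/- For a left-invariant k-form α on a Lie group with left-invariant metric, α is a Killing form (i.e. ∇_Y α = (1/(k+1)) Y ⌟ dα for all Y) if and only if Y ⌟ ∇_Y α = 0 for every left-invariant vector field Y; at the Lie algebra level, this is equivalent to: ∇_y y ⌟ α + Σ_i ∇_y u_i ∧ (y ⌟ u_i ⌟ α) = 0 for all y ∈ n, where {u_i} is an orthonormal basis of n. -/
open Finset Function

section Aux
variable {E : Type*} [AddCommGroup E] [Module ℝ E]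

private lemma val_succAbove {m : ℕ} (p : Fin (m+1)) (q : Fin m) :
    ((p.succAbove q) : ℕ) = if (q:ℕ) < (p:ℕ) then (q:ℕ) else (q:ℕ)+1 := by
  rw [Fin.succAbove]
  simp only [Fin.lt_def, Fin.coe_castSucc]
  split_ifs <;> simp

private def derAlt {m : ℕ} (f : E [⋀^Fin m]→ₗ[ℝ] ℝ) (g : E →ₗ[ℝ] E) :
    E [⋀^Fin m]→ₗ[ℝ] ℝ where
  toFun v := ∑ i, f (Function.update v i (g (v i)))
  map_update_add' := by
    intro _inst v j x y
    obtain rfl : _inst = instDecidableEqFin m := Subsingleton.elim _ _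
    have key : ∀ z : E,
        ∑ i, f (Function.update (Function.update v j z) i (g ((Function.update v j z) i)))
        = f (Function.update v j (g z)) +
          ∑ i ∈ Finset.univ.erase j,
            f (Function.update (Function.update v i (g (v i))) j z) := by
      intro z
      rw [← Finset.add_sum_erase _ _ (Finset.mem_univ j)]
      congr 1
      · rw [Function.update_idem, Function.update_self]
      · refine Finset.sum_congr rfl fun i hi => ?_
        have hij : i ≠ j := Finset.ne_of_mem_erase hi
        rw [Function.update_of_ne hij, Function.update_comm hij]
    rw [key, key, key, map_add, f.map_update_add]
    have hsp : ∑ i ∈ Finset.univ.erase j, f (Function.update (Function.update v i (g (v i))) j (x + y))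
        = ∑ i ∈ Finset.univ.erase j, (f (Function.update (Function.update v i (g (v i))) j x)
          + f (Function.update (Function.update v i (g (v i))) j y)) :=
      Finset.sum_congr rfl fun i _ => by rw [AlternatingMap.map_update_add]
    rw [hsp, Finset.sum_add_distrib]
    ring
  map_update_smul' := by
    intro _inst v j c x
    obtain rfl : _inst = instDecidableEqFin m := Subsingleton.elim _ _
    have key : ∀ z : E,
        ∑ i, f (Function.update (Function.update v j z) i (g ((Function.update v j z) i)))
        = f (Function.update v j (g z)) +
          ∑ i ∈ Finset.univ.erase j,
            f (Function.update (Function.update v i (g (v i))) j z) := by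
      intro z
      rw [← Finset.add_sum_erase _ _ (Finset.mem_univ j)]
      congr 1
      · rw [Function.update_idem, Function.update_self]
      · refine Finset.sum_congr rfl fun i hi => ?_
        have hij : i ≠ j := Finset.ne_of_mem_erase hi
        rw [Function.update_of_ne hij, Function.update_comm hij]
    rw [key, key, map_smul, f.map_update_smul]
    have hsp : ∑ i ∈ Finset.univ.erase j, f (Function.update (Function.update v i (g (v i))) j (c • x))
        = ∑ i ∈ Finset.univ.erase j, c • f (Function.update (Function.update v i (g (v i))) j x) :=
      Finset.sum_congr rfl fun i _ => by rw [AlternatingMap.map_update_smul]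
    rw [hsp, ← Finset.smul_sum, ← smul_add]
  map_eq_zero_of_eq' := by
    classical
    intro v i j hv hij
    rw [← Finset.add_sum_erase _ _ (Finset.mem_univ i),
        ← Finset.add_sum_erase _ _ (Finset.mem_erase.2 ⟨hij.symm, Finset.mem_univ j⟩)]
    have hz : ∀ m ∈ (Finset.univ.erase i).erase j,
        f (Function.update v m (g (v m))) = 0 := by
      intro m hm
      have hmj : m ≠ j := Finset.ne_of_mem_erase hm
      have hmi : m ≠ i := Finset.ne_of_mem_erase (Finset.mem_of_mem_erase hm)
      exact f.map_eq_zero_of_eq _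
        (by rw [Function.update_of_ne hmi.symm, Function.update_of_ne hmj.symm]; exact hv) hij
    rw [Finset.sum_eq_zero hz, add_zero]
    have hswap : Function.update v j (g (v j)) =
        (Function.update v i (g (v i))) ∘ (Equiv.swap i j) := by
      funext q
      simp only [Function.comp_apply, Function.update_apply, Equiv.swap_apply_def]
      split_ifs <;> simp_all
    rw [hswap, AlternatingMap.map_swap _ _ hij]
    ring

private lemma derAlt_apply {m : ℕ} (f : E [⋀^Fin m]→ₗ[ℝ] ℝ) (g : E →ₗ[ℝ] E)
    (v : Fin m → E) : derAlt f g v = ∑ i, f (Function.update v i (g (v i))) := rfl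

private lemma altSum_apply {m : ℕ} {ι : Type*} (s : Finset ι)
    (F : ι → E [⋀^Fin m]→ₗ[ℝ] ℝ) (r : Fin m → E) :
    (∑ i ∈ s, F i) r = ∑ i ∈ s, F i r := by
  induction s using Finset.cons_induction with
  | empty => simp
  | cons a s ha ih => rw [Finset.sum_cons, Finset.sum_cons, AlternatingMap.add_apply, ih]

private lemma update_eq_cons {m : ℕ} (f : E [⋀^Fin (m+1)]→ₗ[ℝ] ℝ) (w : Fin (m+1) → E)
    (j : Fin (m+1)) (x : E) :
    f (Function.update w j x) =
      (-1:ℝ)^(j:ℕ) * f (Fin.cons x (fun s => w (j.succAbove s))) := by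
  have hfun : (Fin.cons x (fun s => w (j.succAbove s)) : Fin (m+1) → E)
      = (Function.update w j x) ∘ ⇑(j.cycleRange.symm) := by
    funext q
    refine Fin.cases ?_ (fun s => ?_) q
    · rw [Function.comp_apply, Fin.cycleRange_symm_zero, Function.update_self]
      simp
    · rw [Function.comp_apply, Fin.cycleRange_symm_succ,
        Function.update_of_ne (Fin.succAbove_ne j s)]
      simp
  have hperm : f (Fin.cons x (fun s => w (j.succAbove s)))
      = (Equiv.Perm.sign (j.cycleRange)⁻¹ : ℤ) • f (Function.update w j x) := by
    rw [hfun]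
    exact f.map_perm _ _
  have hsign : Equiv.Perm.sign (j.cycleRange)⁻¹ = (-1:ℤˣ)^(j:ℕ) := by
    rw [map_inv, Fin.sign_cycleRange]
    simp
  rw [hperm, hsign]
  have : (((-1:ℤˣ)^(j:ℕ) : ℤˣ) : ℤ) = (-1:ℤ)^(j:ℕ) := by
    push_cast; ring
  rw [this]
  rw [zsmul_eq_mul]
  push_cast
  rw [← mul_assoc, ← mul_pow]
  norm_num

private lemma cons_cons_swap {m : ℕ} (f : E [⋀^Fin (m+2)]→ₗ[ℝ] ℝ) (a b : E)
    (r : Fin m → E) :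
    f (Fin.cons a (Fin.cons b r)) = - f (Fin.cons b (Fin.cons a r)) := by
  have h01 : (0 : Fin (m+2)) ≠ 1 := by simp [Fin.ext_iff]
  have hfun : (Fin.cons a (Fin.cons b r) : Fin (m+2) → E)
      = (Fin.cons b (Fin.cons a r)) ∘ ⇑(Equiv.swap (0 : Fin (m+2)) 1) := by
    funext q
    refine Fin.cases ?_ (fun s => Fin.cases ?_ (fun s' => ?_) s) q
    · simp [Equiv.swap_apply_left]
    · have : ((0:Fin (m+1)).succ : Fin (m+2)) = 1 := rfl
      simp [this, Equiv.swap_apply_right]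
    · have h0 : (s'.succ.succ : Fin (m+2)) ≠ 0 := Fin.succ_ne_zero _
      have h1 : (s'.succ.succ : Fin (m+2)) ≠ 1 := by
        simp [Fin.ext_iff]
      simp [Equiv.swap_apply_of_ne_of_ne h0 h1]
  rw [hfun, AlternatingMap.map_swap _ _ h01]

end Aux




open scoped RealInnerProductSpace

/-- On a Lie group with left-invariant metric, a left-invariant `k`-form `α`
(here of degree `k + 2`) is Killing, i.e. `∇_y α = (1/(k+1)) y ⌟ dα` for all `y`, if and only if
`y ⌟ ∇_y α = 0` for all `y`; and this is in turn equivalent to the algebraic identity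
`∇_y y ⌟ α + Σ_i ∇_y u_i ∧ (y ⌟ u_i ⌟ α) = 0` for all `y ∈ n`, where `{u_i}` is an
orthonormal basis of `n`.  All forms are handled through their values on tuples of vectors;
`Dα y` is the covariant derivative `∇_y α` and `dα` is the Lie algebra exterior differential. -/
theorem killing_stmt3 {n : Type*} [NormedAddCommGroup n] [InnerProductSpace ℝ n]
    [FiniteDimensional ℝ n]
    -- the Lie bracket
    (l : n →ₗ[ℝ] n →ₗ[ℝ] n) (hanti : ∀ x : n, l x x = 0)
    (hjac : ∀ x y w : n, l (l x y) w + l (l y w) x + l (l w x) y = 0)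
    -- the Levi-Civita connection, via the Koszul formula
    (nabla : n →ₗ[ℝ] n →ₗ[ℝ] n)
    (hnab : ∀ x y w : n, 2 * ⟪nabla x y, w⟫ = ⟪l x y, w⟫ + ⟪l w x, y⟫ + ⟪l w y, x⟫)
    (k p : ℕ) (u : OrthonormalBasis (Fin p) ℝ n)
    -- a left-invariant form of degree k+2
    (α : AlternatingMap ℝ n ℝ (Fin (k + 2)))
    -- the covariant derivative ∇_y α, valuewise
    (Dα : n → (Fin (k + 2) → n) → ℝ)
    (hDα : ∀ (y : n) (v : Fin (k + 2) → n),
      Dα y v = -∑ i : Fin (k + 2), α (Function.update v i (nabla y (v i))))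
    -- the exterior differential dα (Lie algebra differential), valuewise
    (dα : (Fin (k + 3) → n) → ℝ)
    (hdα : ∀ v : Fin (k + 3) → n, dα v =
      ∑ i : Fin (k + 3), ∑ t : Fin (k + 3),
        if h : (i : ℕ) < (t : ℕ) then
          (-1 : ℝ) ^ ((i : ℕ) + (t : ℕ)) *
            α (Fin.cons (l (v i) (v t))
              (fun s : Fin (k + 1) =>
                v (i.succAbove ((⟨(t : ℕ) - 1, by have := t.isLt; omega⟩ :
                    Fin (k + 2)).succAbove s))))
        else 0) :
    -- Killing ↔ (y ⌟ ∇_y α = 0)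
    ((∀ (y : n) (v : Fin (k + 2) → n),
        Dα y v = (1 / (k + 3 : ℝ)) * dα (Fin.cons y v)) ↔
      (∀ (y : n) (v : Fin (k + 1) → n), Dα y (Fin.cons y v) = 0)) ∧
    -- (y ⌟ ∇_y α = 0) ↔ algebraic identity
    ((∀ (y : n) (v : Fin (k + 1) → n), Dα y (Fin.cons y v) = 0) ↔
      (∀ (y : n) (v : Fin (k + 1) → n),
        α (Fin.cons (nabla y y) v) +
          ∑ i : Fin p, ∑ t : Fin (k + 1),
            (-1 : ℝ) ^ (t : ℕ) * ⟪nabla y (u i), v t⟫ *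
              α (Fin.cons (u i) (Fin.cons y (fun s : Fin k => v (t.succAbove s)))) = 0)) := by
  classical
  -- bracket antisymmetry in two arguments
  have lanti : ∀ x y : n, l y x = - l x y := by
    intro x y
    have h := hanti (x + y)
    simp only [map_add, LinearMap.add_apply, hanti x, hanti y, zero_add, add_zero] at h
    exact eq_neg_of_add_eq_zero_left h
  -- skew-symmetry of nabla y
  have hskew : ∀ y a b : n, ⟪(nabla y) a, b⟫ = - ⟪(nabla y) b, a⟫ := by
    intro y a b
    have h1 := hnab y a b
    have h2 := hnab y b a
    have e1 : ⟪l a y, b⟫ = - ⟪l y a, b⟫ := by rw [lanti, inner_neg_left]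
    have e2 : ⟪l y b, a⟫ = - ⟪l b y, a⟫ := by rw [lanti, inner_neg_left]
    have e3 : ⟪l a b, y⟫ = - ⟪l b a, y⟫ := by rw [lanti, inner_neg_left]
    linarith
  -- torsion-freeness
  have htor : ∀ x y : n, l x y = nabla x y - nabla y x := by
    intro x y
    apply ext_inner_right ℝ
    intro w
    have h1 := hnab x y w
    have h2 := hnab y x w
    have e1 : ⟪l y x, w⟫ = - ⟪l x y, w⟫ := by rw [lanti, inner_neg_left]
    rw [inner_sub_left]
    linarith
  -- Dα via the derivation action
  have hD : ∀ (y : n) (v : Fin (k+2) → n), Dα y v = - (derAlt α (nabla y)) v := by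
    intro y v
    rw [hDα, derAlt_apply]
  -- the master formula: dα as alternating sum of covariant derivatives
  have Ldα : ∀ w : Fin (k+3) → n, dα w =
      ∑ i : Fin (k+3), (-1:ℝ)^(i:ℕ) * Dα (w i) (fun s => w (i.succAbove s)) := by
    intro w
    have hsplit : ∀ (a b : n) (r : Fin (k+1) → n),
        α (Fin.cons (a - b) r) = α (Fin.cons a r) - α (Fin.cons b r) := by
      intro a b r
      have h1 : α (Fin.cons (a-b) r) = (α.curryLeft (a-b)) r := rfl
      rw [h1, map_sub, AlternatingMap.sub_apply]
      rfl
    -- Step 1: each term of the RHS expanded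
    have hA : ∀ i : Fin (k+3), (-1:ℝ)^(i:ℕ) * Dα (w i) (fun s => w (i.succAbove s))
        = ∑ j : Fin (k+2), (-1:ℝ)^((i:ℕ)+(j:ℕ)+1) *
            α (Fin.cons ((nabla (w i)) (w (i.succAbove j)))
              (fun s => w (i.succAbove (j.succAbove s)))) := by
      intro i
      rw [hDα]
      beta_reduce
      have hj : ∀ j : Fin (k+2),
          α (Function.update (fun s => w (i.succAbove s)) j ((nabla (w i)) (w (i.succAbove j))))
          = (-1:ℝ)^(j:ℕ) * α (Fin.cons ((nabla (w i)) (w (i.succAbove j)))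
              (fun s => w (i.succAbove (j.succAbove s)))) := fun j =>
        update_eq_cons α (fun s => w (i.succAbove s)) j ((nabla (w i)) (w (i.succAbove j)))
      rw [Finset.sum_congr rfl (fun j (_ : j ∈ Finset.univ) => hj j)]
      rw [mul_neg, Finset.mul_sum, ← Finset.sum_neg_distrib]
      apply Finset.sum_congr rfl
      intro j _
      ring
    -- helper for the subsingleton mk
    have hmkgen : ∀ (t : Fin (k+3)) (j : Fin (k+2)) (pf : (t:ℕ) - 1 < k + 2),
        (t:ℕ) = (j:ℕ)+1 → (⟨(t:ℕ)-1, pf⟩ : Fin (k+2)) = j := by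
      intro t j pf h
      apply Fin.ext
      simp [h]
    -- Step 2: dα as a triangle double sum
    have hdA : dα w = ∑ i : Fin (k+3), ∑ j : Fin (k+2),
        (if (i:ℕ) ≤ (j:ℕ) then
          ((-1:ℝ)^((i:ℕ)+(j:ℕ)+1) * α (Fin.cons ((nabla (w i)) (w (Fin.succ j)))
              (fun s => w (i.succAbove (j.succAbove s))))
           + (-1:ℝ)^((i:ℕ)+(j:ℕ)) * α (Fin.cons ((nabla (w (Fin.succ j))) (w i))
              (fun s => w (i.succAbove (j.succAbove s))))) else 0) := by
      rw [hdα]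
      apply Finset.sum_congr rfl
      intro i _
      rw [Fin.sum_univ_succAbove _ i]
      rw [dif_neg (lt_irrefl (i:ℕ)), zero_add]
      apply Finset.sum_congr rfl
      intro j _
      by_cases hle : (i:ℕ) ≤ (j:ℕ)
      · have hval : ((i.succAbove j : Fin (k+3)) : ℕ) = (j:ℕ)+1 := by
          rw [val_succAbove, if_neg (by omega : ¬ (j:ℕ) < (i:ℕ))]
        rw [dif_pos (show (i:ℕ) < ((i.succAbove j : Fin (k+3)) : ℕ) by rw [hval]; omega)]
        rw [hmkgen (i.succAbove j) j _ hval]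
        rw [hval]
        have hsa : i.succAbove j = Fin.succ j := by
          apply Fin.ext; rw [hval, Fin.val_succ]
        rw [hsa, if_pos hle]
        rw [htor (w i) (w (Fin.succ j)), hsplit]
        ring
      · rw [dif_neg (by
          rw [val_succAbove, if_pos (by omega : (j:ℕ) < (i:ℕ))]; omega), if_neg hle]
    -- Step 3: assemble, via a bijection between the two triangles
    have hbij : ∑ x ∈ (Finset.univ ×ˢ Finset.univ :
          Finset (Fin (k+3) × Fin (k+2))).filter (fun x => (x.1:ℕ) ≤ (x.2:ℕ)),
        (-1:ℝ)^((x.1:ℕ)+(x.2:ℕ)) * α (Fin.cons ((nabla (w (Fin.succ x.2))) (w x.1))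
          (fun s => w (x.1.succAbove (x.2.succAbove s))))
        = ∑ x ∈ (Finset.univ ×ˢ Finset.univ :
          Finset (Fin (k+3) × Fin (k+2))).filter (fun x => ¬ (x.1:ℕ) ≤ (x.2:ℕ)),
        (-1:ℝ)^((x.1:ℕ)+(x.2:ℕ)+1) * α (Fin.cons ((nabla (w x.1)) (w (x.1.succAbove x.2)))
          (fun s => w (x.1.succAbove (x.2.succAbove s)))) := by
      refine Finset.sum_bij'
        (fun x hx => ((Fin.succ x.2 : Fin (k+3)),
          (⟨(x.1:ℕ), by
            have h := (Finset.mem_filter.mp hx).2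
            have h2 := x.2.isLt
            omega⟩ : Fin (k+2))))
        (fun x hx => ((⟨(x.2:ℕ), by have := x.2.isLt; omega⟩ : Fin (k+3)),
          (⟨(x.1:ℕ)-1, by have := x.1.isLt; omega⟩ : Fin (k+2))))
        ?_ ?_ ?_ ?_ ?_
      · intro x hx
        have h := (Finset.mem_filter.mp hx).2
        simp only [Finset.mem_filter, Finset.mem_product, Finset.mem_univ, true_and,
          and_true, Fin.val_succ]
        omega
      · intro x hx
        have h := (Finset.mem_filter.mp hx).2
        simp only [Finset.mem_filter, Finset.mem_product, Finset.mem_univ, true_and, and_true]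
        omega
      · intro x hx
        have h := (Finset.mem_filter.mp hx).2
        ext <;> simp [Fin.val_succ] <;> omega
      · intro x hx
        have h := (Finset.mem_filter.mp hx).2
        ext <;> simp [Fin.val_succ] <;> omega
      · intro x hx
        have h := (Finset.mem_filter.mp hx).2
        have ha : (Fin.succ x.2 : Fin (k+3)).succAbove
            (⟨(x.1:ℕ), by have := x.2.isLt; omega⟩ : Fin (k+2)) = x.1 := by
          apply Fin.ext; rw [val_succAbove]; simp [Fin.val_succ]; omega
        have hb : ∀ s : Fin (k+1), (Fin.succ x.2 : Fin (k+3)).succAbove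
            ((⟨(x.1:ℕ), by have := x.2.isLt; omega⟩ : Fin (k+2)).succAbove s)
            = x.1.succAbove (x.2.succAbove s) := by
          intro s
          apply Fin.ext
          simp only [Fin.val_succ, val_succAbove]
          split_ifs <;> omega
        rw [ha]
        have hc : (fun s => w ((Fin.succ x.2 : Fin (k+3)).succAbove
            ((⟨(x.1:ℕ), by have := x.2.isLt; omega⟩ : Fin (k+2)).succAbove s)))
            = (fun s => w (x.1.succAbove (x.2.succAbove s))) := by
          funext s; rw [hb s]
        rw [hc]
        have hexp : ((Fin.succ x.2 : Fin (k+3)):ℕ) +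
            ((⟨(x.1:ℕ), by have := x.2.isLt; omega⟩ : Fin (k+2)):ℕ) + 1
            = (x.1:ℕ) + (x.2:ℕ) + 2 := by
          simp [Fin.val_succ]; omega
        rw [hexp, pow_add]
        ring
    -- now put it together
    rw [hdA, ← Finset.sum_product']
    have e1 : ∀ x : Fin (k+3) × Fin (k+2),
        (if (x.1:ℕ) ≤ (x.2:ℕ) then
          ((-1:ℝ)^((x.1:ℕ)+(x.2:ℕ)+1) * α (Fin.cons ((nabla (w x.1)) (w (Fin.succ x.2)))
              (fun s => w (x.1.succAbove (x.2.succAbove s))))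
           + (-1:ℝ)^((x.1:ℕ)+(x.2:ℕ)) * α (Fin.cons ((nabla (w (Fin.succ x.2))) (w x.1))
              (fun s => w (x.1.succAbove (x.2.succAbove s))))) else 0)
        = (if (x.1:ℕ) ≤ (x.2:ℕ) then
            (-1:ℝ)^((x.1:ℕ)+(x.2:ℕ)+1) * α (Fin.cons ((nabla (w x.1)) (w (Fin.succ x.2)))
              (fun s => w (x.1.succAbove (x.2.succAbove s))) ) else 0)
          + (if (x.1:ℕ) ≤ (x.2:ℕ) then
            (-1:ℝ)^((x.1:ℕ)+(x.2:ℕ)) * α (Fin.cons ((nabla (w (Fin.succ x.2))) (w x.1))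
              (fun s => w (x.1.succAbove (x.2.succAbove s))) ) else 0) := by
      intro x; split_ifs <;> simp
    rw [Finset.sum_congr rfl (fun x (_ : x ∈ Finset.univ ×ˢ Finset.univ) => e1 x),
      Finset.sum_add_distrib]
    rw [← Finset.sum_filter, ← Finset.sum_filter, hbij, Finset.sum_filter, Finset.sum_filter]
    have e2 : ∀ x : Fin (k+3) × Fin (k+2),
        (if (x.1:ℕ) ≤ (x.2:ℕ) then
            (-1:ℝ)^((x.1:ℕ)+(x.2:ℕ)+1) * α (Fin.cons ((nabla (w x.1)) (w (Fin.succ x.2)))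
              (fun s => w (x.1.succAbove (x.2.succAbove s))) ) else 0)
          + (if ¬ (x.1:ℕ) ≤ (x.2:ℕ) then
            (-1:ℝ)^((x.1:ℕ)+(x.2:ℕ)+1) * α (Fin.cons ((nabla (w x.1)) (w (x.1.succAbove x.2)))
              (fun s => w (x.1.succAbove (x.2.succAbove s))) ) else 0)
        = (-1:ℝ)^((x.1:ℕ)+(x.2:ℕ)+1) * α (Fin.cons ((nabla (w x.1)) (w (x.1.succAbove x.2)))
              (fun s => w (x.1.succAbove (x.2.succAbove s)))) := by
      intro x
      by_cases hle : (x.1:ℕ) ≤ (x.2:ℕ)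
      · have hsa : x.1.succAbove x.2 = Fin.succ x.2 := by
          apply Fin.ext
          rw [val_succAbove, if_neg (by omega : ¬ (x.2:ℕ) < (x.1:ℕ)), Fin.val_succ]
        rw [if_pos hle, if_neg (by omega), hsa, add_zero]
      · rw [if_neg hle, if_pos hle, zero_add]
    rw [← Finset.sum_add_distrib,
      Finset.sum_congr rfl (fun x (_ : x ∈ Finset.univ ×ˢ Finset.univ) => e2 x)]
    rw [Finset.sum_product]
    refine Eq.symm (Finset.sum_congr rfl fun i _ => ?_)
    rw [hA i]
  -- the pointwise formula for part 2
  have part2key : ∀ (y : n) (v : Fin (k+1) → n),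
      Dα y (Fin.cons y v) = -(α (Fin.cons ((nabla y) y) v) +
        ∑ i : Fin p, ∑ t : Fin (k+1),
          (-1:ℝ)^(t:ℕ) * ⟪(nabla y) (u i), v t⟫ *
            α (Fin.cons (u i) (Fin.cons y (fun s : Fin k => v (t.succAbove s))))) := by
    intro y v
    rw [hDα, Fin.sum_univ_succ]
    have ht0 : α (Function.update (Fin.cons y v) (0 : Fin (k+2))
          ((nabla y) ((Fin.cons y v : Fin (k+2) → n) 0)))
        = α (Fin.cons ((nabla y) y) v) := by
      simp only [Fin.cons_zero, Fin.update_cons_zero]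
    have htt : ∀ t : Fin (k+1),
        α (Function.update (Fin.cons y v) (Fin.succ t)
            ((nabla y) ((Fin.cons y v : Fin (k+2) → n) (Fin.succ t))))
        = (-1:ℝ)^(t:ℕ) * ∑ i : Fin p, ⟪(nabla y) (u i), v t⟫ *
            α (Fin.cons (u i) (Fin.cons y (fun s : Fin k => v (t.succAbove s)))) := by
      intro t
      rw [Fin.cons_succ, ← Fin.cons_update]
      have hcL : α (Fin.cons y (Function.update v t ((nabla y) (v t))))
          = (α.curryLeft y) (Function.update v t ((nabla y) (v t))) := rfl
      rw [hcL, update_eq_cons (α.curryLeft y) v t ((nabla y) (v t))]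
      have hrepr : (nabla y) (v t) = ∑ i : Fin p, (-⟪(nabla y) (u i), v t⟫) • u i := by
        conv_lhs => rw [← u.sum_repr ((nabla y) (v t))]
        refine Finset.sum_congr rfl fun i _ => ?_
        rw [u.repr_apply_apply, real_inner_comm, hskew y (v t) (u i)]
      have hcL2 : (α.curryLeft y) (Fin.cons ((nabla y) (v t)) (fun s => v (t.succAbove s)))
          = ((α.curryLeft y).curryLeft ((nabla y) (v t))) (fun s => v (t.succAbove s)) := rfl
      rw [hcL2, hrepr]
      rw [map_sum ((α.curryLeft y).curryLeft)
          (fun i => (-⟪(nabla y) (u i), v t⟫) • u i) Finset.univ]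
      rw [altSum_apply]
      congr 1
      apply Finset.sum_congr rfl
      intro i _
      rw [map_smul, AlternatingMap.smul_apply]
      have hGr : ((α.curryLeft y).curryLeft (u i)) (fun s => v (t.succAbove s))
          = α (Fin.cons y (Fin.cons (u i) (fun s => v (t.succAbove s)))) := rfl
      rw [hGr, cons_cons_swap α y (u i)]
      rw [smul_eq_mul]
      ring
    have hsucc : ∑ t : Fin (k+1),
        α (Function.update (Fin.cons y v) (Fin.succ t)
            ((nabla y) ((Fin.cons y v : Fin (k+2) → n) (Fin.succ t))))
        = ∑ t : Fin (k+1), (-1:ℝ)^(t:ℕ) * ∑ i : Fin p, ⟪(nabla y) (u i), v t⟫ *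
            α (Fin.cons (u i) (Fin.cons y (fun s : Fin k => v (t.succAbove s)))) :=
      Finset.sum_congr rfl fun t _ => htt t
    rw [ht0, hsucc]
    have hfinal : ∑ t : Fin (k+1), (-1:ℝ)^(t:ℕ) * ∑ i : Fin p, ⟪(nabla y) (u i), v t⟫ *
          α (Fin.cons (u i) (Fin.cons y (fun s : Fin k => v (t.succAbove s))))
        = ∑ i : Fin p, ∑ t : Fin (k+1), (-1:ℝ)^(t:ℕ) * ⟪(nabla y) (u i), v t⟫ *
          α (Fin.cons (u i) (Fin.cons y (fun s : Fin k => v (t.succAbove s)))) := by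
      have h1 : ∀ t : Fin (k+1), (-1:ℝ)^(t:ℕ) * ∑ i : Fin p, ⟪(nabla y) (u i), v t⟫ *
            α (Fin.cons (u i) (Fin.cons y (fun s : Fin k => v (t.succAbove s))))
          = ∑ i : Fin p, (-1:ℝ)^(t:ℕ) * ⟪(nabla y) (u i), v t⟫ *
            α (Fin.cons (u i) (Fin.cons y (fun s : Fin k => v (t.succAbove s)))) := by
        intro t
        rw [Finset.mul_sum]
        apply Finset.sum_congr rfl
        intro i _
        ring
      rw [Finset.sum_congr rfl (fun t _ => h1 t)]
      exact Finset.sum_comm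
    rw [hfinal]
  constructor
  · constructor
    · -- Killing → contraction vanishes
      intro K y v
      have h := K y (Fin.cons y v)
      rw [Ldα] at h
      have hz : ∑ i : Fin (k+3), (-1:ℝ)^(i:ℕ) *
          Dα ((Fin.cons y (Fin.cons y v) : Fin (k+3) → n) i)
            (fun s => (Fin.cons y (Fin.cons y v) : Fin (k+3) → n) (i.succAbove s)) = 0 := by
        have hjz : ∀ j : Fin (k+1),
            Dα ((Fin.cons y (Fin.cons y v) : Fin (k+3) → n) j.succ.succ)
              (fun s => (Fin.cons y (Fin.cons y v) : Fin (k+3) → n) ((j.succ.succ).succAbove s))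
              = 0 := by
          intro j
          rw [hD]
          have e0 : (j.succ.succ).succAbove (0 : Fin (k+2)) = (0 : Fin (k+3)) := by
            apply Fin.ext; rw [val_succAbove]; simp
          have e1 : (j.succ.succ).succAbove (1 : Fin (k+2)) = (1 : Fin (k+3)) := by
            apply Fin.ext; rw [val_succAbove]
            simp [Fin.val_succ]
          have h01 : (fun s => (Fin.cons y (Fin.cons y v) : Fin (k+3) → n)
                ((j.succ.succ).succAbove s)) (0 : Fin (k+2))
              = (fun s => (Fin.cons y (Fin.cons y v) : Fin (k+3) → n)
                ((j.succ.succ).succAbove s)) (1 : Fin (k+2)) := by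
            simp only [e0, e1]
            have h1 : (1 : Fin (k+3)) = Fin.succ 0 := rfl
            rw [h1, Fin.cons_succ]
            simp
          rw [(derAlt α (nabla ((Fin.cons y (Fin.cons y v) : Fin (k+3) → n) j.succ.succ))).map_eq_zero_of_eq
            _ h01 (by simp [Fin.ext_iff] : (0 : Fin (k+2)) ≠ 1)]
          ring
        have hT0 : (fun s => (Fin.cons y (Fin.cons y v) : Fin (k+3) → n)
            ((0 : Fin (k+3)).succAbove s)) = Fin.cons y v := by
          funext s; rw [Fin.zero_succAbove, Fin.cons_succ]
        have hT1 : (fun s => (Fin.cons y (Fin.cons y v) : Fin (k+3) → n)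
            (((0 : Fin (k+2)).succ).succAbove s)) = Fin.cons y v := by
          funext s
          refine Fin.cases ?_ (fun s' => ?_) s
          · have e : ((0 : Fin (k+2)).succ).succAbove (0 : Fin (k+2)) = 0 := by
              apply Fin.ext; rw [val_succAbove]; simp
            rw [e]; simp
          · have e : ((0 : Fin (k+2)).succ).succAbove (Fin.succ s') = (Fin.succ s').succ := by
              apply Fin.ext; rw [val_succAbove]; simp
            rw [e]; simp [Fin.cons_succ]
        rw [Fin.sum_univ_succ, Fin.sum_univ_succ]
        simp only [Fin.cons_zero, Fin.cons_succ, Fin.val_zero, Fin.val_succ, pow_zero, one_mul]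
        rw [hT0, hT1]
        have htail : ∑ j : Fin (k+1), (-1:ℝ)^((j:ℕ)+1+1) *
            Dα (v j) (fun s => (Fin.cons y (Fin.cons y v) : Fin (k+3) → n)
              ((j.succ.succ).succAbove s)) = 0 :=
          Finset.sum_eq_zero fun j _ => by
            have := hjz j
            simp only [Fin.cons_succ] at this
            rw [this, mul_zero]
        rw [htail]
        ring
      rw [hz, mul_zero] at h
      exact h
    · -- contraction vanishes → Killing
      intro H
      -- additivity of Dα in the direction
      have hDadd : ∀ (y z : n) (v : Fin (k+2) → n), Dα (y+z) v = Dα y v + Dα z v := by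
        intro y z v
        rw [hD, hD, hD]
        have : derAlt α (nabla (y+z)) v = derAlt α (nabla y) v + derAlt α (nabla z) v := by
          rw [derAlt_apply, derAlt_apply, derAlt_apply, ← Finset.sum_add_distrib]
          refine Finset.sum_congr rfl fun i _ => ?_
          rw [map_add, LinearMap.add_apply, AlternatingMap.map_update_add]
        rw [this]; ring
      -- antisymmetry from the contraction condition
      have hanti' : ∀ (y z : n) (v : Fin (k+1) → n),
          Dα y (Fin.cons z v) = - Dα z (Fin.cons y v) := by
        intro y z v
        have hsplit : ∀ (x a b : n), Dα x (Fin.cons (a+b) v)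
            = Dα x (Fin.cons a v) + Dα x (Fin.cons b v) := by
          intro x a b
          rw [hD, hD, hD]
          have e1 : (Fin.cons (a+b) v : Fin (k+2) → n)
              = Function.update (Fin.cons a v) 0 (a+b) := by
            rw [Fin.update_cons_zero]
          rw [e1, AlternatingMap.map_update_add, Fin.update_cons_zero, Fin.update_cons_zero]
          ring
        have h0 := H (y+z) v
        rw [hDadd, hsplit, hsplit] at h0
        have hy := H y v
        have hz := H z v
        linarith
      -- moving an entry to the front
      have hmove : ∀ (y : n) (v : Fin (k+2) → n) (j : Fin (k+2)),
          Dα y (Fin.cons (v j) (fun s => v (j.succAbove s))) = (-1:ℝ)^(j:ℕ) * Dα y v := by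
        intro y v j
        rw [hD, hD]
        have h := update_eq_cons (derAlt α (nabla y)) v j (v j)
        rw [Function.update_eq_self] at h
        have hsq : (-1:ℝ)^(j:ℕ) * (-1:ℝ)^(j:ℕ) = 1 := by
          rw [← mul_pow]; norm_num
        have h2 : (-1:ℝ)^(j:ℕ) * ((derAlt α (nabla y)) v)
            = (derAlt α (nabla y)) (Fin.cons (v j) (fun s => v (j.succAbove s))) := by
          rw [h, ← mul_assoc, hsq, one_mul]
        rw [← h2]
        ring
      intro y v
      rw [Ldα (Fin.cons y v)]
      have hsum : ∑ i : Fin (k+3), (-1:ℝ)^(i:ℕ) *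
          Dα ((Fin.cons y v : Fin (k+3) → n) i)
            (fun s => (Fin.cons y v : Fin (k+3) → n) (i.succAbove s))
          = ((k:ℝ)+3) * Dα y v := by
        have hTj : ∀ j : Fin (k+2), (fun s => (Fin.cons y v : Fin (k+3) → n)
            ((Fin.succ j).succAbove s)) = Fin.cons y (fun s => v (j.succAbove s)) := by
          intro j; funext s
          refine Fin.cases ?_ (fun s' => ?_) s
          · have e : (Fin.succ j).succAbove (0 : Fin (k+2)) = 0 := by
              apply Fin.ext; rw [val_succAbove]; simp
            rw [e]; simp
          · have e : (Fin.succ j).succAbove (Fin.succ s') = Fin.succ (j.succAbove s') := by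
              apply Fin.ext
              simp only [Fin.val_succ, val_succAbove]
              split_ifs <;> omega
            rw [e]; simp [Fin.cons_succ]
        rw [Fin.sum_univ_succ]
        simp only [Fin.cons_zero, Fin.cons_succ, Fin.val_zero, Fin.val_succ, pow_zero, one_mul]
        have hT0 : (fun s => (Fin.cons y v : Fin (k+3) → n)
            ((0 : Fin (k+3)).succAbove s)) = v := by
          funext s; rw [Fin.zero_succAbove, Fin.cons_succ]
        rw [hT0]
        have hterm : ∀ j : Fin (k+2), (-1:ℝ)^((j:ℕ)+1) *
            Dα (v j) (fun s => (Fin.cons y v : Fin (k+3) → n) ((Fin.succ j).succAbove s))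
            = Dα y v := by
          intro j
          rw [hTj j, hanti' (v j) y, hmove y v j]
          have hsq : (-1:ℝ)^(j:ℕ) * (-1:ℝ)^(j:ℕ) = 1 := by rw [← mul_pow]; norm_num
          rw [pow_succ]
          linear_combination (Dα y v) * hsq
        rw [Finset.sum_congr rfl (fun j _ => hterm j)]
        rw [Finset.sum_const, Finset.card_univ, Fintype.card_fin, nsmul_eq_mul]
        push_cast
        ring
      rw [hsum]
      have : ((k:ℝ)+3) ≠ 0 := by positivity
      field_simp
  · -- part 2
    constructor
    · intro H y v
      have h := part2key y v
      rw [H y v] at h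
      linarith
    · intro H y v
      rw [part2key y v, H y v, neg_zero]
end

section
/- On a 2-step nilpotent metric Lie algebra n = v ⊕ z, a 2-form α with components α₂ ∈ Λ²v*, α₁ ∈ v*⊗z*, α₀ ∈ Λ²z* (viewed as skew-symmetric endomorphisms) is a Killing 2-form if and only if α₁ = 0 and j(α₀z) = 3α₂ j(z) = −3 j(z) α₂ for all z ∈ z. -/
open scoped RealInnerProductSpace

/-- On a 2-step nilpotent metric Lie algebra `n = v ⊕ z`, a 2-form
`α = α₂ + α₁ + α₀` (components viewed as skew-symmetric endomorphisms) is a Killing 2-form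
(i.e. `y ⌟ ∇_y α = 0` for all `y`) if and only if `α₁ = 0` and
`j(α₀ z) = 3 α₂ j(z) = −3 j(z) α₂` for all `z ∈ z`. -/
theorem killing_stmt4 {n : Type*} [NormedAddCommGroup n] [InnerProductSpace ℝ n]
    [FiniteDimensional ℝ n]
    (l : n →ₗ[ℝ] n →ₗ[ℝ] n) (hanti : ∀ x : n, l x x = 0)
    (Z : Submodule ℝ n) (hZ : ∀ x : n, x ∈ Z ↔ ∀ y : n, l x y = 0)
    (h2 : ∀ x y : n, l x y ∈ Z) (hna : ∃ x : n, ∃ y : n, l x y ≠ 0)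
    (j : n → n →ₗ[ℝ] n) (hj : ∀ z x y : n, ⟪j z x, y⟫ = ⟪z, l x y⟫)
    -- the Levi-Civita connection, via the Koszul formula
    (nabla : n →ₗ[ℝ] n →ₗ[ℝ] n)
    (hnab : ∀ x y w : n, 2 * ⟪nabla x y, w⟫ = ⟪l x y, w⟫ + ⟪l w x, y⟫ + ⟪l w y, x⟫)
    -- the 2-form α, viewed as a skew-symmetric endomorphism A, with components A2, A1, A0
    (A A2 A1 A0 : n →ₗ[ℝ] n)
    (hA2skew : ∀ a b : n, ⟪A2 a, b⟫ = -⟪a, A2 b⟫)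
    (hA2V : ∀ x ∈ Zᗮ, A2 x ∈ Zᗮ) (hA2Z : ∀ z ∈ Z, A2 z = 0)
    (hA1skew : ∀ a b : n, ⟪A1 a, b⟫ = -⟪a, A1 b⟫)
    (hA1V : ∀ x ∈ Zᗮ, A1 x ∈ Z) (hA1Z : ∀ z ∈ Z, A1 z ∈ Zᗮ)
    (hA0skew : ∀ a b : n, ⟪A0 a, b⟫ = -⟪a, A0 b⟫)
    (hA0V : ∀ x ∈ Zᗮ, A0 x = 0) (hA0Z : ∀ z ∈ Z, A0 z ∈ Z)
    (hsum : A = A2 + A1 + A0) :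
    -- Killing condition: y ⌟ ∇_y α = 0 for the 2-form α(a,b) = ⟪A a, b⟫
    (∀ y b : n, ⟪A (nabla y y), b⟫ + ⟪A y, nabla y b⟫ = 0) ↔
      (A1 = 0 ∧ ∀ z ∈ Z,
        j (A0 z) = (3 : ℝ) • (A2 ∘ₗ j z) ∧
        (3 : ℝ) • (A2 ∘ₗ j z) = -((3 : ℝ) • ((j z) ∘ₗ A2))) := by
  -- basic consequences
  have hlanti : ∀ a b : n, l a b = - l b a := by
    intro a b
    have h := hanti (a + b)
    simp only [map_add, LinearMap.add_apply, hanti, zero_add, add_zero] at h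
    exact eq_neg_of_add_eq_zero_right h
  have hlZ : ∀ (w x : n), x ∈ Z → l w x = 0 := by
    intro w x hx
    rw [hlanti, (hZ x).1 hx w, neg_zero]
  have hZV : ∀ (u : n), u ∈ Z → ∀ (x : n), x ∈ Zᗮ → ⟪u, x⟫ = 0 :=
    fun u hu x hx => (Submodule.mem_orthogonal Z x).mp hx u hu
  have hjl : ∀ (w a b : n), ⟪l a b, w⟫ = ⟪j w a, b⟫ :=
    fun w a b => (real_inner_comm _ _).trans (hj w a b).symm
  have hjOrth : ∀ (c x : n), j c x ∈ Zᗮ := by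
    intro c x
    rw [Submodule.mem_orthogonal]
    intro u hu
    rw [real_inner_comm, hj, hlZ x u hu, inner_zero_right]
  have hjZ0 : ∀ (c w : n), w ∈ Z → j c w = 0 := by
    intro c w hw
    have h : ∀ y, ⟪j c w, y⟫ = 0 := fun y => by
      rw [hj, (hZ w).1 hw y, inner_zero_right]
    exact inner_self_eq_zero.mp (h (j c w))
  have hj0 : ∀ x : n, j 0 x = 0 := by
    intro x
    have h : ∀ y, ⟪j 0 x, y⟫ = 0 := fun y => by rw [hj, inner_zero_left]
    exact inner_self_eq_zero.mp (h (j 0 x))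
  have hjskew : ∀ (c a b : n), ⟪j c a, b⟫ = -⟪j c b, a⟫ := by
    intro c a b
    rw [hj, hj, hlanti b a, inner_neg_right, neg_neg]
  have hAskew : ∀ a b : n, ⟪A a, b⟫ = -⟪a, A b⟫ := by
    intro a b
    rw [hsum]
    simp only [LinearMap.add_apply, inner_add_left, inner_add_right,
      hA2skew, hA1skew, hA0skew]
    ring
  have hdec : ∀ a : n, ∃ v z : n, v ∈ Zᗮ ∧ z ∈ Z ∧ a = v + z := by
    intro a
    have ha : a ∈ Z ⊔ Zᗮ := by
      rw [Submodule.sup_orthogonal_of_hasOrthogonalProjection]; exact Submodule.mem_top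
    obtain ⟨u, hu, w, hw, huw⟩ := Submodule.mem_sup.mp ha
    exact ⟨w, u, hw, hu, by rw [← huw, add_comm]⟩
  have hsplitA : ∀ v ∈ Zᗮ, ∀ z ∈ Z, A (v + z) = (A2 v + A1 z) + (A1 v + A0 z) := by
    intro v hv z hz
    rw [hsum]
    simp only [LinearMap.add_apply, map_add, hA2Z z hz, hA0V v hv, add_zero, zero_add]
    abel
  have hlAfun : ∀ v ∈ Zᗮ, ∀ z ∈ Z, ∀ c : n, l (A (v + z)) c = l (A2 v) c + l (A1 z) c := by
    intro v hv z hz c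
    rw [hsplitA v hv z hz]
    have h0 : l (A1 v + A0 z) c = 0 :=
      (hZ _).1 (add_mem (hA1V v hv) (hA0Z z hz)) c
    rw [map_add, LinearMap.add_apply, h0, add_zero, map_add, LinearMap.add_apply]
  -- the master computation
  have hMaster : ∀ v ∈ Zᗮ, ∀ z ∈ Z, ∀ v' ∈ Zᗮ, ∀ z' ∈ Z,
      -2*⟪l (A (v'+z')) (v+z), v+z⟫ + ⟪l (v+z) (v'+z'), A (v+z)⟫
        + ⟪l (A (v+z)) (v+z), v'+z'⟫ + ⟪l (A (v+z)) (v'+z'), v+z⟫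
      = -2*⟪j z (A2 v'), v⟫ - 2*⟪j z (A1 z'), v⟫ + ⟪j (A1 v) v, v'⟫ + ⟪j (A0 z) v, v'⟫
        + ⟪j z' (A2 v), v⟫ + ⟪j z' (A1 z), v⟫ + ⟪j z (A2 v), v'⟫ + ⟪j z (A1 z), v'⟫ := by
    intro v hv z hz v' hv' z' hz'
    have hz0 : ∀ w : n, l w z = 0 := fun w => hlZ w z hz
    have hz'0 : ∀ w : n, l w z' = 0 := fun w => hlZ w z' hz'
    have hzl : ∀ w : n, l z w = 0 := fun w => (hZ z).1 hz w
    have hT1 : ⟪l (A (v'+z')) (v+z), v+z⟫ = ⟪j z (A2 v'), v⟫ + ⟪j z (A1 z'), v⟫ := by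
      rw [hlAfun v' hv' z' hz']
      simp only [map_add, hz0, add_zero, inner_add_left, inner_add_right]
      rw [hZV _ (h2 _ _) v hv, hZV _ (h2 _ _) v hv, hjl, hjl]
      ring
    have hT2 : ⟪l (v+z) (v'+z'), A (v+z)⟫ = ⟪j (A1 v) v, v'⟫ + ⟪j (A0 z) v, v'⟫ := by
      have hlvz : l (v+z) (v'+z') = l v v' := by
        simp only [map_add, LinearMap.add_apply, hzl, hz'0, add_zero, zero_add,
          LinearMap.zero_apply]
      rw [hlvz, hsplitA v hv z hz]
      simp only [inner_add_right]
      rw [hZV _ (h2 _ _) _ (hA2V v hv), hZV _ (h2 _ _) _ (hA1Z z hz), hjl, hjl]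
      ring
    have hT3 : ⟪l (A (v+z)) (v+z), v'+z'⟫ = ⟪j z' (A2 v), v⟫ + ⟪j z' (A1 z), v⟫ := by
      rw [hlAfun v hv z hz]
      simp only [map_add, hz0, add_zero, inner_add_left, inner_add_right]
      rw [hZV _ (h2 _ _) v' hv', hZV _ (h2 _ _) v' hv', hjl, hjl]
      ring
    have hT4 : ⟪l (A (v+z)) (v'+z'), v+z⟫ = ⟪j z (A2 v), v'⟫ + ⟪j z (A1 z), v'⟫ := by
      rw [hlAfun v hv z hz]
      simp only [map_add, hz'0, add_zero, inner_add_left, inner_add_right]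
      rw [hZV _ (h2 _ _) v hv, hZV _ (h2 _ _) v hv, hjl, hjl]
      ring
    rw [hT1, hT2, hT3, hT4]
    ring
  -- the Killing condition is equivalent to a bracket identity
  have keyiff : (∀ y b : n, ⟪A (nabla y y), b⟫ + ⟪A y, nabla y b⟫ = 0) ↔
      (∀ y b : n, -2*⟪l (A b) y, y⟫ + ⟪l y b, A y⟫ + ⟪l (A y) y, b⟫ + ⟪l (A y) b, y⟫ = 0) := by
    have step : ∀ y b : n, 2*(⟪A (nabla y y), b⟫ + ⟪A y, nabla y b⟫) =
        -2*⟪l (A b) y, y⟫ + ⟪l y b, A y⟫ + ⟪l (A y) y, b⟫ + ⟪l (A y) b, y⟫ := by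
      intro y b
      have h1 := hnab y y (A b)
      have h2' := hnab y b (A y)
      rw [hanti y, inner_zero_left] at h1
      have ha : ⟪A (nabla y y), b⟫ = -⟪nabla y y, A b⟫ := hAskew _ _
      have hb : ⟪A y, nabla y b⟫ = ⟪nabla y b, A y⟫ := real_inner_comm _ _
      rw [ha, hb]
      linarith
    constructor
    · intro h y b
      have := step y b
      have hk := h y b
      linarith
    · intro h y b
      have := step y b
      have hk := h y b
      linarith
  constructor
  · -- forward direction
    intro hK
    have hG := keyiff.mp hK
    have hM0 : ∀ v ∈ Zᗮ, ∀ z ∈ Z, ∀ v' ∈ Zᗮ, ∀ z' ∈ Z,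
        -2*⟪j z (A2 v'), v⟫ - 2*⟪j z (A1 z'), v⟫ + ⟪j (A1 v) v, v'⟫ + ⟪j (A0 z) v, v'⟫
          + ⟪j z' (A2 v), v⟫ + ⟪j z' (A1 z), v⟫ + ⟪j z (A2 v), v'⟫ + ⟪j z (A1 z), v'⟫ = 0 := by
      intro v hv z hz v' hv' z' hz'
      rw [← hMaster v hv z hz v' hv' z' hz']
      exact hG (v+z) (v'+z')
    have P1 : ∀ v ∈ Zᗮ, ∀ z' ∈ Z, ⟪j z' (A2 v), v⟫ = 0 := by
      intro v hv z' hz'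
      have h := hM0 v hv 0 (zero_mem _) 0 (zero_mem _) z' hz'
      simp only [map_zero, hj0, inner_zero_left, inner_zero_right, mul_zero,
        neg_zero, add_zero, zero_add, sub_zero, zero_sub, neg_neg] at h
      linarith
    have P2 : ∀ z ∈ Z, ∀ v' ∈ Zᗮ, ⟪j z (A1 z), v'⟫ = 0 := by
      intro z hz v' hv'
      have h := hM0 0 (zero_mem _) z hz v' hv' 0 (zero_mem _)
      simp only [map_zero, hj0, inner_zero_left, inner_zero_right, mul_zero,
        neg_zero, add_zero, zero_add, sub_zero, zero_sub, neg_neg] at h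
      linarith
    have P5 : ∀ v ∈ Zᗮ, ∀ v' ∈ Zᗮ, ⟪j (A1 v) v, v'⟫ = 0 := by
      intro v hv v' hv'
      have h := hM0 v hv 0 (zero_mem _) v' hv' 0 (zero_mem _)
      simp only [map_zero, hj0, inner_zero_left, inner_zero_right, mul_zero,
        neg_zero, add_zero, zero_add, sub_zero, zero_sub, neg_neg] at h
      linarith
    have P3 : ∀ v ∈ Zᗮ, ∀ z ∈ Z, ∀ v' ∈ Zᗮ,
        -2*⟪j z (A2 v'), v⟫ + ⟪j (A0 z) v, v'⟫ + ⟪j z (A2 v), v'⟫ = 0 := by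
      intro v hv z hz v' hv'
      have h := hM0 v hv z hz v' hv' 0 (zero_mem _)
      simp only [map_zero, hj0, inner_zero_left, inner_zero_right, mul_zero,
        neg_zero, add_zero, zero_add, sub_zero, zero_sub, neg_neg] at h
      have h5 := P5 v hv v' hv'
      have h2'' := P2 z hz v' hv'
      have h1 := P1 v hv z hz
      linarith
    have P4 : ∀ v ∈ Zᗮ, ∀ z ∈ Z, ∀ z' ∈ Z,
        -2*⟪j z (A1 z'), v⟫ + ⟪j z' (A1 z), v⟫ = 0 := by
      intro v hv z hz z' hz'
      have h := hM0 v hv z hz 0 (zero_mem _) z' hz'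
      simp only [map_zero, hj0, inner_zero_left, inner_zero_right, mul_zero,
        neg_zero, add_zero, zero_add, sub_zero, zero_sub, neg_neg] at h
      have h1 := P1 v hv z' hz'
      linarith
    -- A1 vanishes
    have hjA1 : ∀ z ∈ Z, ∀ z' ∈ Z, j z (A1 z') = 0 := by
      intro z hz z' hz'
      have hval : ∀ x ∈ Zᗮ, ⟪j z (A1 z'), x⟫ = 0 := by
        intro x hx
        have ha := P4 x hx z hz z' hz'
        have hb := P4 x hx z' hz' z hz
        linarith
      exact inner_self_eq_zero.mp (hval _ (hjOrth z (A1 z')))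
    have hA1Zzero : ∀ z' ∈ Z, A1 z' = 0 := by
      intro z' hz'
      have hcentral : ∀ w, l (A1 z') w = 0 := by
        intro w
        have hm : l (A1 z') w ∈ Z := h2 _ _
        have hh := hj (l (A1 z') w) (A1 z') w
        rw [hjA1 _ hm z' hz', inner_zero_left] at hh
        exact inner_self_eq_zero.mp hh.symm
      have hZmem : A1 z' ∈ Z := (hZ _).2 hcentral
      have hOrth : ⟪A1 z', A1 z'⟫ = 0 :=
        (Submodule.mem_orthogonal Z (A1 z')).mp (hA1Z z' hz') _ hZmem
      exact inner_self_eq_zero.mp hOrth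
    have hA1v : ∀ v ∈ Zᗮ, A1 v = 0 := by
      intro v hv
      have h := hA1skew v (A1 v)
      rw [hA1Zzero _ (hA1V v hv), inner_zero_right, neg_zero] at h
      exact inner_self_eq_zero.mp h
    have hA1eq0 : A1 = 0 := by
      apply LinearMap.ext; intro a
      obtain ⟨v, z, hv, hz, rfl⟩ := hdec a
      simp [map_add, hA1Zzero z hz, hA1v v hv]
    -- polarized P1
    have P1' : ∀ v ∈ Zᗮ, ∀ v' ∈ Zᗮ, ∀ z ∈ Z,
        ⟪j z (A2 v), v'⟫ + ⟪j z (A2 v'), v⟫ = 0 := by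
      intro v hv v' hv' z hz
      have h := P1 (v + v') (add_mem hv hv') z hz
      have h1 := P1 v hv z hz
      have h2' := P1 v' hv' z hz
      simp only [map_add, inner_add_left, inner_add_right] at h
      linarith
    -- the anticommutation relation
    have E2 : ∀ z ∈ Z, ∀ a : n, A2 (j z a) = -(j z (A2 a)) := by
      intro z hz a
      obtain ⟨v, w, hv, hw, rfl⟩ := hdec a
      have hred : A2 (j z v) = -(j z (A2 v)) := by
        have key : ∀ x ∈ Zᗮ, ⟪A2 (j z v) + j z (A2 v), x⟫ = 0 := by
          intro x hx
          rw [inner_add_left]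
          have e1 : ⟪A2 (j z v), x⟫ = ⟪j z (A2 x), v⟫ := by
            rw [hA2skew, hjskew, neg_neg]
          rw [e1]
          have hp := P1' x hx v hv z hz
          linarith
        have hmem : A2 (j z v) + j z (A2 v) ∈ Zᗮ :=
          add_mem (hA2V _ (hjOrth z v)) (hjOrth z _)
        have h0 : A2 (j z v) + j z (A2 v) = 0 := inner_self_eq_zero.mp (key _ hmem)
        exact eq_neg_of_add_eq_zero_left h0
      simp [map_add, hjZ0 z w hw, hA2Z w hw, hred]
    have E1 : ∀ z ∈ Z, ∀ a : n, j (A0 z) a = (3:ℝ) • A2 (j z a) := by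
      intro z hz a
      obtain ⟨v, w, hv, hw, rfl⟩ := hdec a
      have hred : j (A0 z) v = (3:ℝ) • A2 (j z v) := by
        have key : ∀ x ∈ Zᗮ, ⟪j (A0 z) v - (3:ℝ) • A2 (j z v), x⟫ = 0 := by
          intro x hx
          rw [inner_sub_left, real_inner_smul_left]
          have hp3 := P3 v hv z hz x hx
          have hp1 := P1' v hv x hx z hz
          have e2' : ⟪A2 (j z v), x⟫ = ⟪j z (A2 x), v⟫ := by
            rw [hA2skew, hjskew, neg_neg]
          rw [e2']
          linarith
        have hmem : j (A0 z) v - (3:ℝ) • A2 (j z v) ∈ Zᗮ :=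
          sub_mem (hjOrth _ _) (Submodule.smul_mem _ _ (hA2V _ (hjOrth z v)))
        have h0 := inner_self_eq_zero.mp (key _ hmem)
        exact sub_eq_zero.mp h0
      simp [map_add, hjZ0 _ w hw, hA2Z w hw, hjZ0 z w hw, hred]
    refine ⟨hA1eq0, fun z hz => ⟨?_, ?_⟩⟩
    · apply LinearMap.ext; intro a
      rw [LinearMap.smul_apply, LinearMap.comp_apply]
      exact E1 z hz a
    · apply LinearMap.ext; intro a
      rw [LinearMap.smul_apply, LinearMap.comp_apply, LinearMap.neg_apply,
        LinearMap.smul_apply, LinearMap.comp_apply, E2 z hz a, smul_neg]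
  · -- reverse direction
    rintro ⟨hA1eq, hrel⟩
    have hE1 : ∀ z ∈ Z, ∀ a : n, j (A0 z) a = (3:ℝ) • A2 (j z a) := by
      intro z hz a
      rw [(hrel z hz).1]
      simp [LinearMap.smul_apply]
    have hE2 : ∀ z ∈ Z, ∀ a : n, A2 (j z a) = -(j z (A2 a)) := by
      intro z hz a
      have h := LinearMap.congr_fun (hrel z hz).2 a
      simp only [LinearMap.smul_apply, LinearMap.comp_apply, LinearMap.neg_apply] at h
      have h3 : (3:ℝ) • A2 ((j z) a) = (3:ℝ) • (-(j z (A2 a))) := by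
        rw [h, smul_neg]
      exact smul_right_injective n (by norm_num : (3:ℝ) ≠ 0) h3
    have hGall : ∀ y b : n,
        -2*⟪l (A b) y, y⟫ + ⟪l y b, A y⟫ + ⟪l (A y) y, b⟫ + ⟪l (A y) b, y⟫ = 0 := by
      intro y b
      obtain ⟨v, z, hv, hz, rfl⟩ := hdec y
      obtain ⟨v', z', hv', hz', rfl⟩ := hdec b
      rw [hMaster v hv z hz v' hv' z' hz', hA1eq]
      simp only [LinearMap.zero_apply, map_zero, hj0, inner_zero_left, inner_zero_right,
        mul_zero, add_zero, neg_zero, sub_zero]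
      have e2 : ⟪j (A0 z) v, v'⟫ = -(3:ℝ)*⟪j z (A2 v), v'⟫ := by
        rw [hE1 z hz v, real_inner_smul_left, hE2 z hz v, inner_neg_left]
        ring
      have e3 : ⟪j z (A2 v'), v⟫ = -⟪j z (A2 v), v'⟫ := by
        have h1 := hjskew z (A2 v') v
        have h2' := hA2skew (j z v) v'
        rw [hE2 z hz v, inner_neg_left] at h2'
        linarith
      have e4 : ⟪j z' (A2 v), v⟫ = 0 := by
        have h1 := hjskew z' (A2 v) v
        have h2' := hA2skew (j z' v) v
        rw [hE2 z' hz' v, inner_neg_left] at h2'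
        linarith
      linarith
    exact keyiff.mpr hGall
end

section
/- Let n be an irreducible 2-step nilpotent metric Lie algebra (i.e. not decomposable into an orthogonal direct sum of nonzero ideals) with j injective. If S is a symmetric endomorphism of n satisfying S[x,y] = [Sx,y] for all x,y ∈ n, then S is a real multiple of the identity. -/
open scoped RealInnerProductSpace

/-- (Lemma on irreducible algebras.) Let `n` be an irreducible 2-step
nilpotent metric Lie algebra with injective `j`.  If `S` is a symmetric endomorphism of `n`
satisfying `S[x,y] = [Sx,y]` for all `x, y ∈ n`, then `S` is a real multiple of the identity. -/
theorem killing_stmt6 {n : Type*} [NormedAddCommGroup n] [InnerProductSpace ℝ n]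
    [FiniteDimensional ℝ n]
    (l : n →ₗ[ℝ] n →ₗ[ℝ] n) (hanti : ∀ x : n, l x x = 0)
    (Z : Submodule ℝ n) (hZ : ∀ x : n, x ∈ Z ↔ ∀ y : n, l x y = 0)
    (h2 : ∀ x y : n, l x y ∈ Z) (hna : ∃ x : n, ∃ y : n, l x y ≠ 0)
    (j : n → n →ₗ[ℝ] n) (hj : ∀ z x y : n, ⟪j z x, y⟫ = ⟪z, l x y⟫)
    -- j is injective
    (hjinj : ∀ z ∈ Z, j z = 0 → z = 0)
    -- irreducibility: no orthogonal direct sum decomposition into nonzero ideals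
    (hirr : ∀ N' N'' : Submodule ℝ n,
      (∀ x ∈ N', ∀ y : n, l x y ∈ N') → (∀ x ∈ N'', ∀ y : n, l x y ∈ N'') →
      (∀ x ∈ N', ∀ y ∈ N'', ⟪x, y⟫ = 0) → N' ⊔ N'' = ⊤ → N' = ⊥ ∨ N'' = ⊥)
    (S : n →ₗ[ℝ] n) (hSsym : ∀ a b : n, ⟪S a, b⟫ = ⟪a, S b⟫)
    (hSbr : ∀ x y : n, S (l x y) = l (S x) y) :
    ∃ c : ℝ, ∀ x : n, S x = c • x := by
  -- antisymmetry of l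
  have hskew : ∀ x y : n, l x y = - l y x := by
    intro x y
    have h : l y x + l x y = 0 := by
      have h0 := hanti (x + y)
      simpa [map_add, hanti] using h0
    exact eq_neg_of_add_eq_zero_right h
  -- nontriviality
  have hnt : Nontrivial n := by
    obtain ⟨x, y, hxy⟩ := hna
    refine ⟨x, 0, fun h => hxy ?_⟩
    rw [h]; simp
  -- S is symmetric in Mathlib's sense
  have hsym : S.IsSymmetric := fun a b => hSsym a b
  -- eigenvalue exists
  obtain ⟨c, hc⟩ : ∃ c : ℝ, Module.End.HasEigenvalue S c :=
    ⟨_, hsym.hasEigenvalue_iSup_of_finiteDimensional⟩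
  set E : Submodule ℝ n := Module.End.eigenspace S c with hE
  have hmem : ∀ x : n, x ∈ E ↔ S x = c • x := fun x => Module.End.mem_eigenspace_iff
  -- E is an ideal
  have hEideal : ∀ x ∈ E, ∀ y : n, l x y ∈ E := by
    intro x hx y
    rw [hmem] at hx ⊢
    rw [hSbr, hx]
    simp
  -- image of j v is in E for v ∈ E
  have hjv : ∀ v ∈ E, ∀ x : n, j v x ∈ E := by
    intro v hv x
    rw [hmem] at hv ⊢
    have key : ∀ w : n, ⟪S (j v x) - c • j v x, w⟫ = 0 := by
      intro w
      have h1 : ⟪S (j v x), w⟫ = ⟪j v x, S w⟫ := hSsym _ _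
      have h2 : l x (S w) = S (l x w) := by
        rw [hskew x (S w), ← hSbr w x, hskew x w, map_neg]
      have h3 : ⟪v, S (l x w)⟫ = ⟪S v, l x w⟫ := (hSsym v (l x w)).symm
      rw [inner_sub_left, h1, hj, h2, h3, hv, inner_smul_left, inner_smul_left, hj]
      simp
    have := key (S (j v x) - c • j v x)
    rw [inner_self_eq_zero] at this
    exact sub_eq_zero.mp this
  -- Eᗮ is an ideal
  have hEperp : ∀ x ∈ Eᗮ, ∀ y : n, l x y ∈ Eᗮ := by
    intro x hx y
    rw [Submodule.mem_orthogonal]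
    intro u hu
    have h1 : ⟪u, l x y⟫ = -⟪u, l y x⟫ := by
      rw [hskew x y, inner_neg_right]
    have h2 : ⟪j u y, x⟫ = 0 := by
      exact (Submodule.mem_orthogonal E x).mp hx (j u y) (hjv u hu y)
    rw [h1, ← hj, h2, neg_zero]
  -- orthogonality
  have horth : ∀ x ∈ E, ∀ y ∈ Eᗮ, ⟪x, y⟫ = 0 := by
    intro x hx y hy
    exact (Submodule.mem_orthogonal E y).mp hy x hx
  have hsup : E ⊔ Eᗮ = ⊤ := Submodule.sup_orthogonal_of_hasOrthogonalProjection
  rcases hirr E Eᗮ hEideal hEperp horth hsup with h | h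
  · exact absurd h hc
  · have hT : E = ⊤ := Submodule.orthogonal_eq_bot_iff.mp h
    refine ⟨c, fun x => ?_⟩
    have : x ∈ E := hT ▸ Submodule.mem_top
    exact (hmem x).mp this
end

section
/- On an irreducible 2-step nilpotent metric Lie algebra, there is a one-to-one correspondence between non-zero Killing 2-forms up to multiplication by a positive real number and orthogonal bi-invariant complex structures: given a Killing 2-form α = α₂ + α₀, the endomorphism J with J|_v = α₂/√(−λ) and J|_z = α₀/(3√(−λ)) is an orthogonal bi-invariant complex structure, where λ < 0 is the eigenvalue with α₂² = λ Id_v and (1/9)α₀² = λ Id_z; conversely, if J is an orthogonal bi-invariant complex structure, then α := J|_v + 3J|_z (as a 2-form) is Killing. -/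
open scoped RealInnerProductSpace

set_option maxHeartbeats 2000000 in
/-- On an irreducible 2-step nilpotent metric Lie algebra there is a
one-to-one correspondence between non-zero Killing 2-forms (up to positive multiple) and
orthogonal bi-invariant complex structures.  Given a Killing 2-form `α = α₂ + α₀` (i.e.
`j(α₀z) = 3α₂ j(z) = −3 j(z) α₂`), there is `λ < 0` with `α₂² = λ Id_v`, `(1/9)α₀² = λ Id_z`,
and `J := α₂/√(−λ) + α₀/(3√(−λ))` is an orthogonal bi-invariant complex structure.
Conversely, for any orthogonal bi-invariant complex structure `J`, the 2-form
`α := J|_v + 3 J|_z` is Killing. -/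
theorem killing_stmt7 {n : Type*} [NormedAddCommGroup n] [InnerProductSpace ℝ n]
    [FiniteDimensional ℝ n]
    (l : n →ₗ[ℝ] n →ₗ[ℝ] n) (hanti : ∀ x : n, l x x = 0)
    (Z : Submodule ℝ n) (hZ : ∀ x : n, x ∈ Z ↔ ∀ y : n, l x y = 0)
    (h2 : ∀ x y : n, l x y ∈ Z) (hna : ∃ x : n, ∃ y : n, l x y ≠ 0)
    (j : n → n →ₗ[ℝ] n) (hj : ∀ z x y : n, ⟪j z x, y⟫ = ⟪z, l x y⟫)
    (hjinj : ∀ z ∈ Z, j z = 0 → z = 0)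
    (hirr : ∀ N' N'' : Submodule ℝ n,
      (∀ x ∈ N', ∀ y : n, l x y ∈ N') → (∀ x ∈ N'', ∀ y : n, l x y ∈ N'') →
      (∀ x ∈ N', ∀ y ∈ N'', ⟪x, y⟫ = 0) → N' ⊔ N'' = ⊤ → N' = ⊥ ∨ N'' = ⊥) :
    -- from a non-zero Killing 2-form to a bi-invariant orthogonal complex structure
    (∀ A2 A0 : n →ₗ[ℝ] n,
      (∀ a b : n, ⟪A2 a, b⟫ = -⟪a, A2 b⟫) → (∀ x ∈ Zᗮ, A2 x ∈ Zᗮ) → (∀ z ∈ Z, A2 z = 0) →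
      (∀ a b : n, ⟪A0 a, b⟫ = -⟪a, A0 b⟫) → (∀ x ∈ Zᗮ, A0 x = 0) → (∀ z ∈ Z, A0 z ∈ Z) →
      -- the Killing condition for α = α₂ + α₀
      (∀ z ∈ Z, j (A0 z) = (3 : ℝ) • (A2 ∘ₗ j z) ∧ A2 ∘ₗ j z = -((j z) ∘ₗ A2)) →
      ¬(A2 = 0 ∧ A0 = 0) →
      ∃ lam : ℝ, lam < 0 ∧
        (∀ x ∈ Zᗮ, A2 (A2 x) = lam • x) ∧
        (∀ z ∈ Z, A0 (A0 z) = (9 * lam) • z) ∧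
        ∃ J : n →ₗ[ℝ] n,
          J = (Real.sqrt (-lam))⁻¹ • A2 + ((3 : ℝ) * Real.sqrt (-lam))⁻¹ • A0 ∧
          J ∘ₗ J = -LinearMap.id ∧
          (∀ x y : n, J (l x y) = l (J x) y) ∧
          (∀ a b : n, ⟪J a, J b⟫ = ⟪a, b⟫)) ∧
    -- from a bi-invariant orthogonal complex structure to a Killing 2-form
    (∀ J : n →ₗ[ℝ] n, J ∘ₗ J = -LinearMap.id →
      (∀ x y : n, J (l x y) = l (J x) y) → (∀ a b : n, ⟪J a, J b⟫ = ⟪a, b⟫) →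
      ∃ A2 A0 : n →ₗ[ℝ] n,
        (∀ z ∈ Z, A2 z = 0) ∧ (∀ x ∈ Zᗮ, A2 x = J x) ∧
        (∀ x ∈ Zᗮ, A0 x = 0) ∧ (∀ z ∈ Z, A0 z = (3 : ℝ) • J z) ∧
        (∀ z ∈ Z, j (A0 z) = (3 : ℝ) • (A2 ∘ₗ j z) ∧ A2 ∘ₗ j z = -((j z) ∘ₗ A2))) := by
  -- common facts
  have hlskew : ∀ x y : n, l x y = -l y x := by
    intro x y
    have h := hanti (x + y)
    simp only [map_add, LinearMap.add_apply, hanti, zero_add, add_zero] at h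
    exact eq_neg_of_add_eq_zero_left (by rw [add_comm] at h; exact h)
  have hinner0 : ∀ u : n, (∀ y : n, ⟪u, y⟫ = 0) → u = 0 := by
    intro u h
    have := h u
    rwa [real_inner_self_eq_norm_sq, pow_eq_zero_iff (two_ne_zero), norm_eq_zero] at this
  have hlz : ∀ x : n, ∀ z ∈ Z, l x z = 0 := by
    intro x z hzZ
    rw [hlskew, (hZ z).1 hzZ x, neg_zero]
  have hjadd : ∀ z w : n, j (z + w) = j z + j w := by
    intro z w; ext x
    refine ext_inner_right ℝ fun y => ?_
    simp only [LinearMap.add_apply, hj, inner_add_left]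
  have hjsmul : ∀ (c : ℝ) (z : n), j (c • z) = c • j z := by
    intro c z; ext x
    refine ext_inner_right ℝ fun y => ?_
    simp only [LinearMap.smul_apply, hj, real_inner_smul_left]
  have hj0 : j 0 = 0 := by
    ext x
    refine ext_inner_right ℝ fun y => ?_
    simp only [hj, inner_zero_left, LinearMap.zero_apply]
  have hjv : ∀ z x : n, j z x ∈ Zᗮ := by
    intro z x
    rw [Submodule.mem_orthogonal]
    intro u hu
    rw [real_inner_comm, hj, hlz x u hu, inner_zero_right]
  have hjZ : ∀ z : n, ∀ w ∈ Z, j z w = 0 := by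
    intro z w hw
    refine hinner0 _ fun y => ?_
    rw [hj, (hZ w).1 hw y, inner_zero_right]
  have hjskew : ∀ z x y : n, ⟪j z x, y⟫ = -⟪j z y, x⟫ := by
    intro z x y
    rw [hj, hj, hlskew, inner_neg_right]
  have heqZ : ∀ a ∈ Z, ∀ b ∈ Z, (∀ z ∈ Z, ⟪z, a⟫ = ⟪z, b⟫) → a = b := by
    intro a ha b hb h
    have hab : a - b ∈ Z := sub_mem ha hb
    have : ⟪a - b, a - b⟫ = 0 := by
      rw [inner_sub_right, h _ hab, sub_self]
    rwa [inner_self_eq_zero, sub_eq_zero] at this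
  have hdec : ∀ x : n, ∃ a ∈ Zᗮ, ∃ b ∈ Z, x = a + b := by
    intro x
    obtain ⟨y, hy, w, hw, hx⟩ := Z.exists_add_mem_mem_orthogonal x
    exact ⟨w, hw, y, hy, by rw [hx, add_comm]⟩
  -- part 2
  have part2 : (∀ J : n →ₗ[ℝ] n, J ∘ₗ J = -LinearMap.id →
      (∀ x y : n, J (l x y) = l (J x) y) → (∀ a b : n, ⟪J a, J b⟫ = ⟪a, b⟫) →
      ∃ A2 A0 : n →ₗ[ℝ] n,
        (∀ z ∈ Z, A2 z = 0) ∧ (∀ x ∈ Zᗮ, A2 x = J x) ∧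
        (∀ x ∈ Zᗮ, A0 x = 0) ∧ (∀ z ∈ Z, A0 z = (3 : ℝ) • J z) ∧
        (∀ z ∈ Z, j (A0 z) = (3 : ℝ) • (A2 ∘ₗ j z) ∧ A2 ∘ₗ j z = -((j z) ∘ₗ A2))) := by
    intro J hJ2 hbi hJo
    have hJJ : ∀ x : n, J (J x) = -x := fun x => by
      have := LinearMap.congr_fun hJ2 x
      simpa using this
    have hJskew : ∀ a b : n, ⟪J a, b⟫ = -⟪a, J b⟫ := by
      intro a b
      have hb : b = -J (J b) := by rw [hJJ, neg_neg]
      calc ⟪J a, b⟫ = ⟪J a, -J (J b)⟫ := by rw [← hb]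
        _ = -⟪J a, J (J b)⟫ := by rw [inner_neg_right]
        _ = -⟪a, J b⟫ := by rw [hJo]
    have hJZ : ∀ z ∈ Z, J z ∈ Z := by
      intro z hz
      rw [hZ]
      intro y
      rw [← hbi, (hZ z).1 hz y, map_zero]
    have hlJ : ∀ x y : n, l x (J y) = J (l x y) := by
      intro x y
      calc l x (J y) = -l (J y) x := hlskew _ _
        _ = -J (l y x) := by rw [hbi]
        _ = J (-(l y x)) := (map_neg J _).symm
        _ = J (l x y) := by rw [← hlskew]
    have hJj2 : ∀ z x : n, J (j z x) = j (J z) x := by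
      intro z x
      refine ext_inner_right ℝ fun y => ?_
      calc ⟪J (j z x), y⟫ = -⟪j z x, J y⟫ := hJskew _ _
        _ = -⟪z, l x (J y)⟫ := by rw [hj]
        _ = -⟪z, J (l x y)⟫ := by rw [hlJ]
        _ = ⟪J z, l x y⟫ := (hJskew z (l x y)).symm
        _ = ⟪j (J z) x, y⟫ := (hj _ _ _).symm
    have hJj1 : ∀ z x : n, j (J z) x = -(j z (J x)) := by
      intro z x
      refine ext_inner_right ℝ fun y => ?_
      calc ⟪j (J z) x, y⟫ = ⟪J z, l x y⟫ := hj _ _ _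
        _ = -⟪z, J (l x y)⟫ := hJskew _ _
        _ = -⟪z, l (J x) y⟫ := by rw [hbi]
        _ = -⟪j z (J x), y⟫ := by rw [hj]
        _ = ⟪-(j z (J x)), y⟫ := by rw [inner_neg_left]
    -- projections
    set Pv : n →ₗ[ℝ] n := Zᗮ.subtype ∘ₗ (Submodule.orthogonalProjectionOnto Zᗮ).toLinearMap with hPvdef
    set Pz : n →ₗ[ℝ] n := Z.subtype ∘ₗ (Submodule.orthogonalProjectionOnto Z).toLinearMap with hPzdef
    have hPv1 : ∀ x ∈ Zᗮ, Pv x = x := fun x hx => Submodule.starProjection_eq_self_iff.mpr hx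
    have hPv0 : ∀ z ∈ Z, Pv z = 0 := by
      intro z hz
      have : Submodule.orthogonalProjectionOnto Zᗮ z = 0 :=
        Submodule.orthogonalProjectionOnto_apply_of_mem_orthogonal
          (Z.le_orthogonal_orthogonal hz)
      simp [hPvdef, this]
    have hPz1 : ∀ z ∈ Z, Pz z = z := fun z hz => Submodule.starProjection_eq_self_iff.mpr hz
    have hPz0 : ∀ x ∈ Zᗮ, Pz x = 0 := by
      intro x hx
      have : Submodule.orthogonalProjectionOnto Z x = 0 :=
        Submodule.orthogonalProjectionOnto_apply_of_mem_orthogonal hx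
      simp [hPzdef, this]
    have hPvmem : ∀ x : n, x - Pv x ∈ Z := by
      intro x
      have h1 := Submodule.sub_starProjection_mem_orthogonal (K := Zᗮ) x
      rwa [Submodule.orthogonal_orthogonal] at h1
    refine ⟨J ∘ₗ Pv, (3 : ℝ) • (J ∘ₗ Pz), ?_, ?_, ?_, ?_, ?_⟩
    · intro z hz; simp [hPv0 z hz]
    · intro x hx; simp [hPv1 x hx]
    · intro x hx; simp [hPz0 x hx]
    · intro z hz; simp [hPz1 z hz]
    · intro z hz
      have key : ∀ x : n, J (Pv (j z x)) = -(j z (J x)) := by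
        intro x
        rw [hPv1 _ (hjv z x), hJj2, hJj1]
      constructor
      · ext x
        simp only [LinearMap.smul_apply, LinearMap.coe_comp, Function.comp_apply]
        rw [hPz1 z hz, hjsmul, LinearMap.smul_apply, key x, hJj1 z x]
      · ext x
        simp only [LinearMap.coe_comp, Function.comp_apply, LinearMap.neg_apply]
        rw [key x]
        have : j z (J x) = j z (J (Pv x)) := by
          have hxd : J x = J (Pv x) + J (x - Pv x) := by rw [← map_add]; congr 1; abel
          rw [hxd, map_add, hjZ z _ (hJZ _ (hPvmem x)), add_zero]
        rw [this]
  refine ⟨?_, part2⟩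
  intro A2 A0 hA2sk hA2v hA2z hA0sk hA0v hA0z hKill hne
  have hK1 : ∀ z ∈ Z, ∀ x : n, j (A0 z) x = (3 : ℝ) • A2 (j z x) := by
    intro z hz x
    have := LinearMap.congr_fun (hKill z hz).1 x
    simpa using this
  have hK2 : ∀ z ∈ Z, ∀ x : n, A2 (j z x) = -(j z (A2 x)) := by
    intro z hz x
    have := LinearMap.congr_fun (hKill z hz).2 x
    simpa using this
  -- A2 ≠ 0
  have hA2ne : A2 ≠ 0 := by
    intro h
    apply hne
    refine ⟨h, ?_⟩
    have hz0 : ∀ z ∈ Z, A0 z = 0 := by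
      intro z hz
      apply hjinj _ (hA0z z hz)
      ext x
      refine ext_inner_right ℝ fun y => ?_
      rw [hK1 z hz x, h]
      simp
    ext x
    obtain ⟨a, ha, b, hb, rfl⟩ := hdec x
    simp [map_add, hA0v a ha, hz0 b hb]
  obtain ⟨x0, hx0⟩ : ∃ x0 : n, A2 x0 ≠ 0 := by
    by_contra h
    push_neg at h
    exact hA2ne (LinearMap.ext h)
  obtain ⟨xv, hxv, xz, hxz, rfl⟩ := hdec x0
  have hA2xv : A2 xv ≠ 0 := by
    intro h
    apply hx0
    rw [map_add, h, hA2z xz hxz, add_zero]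
  have hxvne : xv ≠ 0 := by rintro rfl; simp at hA2xv
  haveI : Nontrivial n := nontrivial_of_ne xv 0 hxvne
  -- the symmetric operator T = A2²
  set T : n →ₗ[ℝ] n := A2 ∘ₗ A2 with hTdef
  have hTapp : ∀ x : n, T x = A2 (A2 x) := fun x => rfl
  have hTsym : T.IsSymmetric := by
    intro x y
    show ⟪A2 (A2 x), y⟫ = ⟪x, A2 (A2 y)⟫
    rw [hA2sk, hA2sk, neg_neg]
  have hTneg : ∀ x : n, ⟪T x, x⟫ = -(‖A2 x‖ ^ 2) := by
    intro x
    rw [hTapp, hA2sk, real_inner_self_eq_norm_sq, neg_inj]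
  set lam : ℝ := ⨅ x : { x : n // x ≠ 0 }, RCLike.re ⟪T x, x⟫ / ‖(x : n)‖ ^ 2 with hlamdef
  have hbdd : BddBelow (Set.range fun x : { x : n // x ≠ 0 } =>
      RCLike.re ⟪T (x : n), (x : n)⟫ / ‖(x : n)‖ ^ 2) := by
    refine ⟨-‖LinearMap.toContinuousLinearMap T‖, ?_⟩
    rintro r ⟨x, rfl⟩
    have hx : (0 : ℝ) < ‖(x : n)‖ ^ 2 := pow_pos (norm_pos_iff.mpr x.2) 2
    rw [le_div_iff₀ hx]
    have h1 : |⟪T (x : n), (x : n)⟫| ≤ ‖T (x : n)‖ * ‖(x : n)‖ := abs_real_inner_le_norm _ _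
    have h2 : ‖T (x : n)‖ ≤ ‖LinearMap.toContinuousLinearMap T‖ * ‖(x : n)‖ := by
      have := (LinearMap.toContinuousLinearMap T).le_opNorm (x : n)
      simpa using this
    have h3 : -(‖LinearMap.toContinuousLinearMap T‖ * ‖(x : n)‖ * ‖(x : n)‖) ≤
        ⟪T (x : n), (x : n)⟫ := by
      have := neg_abs_le (⟪T (x : n), (x : n)⟫)
      nlinarith [norm_nonneg (x : n), norm_nonneg (T (x : n))]
    calc -‖LinearMap.toContinuousLinearMap T‖ * ‖(x : n)‖ ^ 2
        = -(‖LinearMap.toContinuousLinearMap T‖ * ‖(x : n)‖ * ‖(x : n)‖) := by ring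
      _ ≤ ⟪T (x : n), (x : n)⟫ := h3
      _ = RCLike.re ⟪T (x : n), (x : n)⟫ := rfl
  have hlamneg : lam < 0 := by
    have hle : lam ≤ RCLike.re ⟪T xv, xv⟫ / ‖xv‖ ^ 2 :=
      ciInf_le hbdd (⟨xv, hxvne⟩ : { x : n // x ≠ 0 })
    have hlt : RCLike.re ⟪T xv, xv⟫ / ‖xv‖ ^ 2 < 0 := by
      have h1 : ⟪T xv, xv⟫ = -(‖A2 xv‖ ^ 2) := hTneg xv
      have h2 : (0 : ℝ) < ‖A2 xv‖ ^ 2 := pow_pos (norm_pos_iff.mpr hA2xv) 2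
      have h3 : (0 : ℝ) < ‖xv‖ ^ 2 := pow_pos (norm_pos_iff.mpr hxvne) 2
      have : RCLike.re ⟪T xv, xv⟫ = -(‖A2 xv‖ ^ 2) := h1
      rw [this]
      exact div_neg_of_neg_of_pos (by linarith) h3
    linarith
  have hEig : Module.End.HasEigenvalue T lam := by
    have := hTsym.hasEigenvalue_iInf_of_finiteDimensional
    exact this
  obtain ⟨w0, hw0⟩ := hEig.exists_hasEigenvector
  have hw0eq : T w0 = lam • w0 := hw0.apply_eq_smul
  have hw0ne : w0 ≠ 0 := hw0.right
  -- the eigenvector lies in Zᗮ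
  obtain ⟨v0, hv0Z, b0, hb0, rfl⟩ := hdec w0
  have hTb0 : T b0 = 0 := by rw [hTapp, hA2z b0 hb0, map_zero]
  have hTv0mem : T v0 ∈ Zᗮ := hA2v _ (hA2v _ hv0Z)
  have hb00 : b0 = 0 := by
    have h1 : lam • b0 = T v0 - lam • v0 := by
      have := hw0eq
      rw [map_add, hTb0, add_zero, smul_add] at this
      rw [this]; abel
    have h2 : lam • b0 ∈ Zᗮ := by
      rw [h1]; exact sub_mem hTv0mem (Zᗮ.smul_mem lam hv0Z)
    have h3 : lam • b0 ∈ Z := Z.smul_mem lam hb0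
    have h4 : lam • b0 = 0 := by
      have := Z.orthogonal_disjoint
      exact Submodule.disjoint_def.mp this _ h3 h2
    rcases smul_eq_zero.mp h4 with h | h
    · exact absurd h (ne_of_lt hlamneg)
    · exact h
  have hv0eig : T v0 = lam • v0 := by rw [hb00, add_zero] at hw0eq; exact hw0eq
  have hv0ne : v0 ≠ 0 := by rw [hb00, add_zero] at hw0ne; exact hw0ne
  -- derived algebraic relations
  have hR1 : ∀ x y : n, l (A2 x) y = l x (A2 y) := by
    intro x y
    refine heqZ _ (h2 _ _) _ (h2 _ _) fun z hz => ?_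
    have hjzA2 : j z (A2 x) = -A2 (j z x) := by
      rw [hK2 z hz x, neg_neg]
    calc ⟪z, l (A2 x) y⟫ = ⟪j z (A2 x), y⟫ := (hj _ _ _).symm
      _ = ⟪-A2 (j z x), y⟫ := by rw [hjzA2]
      _ = -⟪A2 (j z x), y⟫ := by rw [inner_neg_left]
      _ = ⟪j z x, A2 y⟫ := by rw [hA2sk, neg_neg]
      _ = ⟪z, l x (A2 y)⟫ := hj _ _ _
  have hR2 : ∀ x y : n, A0 (l x y) = (3 : ℝ) • l x (A2 y) := by
    intro x y
    refine heqZ _ (hA0z _ (h2 _ _)) _ (Z.smul_mem _ (h2 _ _)) fun z hz => ?_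
    have h1 : ⟪z, A0 (l x y)⟫ = -⟪A0 z, l x y⟫ := by
      rw [real_inner_comm, hA0sk, real_inner_comm]
    calc ⟪z, A0 (l x y)⟫ = -⟪A0 z, l x y⟫ := h1
      _ = -⟪j (A0 z) x, y⟫ := by rw [hj]
      _ = -⟪(3 : ℝ) • A2 (j z x), y⟫ := by rw [hK1 z hz x]
      _ = -((3 : ℝ) * ⟪A2 (j z x), y⟫) := by rw [real_inner_smul_left]
      _ = (3 : ℝ) * ⟪j z x, A2 y⟫ := by rw [hA2sk]; ring
      _ = (3 : ℝ) * ⟪z, l x (A2 y)⟫ := by rw [hj]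
      _ = ⟪z, (3 : ℝ) • l x (A2 y)⟫ := (real_inner_smul_right _ _ _).symm
  have hR2' : ∀ x y : n, A0 (l x y) = (3 : ℝ) • l (A2 x) y := by
    intro x y
    rw [hR2, hR1]
  -- the eigenspace V inside Zᗮ
  set V : Submodule ℝ n := Zᗮ ⊓ LinearMap.ker (T - lam • LinearMap.id) with hVdef
  have hVmem : ∀ x : n, x ∈ V ↔ x ∈ Zᗮ ∧ T x = lam • x := by
    intro x
    simp [hVdef, LinearMap.mem_ker, sub_eq_zero, LinearMap.sub_apply]
  have hVZ : V ≤ Zᗮ := inf_le_left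
  have hv0V : v0 ∈ V := (hVmem v0).mpr ⟨hv0Z, hv0eig⟩
  have hjVmem : ∀ z ∈ Z, ∀ x ∈ V, j z x ∈ V := by
    intro z hz x hx
    obtain ⟨hx1, hx2⟩ := (hVmem x).mp hx
    refine (hVmem _).mpr ⟨hjv z x, ?_⟩
    have : T (j z x) = j z (T x) := by
      rw [hTapp, hK2 z hz x, map_neg, hK2 z hz (A2 x), neg_neg, hTapp]
    rw [this, hx2, map_smul]
  have hA2Vmem : ∀ x ∈ V, A2 x ∈ V := by
    intro x hx
    obtain ⟨hx1, hx2⟩ := (hVmem x).mp hx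
    refine (hVmem _).mpr ⟨hA2v x hx1, ?_⟩
    have : T (A2 x) = A2 (T x) := rfl
    rw [this, hx2, map_smul]
  -- ZL := span of brackets of V
  set ZL : Submodule ℝ n := Submodule.span ℝ {w : n | ∃ a ∈ V, ∃ b ∈ V, w = l a b}
    with hZLdef
  have hZLZ : ZL ≤ Z := by
    rw [hZLdef, Submodule.span_le]
    rintro w ⟨a, -, b, -, rfl⟩
    exact h2 a b
  have hgenZL : ∀ a ∈ V, ∀ b ∈ V, l a b ∈ ZL := by
    intro a ha b hb
    exact Submodule.subset_span ⟨a, ha, b, hb, rfl⟩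
  have hA0sqZL : ∀ w ∈ ZL, A0 (A0 w) = (9 * lam) • w := by
    intro w hw
    have hker : ZL ≤ LinearMap.ker (A0 ∘ₗ A0 - (9 * lam) • LinearMap.id) := by
      rw [hZLdef, Submodule.span_le]
      rintro w ⟨a, ha, b, hb, rfl⟩
      have hb2 : T b = lam • b := ((hVmem b).mp hb).2
      have : A0 (A0 (l a b)) = (9 * lam) • l a b := by
        rw [hR2, map_smul, hR2]
        have hab : l a (A2 (A2 b)) = lam • l a b := by
          rw [show A2 (A2 b) = T b from rfl, hb2, map_smul]
        rw [hab, smul_smul, smul_smul]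
        congr 1
        ring
      simp only [SetLike.mem_coe, LinearMap.mem_ker, LinearMap.sub_apply, LinearMap.comp_apply,
        LinearMap.smul_apply, LinearMap.id_apply, this, sub_self]
    have := hker hw
    rw [LinearMap.mem_ker, LinearMap.sub_apply, LinearMap.comp_apply, LinearMap.smul_apply,
      LinearMap.id_apply, sub_eq_zero] at this
    exact this
  have hjZLV : ∀ w ∈ ZL, ∀ x : n, j w x ∈ V := by
    intro w hw x
    refine (hVmem _).mpr ⟨hjv w x, ?_⟩
    revert x
    refine Submodule.span_induction ?_ ?_ ?_ ?_ hw
    · rintro w ⟨a, ha, b, hb, rfl⟩ x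
      have hw' : l a b ∈ ZL := hgenZL a ha b hb
      have h9 : A0 (A0 (l a b)) = (9 * lam) • l a b := hA0sqZL _ hw'
      have hzZ : l a b ∈ Z := h2 a b
      have hA0zZ : A0 (l a b) ∈ Z := hA0z _ hzZ
      have hkey : j (A0 (A0 (l a b))) x = (9 : ℝ) • T (j (l a b) x) := by
        rw [hK1 _ hA0zZ x, hK1 _ hzZ x, map_smul, ← hTapp, smul_smul]
        norm_num
      rw [h9, hjsmul, LinearMap.smul_apply] at hkey
      have h9ne : (9 : ℝ) ≠ 0 := by norm_num
      have : (9 : ℝ) • T (j (l a b) x) = (9 : ℝ) • (lam • j (l a b) x) := by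
        rw [← hkey, smul_smul]
      exact smul_right_injective n h9ne this
    · intro x; rw [hj0]; simp
    · intro w1 w2 hw1 hw2 ih1 ih2 x
      rw [hjadd, LinearMap.add_apply, map_add, ih1 x, ih2 x, smul_add]
    · intro c w1 hw1 ih x
      rw [hjsmul, LinearMap.smul_apply, map_smul, ih x, smul_comm]
  have hjZLzero : ∀ w ∈ ZL, ∀ a : n, (∀ u ∈ V, ⟪u, a⟫ = 0) → j w a = 0 := by
    intro w hw a ha
    refine hinner0 _ fun y => ?_
    rw [hjskew]
    have h0 := ha _ (hjZLV w hw y)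
    rw [h0, neg_zero]
  -- the two ideals
  set N1 : Submodule ℝ n := V ⊔ ZL with hN1def
  set N2 : Submodule ℝ n := (Zᗮ ⊓ Vᗮ) ⊔ (Z ⊓ ZLᗮ) with hN2def
  have hN1ideal : ∀ x ∈ N1, ∀ y : n, l x y ∈ N1 := by
    intro x hx y
    obtain ⟨p, hp, q, hq, rfl⟩ := Submodule.mem_sup.mp hx
    have hlq : l q y = 0 := (hZ q).1 (hZLZ hq) y
    have hlp : l p y ∈ ZL := by
      set u : n := (Submodule.orthogonalProjectionOnto V y : n) with hudef
      have huV : (u : n) ∈ V := SetLike.coe_mem _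
      have hw : y - u ∈ Vᗮ := Submodule.sub_starProjection_mem_orthogonal y
      have hlpw : l p (y - u) = 0 := by
        have hmem : l p (y - u) ∈ Z := h2 _ _
        have : ∀ z ∈ Z, ⟪z, l p (y - u)⟫ = 0 := by
          intro z hz
          rw [← hj]
          exact (Submodule.mem_orthogonal _ _).mp hw _ (hjVmem z hz p hp)
        have h0 := this _ hmem
        rwa [inner_self_eq_zero] at h0
      have : l p y = l p u + l p (y - u) := by
        rw [← map_add]
        congr 1
        abel
      rw [this, hlpw, add_zero]
      exact hgenZL p hp u huV
    rw [map_add, LinearMap.add_apply, hlq, add_zero]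
    exact Submodule.mem_sup_right hlp
  have hN2ideal : ∀ x ∈ N2, ∀ y : n, l x y ∈ N2 := by
    intro x hx y
    obtain ⟨p, hp, q, hq, rfl⟩ := Submodule.mem_sup.mp hx
    obtain ⟨hpZ, hpV⟩ := hp
    obtain ⟨hqZ, hqL⟩ := hq
    have hlq : l q y = 0 := (hZ q).1 hqZ y
    have hlp : l p y ∈ Z ⊓ ZLᗮ := by
      refine ⟨h2 _ _, (Submodule.mem_orthogonal _ _).mpr ?_⟩
      intro w hw
      have hjwp : j w p = 0 := by
        exact hjZLzero w hw p fun u hu => (Submodule.mem_orthogonal _ _).mp hpV u hu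
      rw [← hj, hjwp]
      simp
    rw [map_add, LinearMap.add_apply, hlq, add_zero]
    exact Submodule.mem_sup_right hlp
  have horth : ∀ x ∈ N1, ∀ y ∈ N2, ⟪x, y⟫ = 0 := by
    intro x hx y hy
    obtain ⟨p, hp, q, hq, rfl⟩ := Submodule.mem_sup.mp hx
    obtain ⟨a, ha, b, hb, rfl⟩ := Submodule.mem_sup.mp hy
    obtain ⟨haZ, haV⟩ := ha
    obtain ⟨hbZ, hbL⟩ := hb
    have h1 : ⟪p, a⟫ = 0 := (Submodule.mem_orthogonal _ _).mp haV p hp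
    have h2' : ⟪p, b⟫ = 0 := by
      rw [real_inner_comm]
      exact (Submodule.mem_orthogonal _ _).mp (hVZ hp) b hbZ
    have h3 : ⟪q, a⟫ = 0 := (Submodule.mem_orthogonal _ _).mp haZ q (hZLZ hq)
    have h4 : ⟪q, b⟫ = 0 := (Submodule.mem_orthogonal _ _).mp hbL q hq
    rw [inner_add_left, inner_add_right, inner_add_right, h1, h2', h3, h4]
    norm_num
  have hsup : N1 ⊔ N2 = ⊤ := by
    rw [Submodule.eq_top_iff']
    intro x
    obtain ⟨a, haZ, b, hbZ, rfl⟩ := hdec x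
    have ha1 : (Submodule.orthogonalProjectionOnto V a : n) ∈ N1 ⊔ N2 :=
      le_sup_left (α := Submodule ℝ n) (Submodule.mem_sup_left (SetLike.coe_mem _))
    have ha2 : a - (Submodule.orthogonalProjectionOnto V a : n) ∈ N1 ⊔ N2 := by
      refine le_sup_right (α := Submodule ℝ n) (Submodule.mem_sup_left ⟨?_, ?_⟩)
      · exact sub_mem haZ (hVZ (SetLike.coe_mem _))
      · exact Submodule.sub_starProjection_mem_orthogonal a
    have hb1 : (Submodule.orthogonalProjectionOnto ZL b : n) ∈ N1 ⊔ N2 :=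
      le_sup_left (α := Submodule ℝ n) (Submodule.mem_sup_right (SetLike.coe_mem _))
    have hb2 : b - (Submodule.orthogonalProjectionOnto ZL b : n) ∈ N1 ⊔ N2 := by
      refine le_sup_right (α := Submodule ℝ n) (Submodule.mem_sup_right ⟨?_, ?_⟩)
      · exact sub_mem hbZ (hZLZ (SetLike.coe_mem _))
      · exact Submodule.sub_starProjection_mem_orthogonal b
    have : a + b = (Submodule.orthogonalProjectionOnto V a : n) + (a - (Submodule.orthogonalProjectionOnto V a : n)) +
        ((Submodule.orthogonalProjectionOnto ZL b : n) + (b - (Submodule.orthogonalProjectionOnto ZL b : n))) := by abel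
    rw [this]
    exact add_mem (add_mem ha1 ha2) (add_mem hb1 hb2)
  have hN2bot : N2 = ⊥ := by
    rcases hirr N1 N2 hN1ideal hN2ideal horth hsup with h | h
    · exfalso
      have : v0 ∈ N1 := Submodule.mem_sup_left hv0V
      rw [h, Submodule.mem_bot] at this
      exact hv0ne this
    · exact h
  -- conclusion: T = lam on Zᗮ, A0² = 9 lam on Z
  have hTall : ∀ x ∈ Zᗮ, A2 (A2 x) = lam • x := by
    intro x hx
    have hmem : x - (Submodule.orthogonalProjectionOnto V x : n) ∈ N2 := by
      refine Submodule.mem_sup_left ⟨?_, ?_⟩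
      · exact sub_mem hx (hVZ (SetLike.coe_mem _))
      · exact Submodule.sub_starProjection_mem_orthogonal x
    rw [hN2bot, Submodule.mem_bot, sub_eq_zero] at hmem
    have hxV : x ∈ V := by rw [hmem]; exact SetLike.coe_mem _
    exact ((hVmem x).mp hxV).2
  have hA0all : ∀ z ∈ Z, A0 (A0 z) = (9 * lam) • z := by
    intro z hz
    have hmem : z - (Submodule.orthogonalProjectionOnto ZL z : n) ∈ N2 := by
      refine Submodule.mem_sup_right ⟨?_, ?_⟩
      · exact sub_mem hz (hZLZ (SetLike.coe_mem _))
      · exact Submodule.sub_starProjection_mem_orthogonal z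
    rw [hN2bot, Submodule.mem_bot, sub_eq_zero] at hmem
    have hzL : z ∈ ZL := by rw [hmem]; exact SetLike.coe_mem _
    exact hA0sqZL z hzL
  -- the complex structure J
  set c : ℝ := Real.sqrt (-lam) with hcdef
  have hcpos : 0 < c := Real.sqrt_pos.mpr (by linarith)
  have hcne : c ≠ 0 := ne_of_gt hcpos
  have hc2 : c * c = -lam := Real.mul_self_sqrt (by linarith)
  have hlamc : lam = -(c * c) := by linarith
  set J : n →ₗ[ℝ] n := c⁻¹ • A2 + ((3 : ℝ) * c)⁻¹ • A0 with hJdef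
  have hJapp : ∀ x : n, J x = c⁻¹ • A2 x + ((3 : ℝ) * c)⁻¹ • A0 x := by
    intro x; simp [hJdef]
  have hJv : ∀ a ∈ Zᗮ, J a = c⁻¹ • A2 a := by
    intro a ha; rw [hJapp, hA0v a ha, smul_zero, add_zero]
  have hJz : ∀ b ∈ Z, J b = ((3 : ℝ) * c)⁻¹ • A0 b := by
    intro b hb; rw [hJapp, hA2z b hb, smul_zero, zero_add]
  have hA0xZ : ∀ x : n, A0 x ∈ Z := by
    intro x
    obtain ⟨a, ha, b, hb, rfl⟩ := hdec x
    rw [map_add, hA0v a ha, zero_add]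
    exact hA0z b hb
  have horthzv : ∀ u ∈ Z, ∀ w ∈ Zᗮ, ⟪u, w⟫ = 0 :=
    fun u hu w hw => (Submodule.mem_orthogonal _ _).mp hw u hu
  have horthvz : ∀ u ∈ Zᗮ, ∀ w ∈ Z, ⟪u, w⟫ = 0 := by
    intro u hu w hw
    rw [real_inner_comm]
    exact horthzv w hw u hu
  refine ⟨lam, hlamneg, hTall, hA0all, J, rfl, ?_, ?_, ?_⟩
  · -- J ∘ J = -id
    ext x
    simp only [LinearMap.comp_apply, LinearMap.neg_apply, LinearMap.id_apply]
    obtain ⟨a, ha, b, hb, rfl⟩ := hdec x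
    have hJa2 : J (J a) = -a := by
      rw [hJv a ha, map_smul, hJv _ (hA2v a ha), hTall a ha, smul_smul, smul_smul]
      rw [show c⁻¹ * c⁻¹ * lam = -1 by rw [hlamc]; field_simp]
      rw [neg_one_smul]
    have hJb2 : J (J b) = -b := by
      rw [hJz b hb, map_smul, hJz _ (hA0z b hb), hA0all b hb, smul_smul, smul_smul]
      rw [show ((3 : ℝ) * c)⁻¹ * ((3 : ℝ) * c)⁻¹ * (9 * lam) = -1 by rw [hlamc]; field_simp; ring]
      rw [neg_one_smul]
    rw [map_add, map_add, hJa2, hJb2, neg_add]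
  · -- bi-invariance
    intro x y
    have hL : J (l x y) = c⁻¹ • l (A2 x) y := by
      rw [hJz _ (h2 x y), hR2', smul_smul]
      congr 1
      field_simp
    have hR : l (J x) y = c⁻¹ • l (A2 x) y := by
      rw [hJapp, map_add, LinearMap.add_apply, map_smul, map_smul, LinearMap.smul_apply,
        LinearMap.smul_apply, (hZ _).1 (hA0xZ x) y, smul_zero, add_zero]
    rw [hL, hR]
  · -- orthogonality
    intro a b
    obtain ⟨av, hav, az, haz, rfl⟩ := hdec a
    obtain ⟨bv, hbv, bz, hbz, rfl⟩ := hdec b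
    have e1 : ⟪A2 av, A2 bv⟫ = c * c * ⟪av, bv⟫ := by
      rw [hA2sk, hTall bv hbv, real_inner_smul_right, hlamc]
      ring
    have e2 : ⟪A0 az, A0 bz⟫ = 9 * (c * c) * ⟪az, bz⟫ := by
      rw [hA0sk, hA0all bz hbz, real_inner_smul_right, hlamc]
      ring
    have e3 : ⟪A2 av, A0 bz⟫ = 0 := horthvz _ (hA2v _ hav) _ (hA0z _ hbz)
    have e4 : ⟪A0 az, A2 bv⟫ = 0 := horthzv _ (hA0z _ haz) _ (hA2v _ hbv)
    have e5 : ⟪av, bz⟫ = 0 := horthvz _ hav _ hbz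
    have e6 : ⟪az, bv⟫ = 0 := horthzv _ haz _ hbv
    rw [map_add, map_add, hJv av hav, hJz az haz, hJv bv hbv, hJz bz hbz]
    rw [inner_add_left, inner_add_right, inner_add_right, inner_add_left, inner_add_right,
      inner_add_right]
    rw [real_inner_smul_left, real_inner_smul_left, real_inner_smul_left, real_inner_smul_left,
      real_inner_smul_right, real_inner_smul_right, real_inner_smul_right, real_inner_smul_right,
      e1, e2, e3, e4, e5, e6]
    field_simp
    ring
end

section
/- If J is a bi-invariant orthogonal complex structure on a 2-step nilpotent metric Lie algebra, then J preserves v and z, and J anti-commutes with j(z) for every z in the center: J j(z) = −j(z) J, and moreover j(z)J = −j(Jz). -/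
open scoped RealInnerProductSpace

/-- If `J` is a bi-invariant orthogonal complex structure on a 2-step
nilpotent metric Lie algebra, then `J` preserves `v = z^⊥` and `z`, it anti-commutes with
`j z` for every central `z` (`J j(z) = −j(z) J`), and moreover `j(z) J = −j(Jz)`. -/
theorem killing_stmt8 {n : Type*} [NormedAddCommGroup n] [InnerProductSpace ℝ n]
    [FiniteDimensional ℝ n]
    (l : n →ₗ[ℝ] n →ₗ[ℝ] n) (hanti : ∀ x : n, l x x = 0)
    (Z : Submodule ℝ n) (hZ : ∀ x : n, x ∈ Z ↔ ∀ y : n, l x y = 0)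
    (h2 : ∀ x y : n, l x y ∈ Z) (hna : ∃ x : n, ∃ y : n, l x y ≠ 0)
    (j : n → n →ₗ[ℝ] n) (hj : ∀ z x y : n, ⟪j z x, y⟫ = ⟪z, l x y⟫)
    -- J is a bi-invariant orthogonal complex structure
    (J : n →ₗ[ℝ] n) (hJ2 : J ∘ₗ J = -LinearMap.id)
    (hJbi : ∀ x y : n, J (l x y) = l (J x) y)
    (hJorth : ∀ a b : n, ⟪J a, J b⟫ = ⟪a, b⟫) :
    (∀ z ∈ Z, J z ∈ Z) ∧ (∀ x ∈ Zᗮ, J x ∈ Zᗮ) ∧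
    (∀ z ∈ Z, J ∘ₗ (j z) = -((j z) ∘ₗ J) ∧ (j z) ∘ₗ J = -(j (J z))) := by
  -- J ∘ J = -1 pointwise
  have hJ2' : ∀ b : n, J (J b) = -b := by
    intro b
    have := LinearMap.congr_fun hJ2 b
    simpa using this
  -- adjoint of J is -J
  have hadj : ∀ a b : n, ⟪J a, b⟫ = -⟪a, J b⟫ := by
    intro a b
    have hb : J (-(J b)) = b := by rw [map_neg, hJ2', neg_neg]
    calc ⟪J a, b⟫ = ⟪J a, J (-(J b))⟫ := by rw [hb]
      _ = ⟪a, -(J b)⟫ := hJorth _ _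
      _ = -⟪a, J b⟫ := inner_neg_right _ _
  -- antisymmetry of l
  have hsym : ∀ x y : n, l x y = -(l y x) := by
    intro x y
    have h := hanti (x + y)
    simp only [map_add, LinearMap.add_apply, hanti, zero_add, add_zero] at h
    linear_combination (norm := abel) h
  -- bi-invariance in the second slot
  have hJbi2 : ∀ x y : n, l x (J y) = l (J x) y := by
    intro x y
    calc l x (J y) = -(l (J y) x) := hsym _ _
      _ = -(J (l y x)) := by rw [hJbi]
      _ = J (-(l y x)) := (map_neg J _).symm
      _ = J (l x y) := by rw [← hsym]
      _ = l (J x) y := hJbi _ _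
  -- J preserves Z
  have hZJ : ∀ z ∈ Z, J z ∈ Z := by
    intro z hz
    rw [hZ]
    intro y
    rw [← hJbi, (hZ z).mp hz, map_zero]
  refine ⟨hZJ, ?_, ?_⟩
  · -- J preserves Zᗮ
    intro x hx
    intro z hz
    have hw : z = J (-(J z)) := by rw [map_neg, hJ2', neg_neg]
    have hmem : -(J z) ∈ Z := neg_mem (hZJ z hz)
    calc ⟪z, J x⟫ = -⟪J z, x⟫ := by rw [real_inner_comm, hadj, real_inner_comm]
      _ = ⟪-(J z), x⟫ := (inner_neg_left _ _).symm
      _ = 0 := hx _ hmem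
  · intro z hz
    constructor
    · ext x
      apply ext_inner_right ℝ
      intro y
      simp only [LinearMap.comp_apply, LinearMap.neg_apply]
      rw [hadj, hj, inner_neg_left, hj, hJbi2]
    · ext x
      apply ext_inner_right ℝ
      intro y
      simp only [LinearMap.comp_apply, LinearMap.neg_apply]
      rw [hj, ← hJbi, inner_neg_left, hj]
      have : ⟪z, J (l x y)⟫ = -⟪J z, l x y⟫ := by
        rw [real_inner_comm, hadj, real_inner_comm]
      rw [this]
end

section
/- An irreducible 2-step nilpotent metric Lie algebra admits at most one bi-invariant orthogonal complex structure up to sign: if I and J are both bi-invariant orthogonal complex structures then I = J or I = −J. -/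
open scoped RealInnerProductSpace

/-- An irreducible 2-step nilpotent metric Lie algebra admits at most one
bi-invariant orthogonal complex structure up to sign: if `I` and `J` are both bi-invariant
orthogonal complex structures, then `I = J` or `I = −J`. -/
theorem killing_stmt9 {n : Type*} [NormedAddCommGroup n] [InnerProductSpace ℝ n]
    [FiniteDimensional ℝ n]
    (l : n →ₗ[ℝ] n →ₗ[ℝ] n) (hanti : ∀ x : n, l x x = 0)
    (Z : Submodule ℝ n) (hZ : ∀ x : n, x ∈ Z ↔ ∀ y : n, l x y = 0)
    (h2 : ∀ x y : n, l x y ∈ Z) (hna : ∃ x : n, ∃ y : n, l x y ≠ 0)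
    (j : n → n →ₗ[ℝ] n) (hj : ∀ z x y : n, ⟪j z x, y⟫ = ⟪z, l x y⟫)
    (hjinj : ∀ z ∈ Z, j z = 0 → z = 0)
    (hirr : ∀ N' N'' : Submodule ℝ n,
      (∀ x ∈ N', ∀ y : n, l x y ∈ N') → (∀ x ∈ N'', ∀ y : n, l x y ∈ N'') →
      (∀ x ∈ N', ∀ y ∈ N'', ⟪x, y⟫ = 0) → N' ⊔ N'' = ⊤ → N' = ⊥ ∨ N'' = ⊥)
    (I J : n →ₗ[ℝ] n)
    (hI2 : I ∘ₗ I = -LinearMap.id) (hIbi : ∀ x y : n, I (l x y) = l (I x) y)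
    (hIorth : ∀ a b : n, ⟪I a, I b⟫ = ⟪a, b⟫)
    (hJ2 : J ∘ₗ J = -LinearMap.id) (hJbi : ∀ x y : n, J (l x y) = l (J x) y)
    (hJorth : ∀ a b : n, ⟪J a, J b⟫ = ⟪a, b⟫) :
    I = J ∨ I = -J := by
  classical
  obtain ⟨x₀, y₀, hc⟩ := hna
  have hI2' : ∀ v : n, I (I v) = -v := fun v => by
    simpa using LinearMap.congr_fun hI2 v
  have hJ2' : ∀ v : n, J (J v) = -v := fun v => by
    simpa using LinearMap.congr_fun hJ2 v
  -- antisymmetry of the bracket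
  have hskewl : ∀ a b : n, l a b = -l b a := by
    intro a b
    have h := hanti (a + b)
    simp only [map_add, LinearMap.add_apply, hanti a, hanti b, zero_add, add_zero] at h
    exact eq_neg_of_add_eq_zero_left (by rw [add_comm]; exact h)
  -- bi-invariance in the second argument
  have hIbi2 : ∀ a b : n, l a (I b) = I (l a b) := by
    intro a b
    rw [hskewl a (I b), ← hIbi b a, ← map_neg I, ← hskewl a b]
  have hJbi2 : ∀ a b : n, l a (J b) = J (l a b) := by
    intro a b
    rw [hskewl a (J b), ← hJbi b a, ← map_neg J, ← hskewl a b]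
  -- skew-adjointness of I and J
  have hIskew : ∀ a b : n, ⟪I a, b⟫ = -⟪a, I b⟫ := by
    intro a b
    have h := hIorth a (I b)
    rw [hI2' b, inner_neg_right] at h
    linarith
  have hJskew : ∀ a b : n, ⟪J a, b⟫ = -⟪a, J b⟫ := by
    intro a b
    have h := hJorth a (J b)
    rw [hJ2' b, inner_neg_right] at h
    linarith
  -- the symmetric operator S = I∘J + J∘I
  set S : Module.End ℝ n := I ∘ₗ J + J ∘ₗ I with hSdef
  have hSapp : ∀ v : n, S v = I (J v) + J (I v) := fun v => rfl
  have hSsymm : S.IsSymmetric := by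
    intro a b
    rw [hSapp, hSapp, inner_add_left, inner_add_right]
    have e1 : ⟪I (J a), b⟫ = ⟪a, J (I b)⟫ := by
      rw [hIskew (J a) b, hJskew a (I b)]; ring
    have e2 : ⟪J (I a), b⟫ = ⟪a, I (J b)⟫ := by
      rw [hJskew (I a) b, hIskew a (J b)]; ring
    rw [e1, e2]; ring
  -- S commutes with the bracket in the first argument
  have hSl : ∀ a y : n, S (l a y) = l (S a) y := by
    intro a y
    rw [hSapp, hSapp, map_add, LinearMap.add_apply]
    rw [hJbi, hIbi, hIbi, hJbi]
  -- eigenspaces of S: spectral theorem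
  have hnt : Nontrivial n := ⟨⟨l x₀ y₀, 0, hc⟩⟩
  have htop : (⨆ μ : ℝ, Module.End.eigenspace S μ) = ⊤ := by
    have h := hSsymm.orthogonalComplement_iSup_eigenspaces_eq_bot
    rwa [Submodule.orthogonal_eq_bot_iff] at h
  obtain ⟨μ, hμne⟩ : ∃ μ : ℝ, Module.End.eigenspace S μ ≠ ⊥ := by
    by_contra h
    push_neg at h
    have : (⨆ μ : ℝ, Module.End.eigenspace S μ) = ⊥ := by
      simp [h]
    rw [htop] at this
    exact top_ne_bot this
  set N' : Submodule ℝ n := Module.End.eigenspace S μ with hN'def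
  set N'' : Submodule ℝ n := ⨆ ν : {ν : ℝ // ν ≠ μ}, Module.End.eigenspace S (ν : ℝ)
    with hN''def
  -- invariance of N'
  have hinv' : ∀ x ∈ N', ∀ y : n, l x y ∈ N' := by
    intro a ha y
    rw [hN'def, Module.End.mem_eigenspace_iff] at ha ⊢
    rw [hSl, ha, map_smul, LinearMap.smul_apply]
  -- invariance of N''
  have hinv'' : ∀ x ∈ N'', ∀ y : n, l x y ∈ N'' := by
    intro a ha y
    have : N'' ≤ Submodule.comap (l.flip y) N'' := by
      rw [hN''def]
      apply iSup_le
      rintro ⟨ν, hν⟩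
      intro a ha
      rw [Module.End.mem_eigenspace_iff] at ha
      have hm : l a y ∈ Module.End.eigenspace S ν := by
        rw [Module.End.mem_eigenspace_iff, hSl, ha, map_smul, LinearMap.smul_apply]
      exact Submodule.mem_comap.2 (by
        have : Module.End.eigenspace S ν ≤ N'' := le_iSup
          (fun ν : {ν : ℝ // ν ≠ μ} => Module.End.eigenspace S (ν : ℝ)) ⟨ν, hν⟩
        simpa [LinearMap.flip_apply] using this hm)
    simpa [LinearMap.flip_apply] using this ha
  -- orthogonality
  have horth : ∀ x ∈ N', ∀ y ∈ N'', ⟪x, y⟫ = 0 := by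
    intro a ha b hb
    have key : N'' ≤ (Submodule.span ℝ {a})ᗮ := by
      rw [hN''def]
      apply iSup_le
      rintro ⟨ν, hν⟩
      intro b hb
      rw [Module.End.mem_eigenspace_iff] at hb
      rw [Submodule.mem_orthogonal]
      intro u hu
      rw [Submodule.mem_span_singleton] at hu
      obtain ⟨r, rfl⟩ := hu
      rw [real_inner_smul_left]
      have ha' : S a = μ • a := Module.End.mem_eigenspace_iff.1 ha
      have h1 : ⟪S a, b⟫ = ⟪a, S b⟫ := hSsymm a b
      rw [ha', hb, real_inner_smul_left, real_inner_smul_right] at h1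
      have : ⟪a, b⟫ = 0 := by
        by_contra hab
        exact hν (mul_right_cancel₀ hab h1).symm
      rw [this, mul_zero]
    have := key hb
    rw [Submodule.mem_orthogonal] at this
    exact this a (Submodule.mem_span_singleton_self a)
  -- spanning
  have hsup : N' ⊔ N'' = ⊤ := by
    rw [← htop]
    apply le_antisymm
    · apply sup_le
      · exact le_iSup (fun ν : ℝ => Module.End.eigenspace S ν) μ
      · rw [hN''def]
        apply iSup_le
        rintro ⟨ν, hν⟩
        exact le_iSup (fun ν : ℝ => Module.End.eigenspace S ν) ν
    · apply iSup_le
      intro ν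
      by_cases hν : ν = μ
      · subst hν; exact le_sup_left
      · exact le_trans (le_iSup
          (fun ν : {ν : ℝ // ν ≠ μ} => Module.End.eigenspace S (ν : ℝ)) ⟨ν, hν⟩)
          le_sup_right
  -- irreducibility forces N'' = ⊥, hence S = μ • id
  have hSmu : ∀ v : n, I (J v) + J (I v) = μ • v := by
    rcases hirr N' N'' hinv' hinv'' horth hsup with h | h
    · exact absurd h hμne
    · rw [h, sup_bot_eq] at hsup
      intro v
      have : v ∈ N' := hsup ▸ Submodule.mem_top
      have := Module.End.mem_eigenspace_iff.1 this
      rw [hSapp] at this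
      exact this
  -- T := I∘J satisfies T² = μT - 1
  have hT2 : ∀ v : n, I (J (I (J v))) = μ • I (J v) - v := by
    intro v
    have h1 : J (I (J v)) = μ • J v - I (J (J v)) := by
      have := hSmu (J v)
      rw [← this]; abel
    rw [h1, map_sub, map_smul, hJ2' v, map_neg, map_neg, hI2' v, neg_neg]
  -- T² fixes the nonzero bracket c := l x₀ y₀
  set c : n := l x₀ y₀ with hcdef
  have hkey : I (J (I (J c))) = c := by
    have e1 : J c = l x₀ (J y₀) := (hJbi2 x₀ y₀).symm
    have e2 : I (J c) = l (I x₀) (J y₀) := by rw [e1, hIbi]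
    have e3 : J (I (J c)) = -(I c) := by
      rw [e2, ← hJbi2 (I x₀) (J y₀), hJ2' y₀, map_neg, ← hIbi]
    rw [e3, map_neg, hI2']
    abel
  -- hence μ • (I (J c)) = 2 • c
  have h2c : μ • I (J c) = (2 : ℝ) • c := by
    have h := hT2 c
    rw [hkey] at h
    rw [eq_sub_iff_add_eq] at h
    rw [← h, two_smul]
  -- orthogonality of T = I∘J
  have hTorth : ∀ v w : n, ⟪I (J v), I (J w)⟫ = ⟪v, w⟫ := fun v w => by
    rw [hIorth, hJorth]
  have hcc : ⟪c, c⟫ ≠ 0 := fun h => hc (inner_self_eq_zero.1 h)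
  -- μ² = 4
  have hmul : μ * μ = 4 := by
    have h1 : ⟪μ • I (J c), μ • I (J c)⟫ = ⟪(2:ℝ) • c, (2:ℝ) • c⟫ := by rw [h2c]
    rw [real_inner_smul_left, real_inner_smul_right, real_inner_smul_left,
      real_inner_smul_right, hTorth] at h1
    have h2 : (μ * μ - 4) * ⟪c, c⟫ = 0 := by linear_combination h1
    rcases mul_eq_zero.1 h2 with h | h
    · linarith
    · exact absurd h hcc
  have hμcases : μ = 2 ∨ μ = -2 := by
    have h : (μ - 2) * (μ + 2) = 0 := by ring_nf; linarith
    rcases mul_eq_zero.1 h with h | h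
    · left; linarith
    · right; linarith
  -- the key inner product identity
  have hTinner : ∀ v : n, 2 * ⟪I (J v), v⟫ = μ * ⟪v, v⟫ := by
    intro v
    have h := congrArg (fun w => ⟪w, v⟫) (hSmu v)
    simp only [inner_add_left, real_inner_smul_left] at h
    have e1 : ⟪J (I v), v⟫ = ⟪I (J v), v⟫ := by
      rw [hJskew (I v) v, hIskew v (J v), neg_neg, real_inner_comm]
    rw [e1] at h
    linarith
  rcases hμcases with hμ | hμ
  · -- μ = 2 : I ∘ J = id, so I = -J
    right
    have hTid : ∀ v : n, I (J v) = v := by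
      intro v
      have hz : ⟪I (J v) - v, I (J v) - v⟫ = 0 := by
        rw [inner_sub_left, inner_sub_right, inner_sub_right, hTorth]
        have h := hTinner v
        rw [hμ] at h
        have hsym : ⟪v, I (J v)⟫ = ⟪I (J v), v⟫ := real_inner_comm _ _
        linarith
      have := inner_self_eq_zero.1 hz
      rwa [sub_eq_zero] at this
    ext w
    have h := hTid (-(J w))
    rw [map_neg, hJ2', neg_neg] at h
    rw [h]
    simp
  · -- μ = -2 : I ∘ J = -id, so I = J
    left
    have hTid : ∀ v : n, I (J v) = -v := by
      intro v
      have hz : ⟪I (J v) + v, I (J v) + v⟫ = 0 := by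
        rw [inner_add_left, inner_add_right, inner_add_right, hTorth]
        have h := hTinner v
        rw [hμ] at h
        have hsym : ⟪v, I (J v)⟫ = ⟪I (J v), v⟫ := real_inner_comm _ _
        linarith
      have := inner_self_eq_zero.1 hz
      exact eq_neg_of_add_eq_zero_left this
    ext w
    have h := hTid (-(J w))
    rw [map_neg, hJ2', neg_neg] at h
    rw [h, neg_neg]
end

section
/- The Killing 2-form associated to a bi-invariant orthogonal complex structure on an irreducible 2-step nilpotent metric Lie algebra is never parallel: ∇_z α = −j(z)J|_v (as a 2-form on v) cannot vanish for all z ∈ z. -/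
open scoped RealInnerProductSpace

/-- The Killing 2-form `α = α₂ + α₀` (with `α₂ = J|_v`, `α₀ = 3 J|_z`)
associated to a bi-invariant orthogonal complex structure `J` on an irreducible 2-step
nilpotent metric Lie algebra is never parallel: `∇_z α = −(1/2)[j(z), α] = −j(z) ∘ J`
cannot vanish for all central `z`. -/
theorem killing_stmt10 {n : Type*} [NormedAddCommGroup n] [InnerProductSpace ℝ n]
    [FiniteDimensional ℝ n]
    (l : n →ₗ[ℝ] n →ₗ[ℝ] n) (hanti : ∀ x : n, l x x = 0)
    (Z : Submodule ℝ n) (hZ : ∀ x : n, x ∈ Z ↔ ∀ y : n, l x y = 0)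
    (h2 : ∀ x y : n, l x y ∈ Z) (hna : ∃ x : n, ∃ y : n, l x y ≠ 0)
    (j : n → n →ₗ[ℝ] n) (hj : ∀ z x y : n, ⟪j z x, y⟫ = ⟪z, l x y⟫)
    (hjinj : ∀ z ∈ Z, j z = 0 → z = 0)
    (hirr : ∀ N' N'' : Submodule ℝ n,
      (∀ x ∈ N', ∀ y : n, l x y ∈ N') → (∀ x ∈ N'', ∀ y : n, l x y ∈ N'') →
      (∀ x ∈ N', ∀ y ∈ N'', ⟪x, y⟫ = 0) → N' ⊔ N'' = ⊤ → N' = ⊥ ∨ N'' = ⊥)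
    -- J is a bi-invariant orthogonal complex structure
    (J : n →ₗ[ℝ] n) (hJ2 : J ∘ₗ J = -LinearMap.id)
    (hJbi : ∀ x y : n, J (l x y) = l (J x) y)
    (hJorth : ∀ a b : n, ⟪J a, J b⟫ = ⟪a, b⟫)
    -- the associated Killing 2-form α = α₂ + α₀ with α₂ = J|_v and α₀ = 3 J|_z
    (A2 A0 : n →ₗ[ℝ] n)
    (hA2Z : ∀ z ∈ Z, A2 z = 0) (hA2V : ∀ x ∈ Zᗮ, A2 x = J x)
    (hA0V : ∀ x ∈ Zᗮ, A0 x = 0) (hA0Z : ∀ z ∈ Z, A0 z = (3 : ℝ) • J z) :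
    -- ∇_z α = −(1/2)[j(z), α] equals −j(z) ∘ J, and it cannot vanish for all z ∈ Z
    (∀ z ∈ Z, (-(1 / 2 : ℝ)) • ((j z) ∘ₗ (A2 + A0) - (A2 + A0) ∘ₗ (j z))
        = -((j z) ∘ₗ J)) ∧
    ¬(∀ z ∈ Z, (j z) ∘ₗ J = 0) := by
  -- J ∘ J = -id pointwise
  have hJ2' : ∀ x : n, J (J x) = -x := by
    intro x
    have := LinearMap.ext_iff.mp hJ2 x
    simpa using this
  -- l is antisymmetric
  have hskew : ∀ x y : n, l x y = - l y x := by
    intro x y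
    have h := hanti (x + y)
    rw [map_add] at h
    simp only [LinearMap.add_apply, map_add, hanti, zero_add, add_zero] at h
    exact eq_neg_of_add_eq_zero_right h
  -- ⟪J a, b⟫ = -⟪a, J b⟫
  have hJskew : ∀ a b : n, ⟪J a, b⟫ = -⟪a, J b⟫ := by
    intro a b
    have h := hJorth a (J b)
    rw [hJ2', inner_neg_right] at h
    linarith
  -- l x (J y) = J (l x y)
  have hlJ : ∀ x y : n, l x (J y) = J (l x y) := by
    intro x y
    rw [hskew x (J y), ← hJbi, ← map_neg, ← hskew]
  -- J preserves Z
  have hJZ : ∀ z ∈ Z, J z ∈ Z := by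
    intro z hz
    rw [hZ]
    intro y
    rw [← hJbi, (hZ z).mp hz, map_zero]
  -- j z vanishes on Z
  have hjz0 : ∀ z : n, ∀ w ∈ Z, j z w = 0 := by
    intro z w hw
    apply ext_inner_right ℝ
    intro y
    rw [hj, (hZ w).mp hw, inner_zero_left, inner_zero_right]
  -- j z maps into Zᗮ
  have hjperp : ∀ z x : n, j z x ∈ Zᗮ := by
    intro z x
    rw [Submodule.mem_orthogonal]
    intro u hu
    rw [real_inner_comm, hj]
    have : l x u = 0 := by
      rw [hskew, (hZ u).mp hu, neg_zero]
    rw [this, inner_zero_right]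
  -- anticommutation: J ∘ j z = - j z ∘ J
  have hac : ∀ z x : n, J (j z x) = - j z (J x) := by
    intro z x
    apply ext_inner_right ℝ
    intro y
    rw [inner_neg_left, hj, ← hJbi, ← hlJ, ← hj, ← hJskew]
  constructor
  · intro z hz
    ext x
    obtain ⟨zp, hzp, v, hv, rfl⟩ := Z.exists_add_mem_mem_orthogonal x
    simp only [LinearMap.smul_apply, LinearMap.sub_apply, LinearMap.comp_apply,
      LinearMap.add_apply, LinearMap.neg_apply, map_add]
    rw [hA2Z zp hzp, hA2V v hv, hA0Z zp hzp, hA0V v hv, hjz0 z zp hzp]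
    have hJv : j z (J zp) = 0 := hjz0 z _ (hJZ zp hzp)
    have hjv : j z v ∈ Zᗮ := hjperp z v
    rw [hA2V _ hjv, hA0V _ hjv]
    simp only [map_smul, hJv, map_zero, zero_add, add_zero, smul_zero]
    rw [hac]
    module
  · intro h
    obtain ⟨x, y, hxy⟩ := hna
    apply hxy
    apply hjinj (l x y) (h2 x y)
    · ext w
      have hw : w = J (-(J w)) := by rw [map_neg, hJ2', neg_neg]
      have := LinearMap.ext_iff.mp (h (l x y) (h2 x y)) (-(J w))
      simp only [LinearMap.comp_apply, LinearMap.zero_apply] at this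
      rw [LinearMap.zero_apply, hw, this]
end

section
/- Every Killing 2-form on a reducible 2-step nilpotent metric Lie algebra n = n' ⊕ n'' (orthogonal direct sum of ideals, with j injective) decomposes as α = α' + α'' with α' a Killing 2-form on n' and α'' a Killing 2-form on n''. -/
open scoped RealInnerProductSpace

set_option linter.unusedSectionVars false

section Aux
variable {n : Type*} [NormedAddCommGroup n] [InnerProductSpace ℝ n] [FiniteDimensional ℝ n]

lemma kil_lskew (l : n →ₗ[ℝ] n →ₗ[ℝ] n) (hanti : ∀ x : n, l x x = 0) (x y : n) :
    l x y = - l y x := by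
  have h := hanti (x + y)
  rw [map_add] at h
  simp only [LinearMap.add_apply, map_add, hanti, zero_add, add_zero] at h
  exact eq_neg_of_add_eq_zero_left (by rw [add_comm]; exact h)

lemma kil_lZr (l : n →ₗ[ℝ] n →ₗ[ℝ] n) (hanti : ∀ x : n, l x x = 0)
    (Z : Submodule ℝ n) (hZ : ∀ x : n, x ∈ Z ↔ ∀ y : n, l x y = 0)
    (x y : n) (hy : y ∈ Z) : l x y = 0 := by
  rw [kil_lskew l hanti, (hZ y).1 hy x, neg_zero]

lemma kil_cross (l : n →ₗ[ℝ] n →ₗ[ℝ] n) (hanti : ∀ x : n, l x x = 0)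
    (N₁ N₂ : Submodule ℝ n)
    (hid1 : ∀ x ∈ N₁, ∀ y : n, l x y ∈ N₁) (hid2 : ∀ x ∈ N₂, ∀ y : n, l x y ∈ N₂)
    (horth : ∀ x ∈ N₁, ∀ y ∈ N₂, ⟪x, y⟫ = 0)
    (x y : n) (hx : x ∈ N₁) (hy : y ∈ N₂) : l x y = 0 := by
  have h1 : l x y ∈ N₁ := hid1 x hx y
  have h2 : l x y ∈ N₂ := by
    rw [kil_lskew l hanti]; exact N₂.neg_mem (hid2 y hy x)
  exact inner_self_eq_zero.mp (horth _ h1 _ h2)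

lemma kil_ZV (Z : Submodule ℝ n) (u : n) (hu : u ∈ Z) (hu' : u ∈ Zᗮ) : u = 0 :=
  inner_self_eq_zero.mp (hu' u hu)

/-- Components (w.r.t. `N₁ ⊕ N₂`) of a central element are central. -/
lemma kil_Zstab (l : n →ₗ[ℝ] n →ₗ[ℝ] n) (hanti : ∀ x : n, l x x = 0)
    (Z : Submodule ℝ n) (hZ : ∀ x : n, x ∈ Z ↔ ∀ y : n, l x y = 0)
    (N₁ N₂ : Submodule ℝ n)
    (hid1 : ∀ x ∈ N₁, ∀ y : n, l x y ∈ N₁) (hid2 : ∀ x ∈ N₂, ∀ y : n, l x y ∈ N₂)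
    (horth : ∀ x ∈ N₁, ∀ y ∈ N₂, ⟪x, y⟫ = 0)
    (z : n) (hz : z ∈ Z) (a b : n) (ha : a ∈ N₁) (hb : b ∈ N₂) (hab : a + b = z) :
    a ∈ Z ∧ b ∈ Z := by
  have key : ∀ y : n, l a y = 0 ∧ l b y = 0 := by
    intro y
    have hsum : l a y + l b y = 0 := by
      have h := (hZ z).1 hz y
      rw [← hab, map_add, LinearMap.add_apply] at h
      exact h
    have h1 : l a y ∈ N₁ := hid1 a ha y
    have h1b : l a y ∈ N₂ := by
      have : l a y = - l b y := eq_neg_of_add_eq_zero_left hsum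
      rw [this]; exact N₂.neg_mem (hid2 b hb y)
    have e1 : l a y = 0 := inner_self_eq_zero.mp (horth _ h1 _ h1b)
    refine ⟨e1, ?_⟩
    rw [e1, zero_add] at hsum; exact hsum
  exact ⟨(hZ a).2 fun y => (key y).1, (hZ b).2 fun y => (key y).2⟩

/-- Components of an element of `Zᗮ` lie in `Zᗮ` (first component). -/
lemma kil_Vstab (l : n →ₗ[ℝ] n →ₗ[ℝ] n) (hanti : ∀ x : n, l x x = 0)
    (Z : Submodule ℝ n) (hZ : ∀ x : n, x ∈ Z ↔ ∀ y : n, l x y = 0)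
    (N₁ N₂ : Submodule ℝ n)
    (hid1 : ∀ x ∈ N₁, ∀ y : n, l x y ∈ N₁) (hid2 : ∀ x ∈ N₂, ∀ y : n, l x y ∈ N₂)
    (horth : ∀ x ∈ N₁, ∀ y ∈ N₂, ⟪x, y⟫ = 0) (hsup : N₁ ⊔ N₂ = ⊤)
    (v : n) (hv : v ∈ Zᗮ) (a b : n) (ha : a ∈ N₁) (hb : b ∈ N₂) (hab : a + b = v) :
    a ∈ Zᗮ := by
  intro u hu
  obtain ⟨u₁, hu₁, u₂, hu₂, huu⟩ := Submodule.mem_sup.mp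
    (by rw [hsup]; exact Submodule.mem_top : u ∈ N₁ ⊔ N₂)
  obtain ⟨hu₁Z, hu₂Z⟩ := kil_Zstab l hanti Z hZ N₁ N₂ hid1 hid2 horth u hu
    u₁ u₂ hu₁ hu₂ huu
  have h2 : ⟪u₂, a⟫ = 0 := by rw [real_inner_comm]; exact horth a ha u₂ hu₂
  have h1 : ⟪u₁, a⟫ = 0 := by
    have haa : a = v - b := by rw [← hab]; abel
    rw [haa, inner_sub_right, hv u₁ hu₁Z, horth u₁ hu₁ b hb, sub_zero]
  rw [← huu, inner_add_left, h1, h2, add_zero]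

/-- The `Z` and `Zᗮ` components of an element of the ideal `N₁` lie in `N₁`. -/
lemma kil_split (l : n →ₗ[ℝ] n →ₗ[ℝ] n) (hanti : ∀ x : n, l x x = 0)
    (Z : Submodule ℝ n) (hZ : ∀ x : n, x ∈ Z ↔ ∀ y : n, l x y = 0)
    (N₁ N₂ : Submodule ℝ n)
    (hid1 : ∀ x ∈ N₁, ∀ y : n, l x y ∈ N₁) (hid2 : ∀ x ∈ N₂, ∀ y : n, l x y ∈ N₂)
    (horth : ∀ x ∈ N₁, ∀ y ∈ N₂, ⟪x, y⟫ = 0) (hsup : N₁ ⊔ N₂ = ⊤)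
    (a : n) (ha : a ∈ N₁) (z v : n) (hz : z ∈ Z) (hv : v ∈ Zᗮ) (hzv : z + v = a) :
    z ∈ N₁ ∧ v ∈ N₁ := by
  have horth' : ∀ x ∈ N₂, ∀ y ∈ N₁, ⟪x, y⟫ = 0 := fun x hx y hy => by
    rw [real_inner_comm]; exact horth y hy x hx
  have hsup' : N₂ ⊔ N₁ = ⊤ := by rwa [sup_comm]
  obtain ⟨z₁, hz₁, z₂, hz₂, hzz⟩ := Submodule.mem_sup.mp
    (by rw [hsup]; exact Submodule.mem_top : z ∈ N₁ ⊔ N₂)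
  obtain ⟨v₁, hv₁, v₂, hv₂, hvv⟩ := Submodule.mem_sup.mp
    (by rw [hsup]; exact Submodule.mem_top : v ∈ N₁ ⊔ N₂)
  obtain ⟨hz₁Z, hz₂Z⟩ := kil_Zstab l hanti Z hZ N₁ N₂ hid1 hid2 horth z hz
    z₁ z₂ hz₁ hz₂ hzz
  have hv₁V : v₁ ∈ Zᗮ := kil_Vstab l hanti Z hZ N₁ N₂ hid1 hid2 horth hsup
    v hv v₁ v₂ hv₁ hv₂ hvv
  have hv₂V : v₂ ∈ Zᗮ := kil_Vstab l hanti Z hZ N₂ N₁ hid2 hid1 horth' hsup'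
    v hv v₂ v₁ hv₂ hv₁ (by rw [add_comm]; exact hvv)
  -- the N₂-part of a vanishes
  have hmem1 : z₁ + v₁ ∈ N₁ := N₁.add_mem hz₁ hv₁
  have hmem2 : z₂ + v₂ ∈ N₂ := N₂.add_mem hz₂ hv₂
  have hsum : (z₁ + v₁) + (z₂ + v₂) = a := by rw [← hzv, ← hzz, ← hvv]; abel
  have hmem2' : z₂ + v₂ ∈ N₁ := by
    have : z₂ + v₂ = a - (z₁ + v₁) := by rw [← hsum]; abel
    rw [this]; exact N₁.sub_mem ha hmem1
  have h0 : z₂ + v₂ = 0 := inner_self_eq_zero.mp (horth _ hmem2' _ hmem2)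
  have hz₂0 : z₂ = 0 := by
    have hz₂V : z₂ ∈ Zᗮ := by
      have : z₂ = -v₂ := eq_neg_of_add_eq_zero_left h0
      rw [this]; exact Zᗮ.neg_mem hv₂V
    exact kil_ZV Z z₂ hz₂Z hz₂V
  have hv₂0 : v₂ = 0 := by rw [hz₂0, zero_add] at h0; exact h0
  constructor
  · rw [← hzz, hz₂0, add_zero]; exact hz₁
  · rw [← hvv, hv₂0, add_zero]; exact hv₁

/-- `A2` preserves `Zᗮ ⊓ N₁`. -/
lemma kil_A2inv (l : n →ₗ[ℝ] n →ₗ[ℝ] n) (hanti : ∀ x : n, l x x = 0)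
    (Z : Submodule ℝ n) (hZ : ∀ x : n, x ∈ Z ↔ ∀ y : n, l x y = 0)
    (N₁ N₂ : Submodule ℝ n)
    (hid1 : ∀ x ∈ N₁, ∀ y : n, l x y ∈ N₁) (hid2 : ∀ x ∈ N₂, ∀ y : n, l x y ∈ N₂)
    (horth : ∀ x ∈ N₁, ∀ y ∈ N₂, ⟪x, y⟫ = 0) (hsup : N₁ ⊔ N₂ = ⊤)
    (A2 : n →ₗ[ℝ] n) (hA2V : ∀ x ∈ Zᗮ, A2 x ∈ Zᗮ)
    (hkill2 : ∀ x ∈ Zᗮ, ∀ y ∈ Zᗮ, (3 : ℝ) • l (A2 x) y = (3 : ℝ) • l x (A2 y))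
    (x : n) (hxV : x ∈ Zᗮ) (hx1 : x ∈ N₁) : A2 x ∈ N₁ := by
  have horth' : ∀ x ∈ N₂, ∀ y ∈ N₁, ⟪x, y⟫ = 0 := fun x hx y hy => by
    rw [real_inner_comm]; exact horth y hy x hx
  have hsup' : N₂ ⊔ N₁ = ⊤ := by rwa [sup_comm]
  have hAxV : A2 x ∈ Zᗮ := hA2V x hxV
  obtain ⟨b₁, hb₁, b₂, hb₂, hbb⟩ := Submodule.mem_sup.mp
    (by rw [hsup]; exact Submodule.mem_top : A2 x ∈ N₁ ⊔ N₂)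
  have hb₂V : b₂ ∈ Zᗮ := kil_Vstab l hanti Z hZ N₂ N₁ hid2 hid1 horth' hsup'
    (A2 x) hAxV b₂ b₁ hb₂ hb₁ (by rw [add_comm]; exact hbb)
  have hb₂Z : b₂ ∈ Z := by
    refine (hZ b₂).2 fun y => ?_
    have hZc : IsCompl Z Zᗮ := Submodule.isCompl_orthogonal_of_hasOrthogonalProjection
    obtain ⟨yz, hyz, yv, hyv, hyy⟩ := Submodule.mem_sup.mp
      (by rw [hZc.sup_eq_top]; exact Submodule.mem_top : y ∈ Z ⊔ Zᗮ)
    have h1 : l b₂ yz = 0 := kil_lZr l hanti Z hZ b₂ yz hyz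
    have h2 : l b₂ yv = 0 := by
      have hcan : l (A2 x) yv = l x (A2 yv) :=
        smul_right_injective n (by norm_num : (3 : ℝ) ≠ 0) (hkill2 x hxV yv hyv)
      have hb2eq : b₂ = A2 x - b₁ := by rw [← hbb]; abel
      have heq : l b₂ yv = l x (A2 yv) - l b₁ yv := by
        rw [hb2eq, map_sub, LinearMap.sub_apply, hcan]
      have hmem1 : l b₂ yv ∈ N₁ := by
        rw [heq]; exact N₁.sub_mem (hid1 x hx1 _) (hid1 b₁ hb₁ _)
      have hmem2 : l b₂ yv ∈ N₂ := hid2 b₂ hb₂ _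
      exact inner_self_eq_zero.mp (horth _ hmem1 _ hmem2)
    rw [← hyy, map_add, h1, h2, add_zero]
  have hb₂0 : b₂ = 0 := kil_ZV Z b₂ hb₂Z hb₂V
  rw [← hbb, hb₂0, add_zero]; exact hb₁

/-- `A0` preserves the ideal `N₁`. -/
lemma kil_A0inv (l : n →ₗ[ℝ] n →ₗ[ℝ] n) (hanti : ∀ x : n, l x x = 0)
    (Z : Submodule ℝ n) (hZ : ∀ x : n, x ∈ Z ↔ ∀ y : n, l x y = 0)
    (j : n → n →ₗ[ℝ] n) (hj : ∀ z x y : n, ⟪j z x, y⟫ = ⟪z, l x y⟫)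
    (hjinj : ∀ z ∈ Z, j z = 0 → z = 0)
    (N₁ N₂ : Submodule ℝ n)
    (hid1 : ∀ x ∈ N₁, ∀ y : n, l x y ∈ N₁) (hid2 : ∀ x ∈ N₂, ∀ y : n, l x y ∈ N₂)
    (horth : ∀ x ∈ N₁, ∀ y ∈ N₂, ⟪x, y⟫ = 0) (hsup : N₁ ⊔ N₂ = ⊤)
    (A2 A0 : n →ₗ[ℝ] n) (hA2V : ∀ x ∈ Zᗮ, A2 x ∈ Zᗮ)
    (hA0skew : ∀ a b : n, ⟪A0 a, b⟫ = -⟪a, A0 b⟫)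
    (hA0V : ∀ x ∈ Zᗮ, A0 x = 0) (hA0Z : ∀ z ∈ Z, A0 z ∈ Z)
    (hkill : ∀ x ∈ Zᗮ, ∀ y ∈ Zᗮ,
      A0 (l x y) = (3 : ℝ) • l (A2 x) y ∧
      (3 : ℝ) • l (A2 x) y = (3 : ℝ) • l x (A2 y))
    (a : n) (ha : a ∈ N₁) : A0 a ∈ N₁ := by
  have horth' : ∀ x ∈ N₂, ∀ y ∈ N₁, ⟪x, y⟫ = 0 := fun x hx y hy => by
    rw [real_inner_comm]; exact horth y hy x hx
  have hsup' : N₂ ⊔ N₁ = ⊤ := by rwa [sup_comm]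
  have hZc : IsCompl Z Zᗮ := Submodule.isCompl_orthogonal_of_hasOrthogonalProjection
  obtain ⟨z, hz, v, hv, hzv⟩ := Submodule.mem_sup.mp
    (by rw [hZc.sup_eq_top]; exact Submodule.mem_top : a ∈ Z ⊔ Zᗮ)
  obtain ⟨hzN, hvN⟩ := kil_split l hanti Z hZ N₁ N₂ hid1 hid2 horth hsup a ha z v hz hv hzv
  have hA0a : A0 a = A0 z := by
    rw [← hzv, map_add, hA0V v hv, add_zero]
  have hA0zZ : A0 z ∈ Z := hA0Z z hz
  obtain ⟨c₁, hc₁, c₂, hc₂, hcc⟩ := Submodule.mem_sup.mp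
    (by rw [hsup]; exact Submodule.mem_top : A0 z ∈ N₁ ⊔ N₂)
  obtain ⟨hc₁Z, hc₂Z⟩ := kil_Zstab l hanti Z hZ N₁ N₂ hid1 hid2 horth (A0 z) hA0zZ
    c₁ c₂ hc₁ hc₂ hcc
  have hinner : ∀ x y : n, ⟪c₂, l x y⟫ = 0 := by
    intro x y
    obtain ⟨x₁, hx₁, x₂, hx₂, hxx⟩ := Submodule.mem_sup.mp
      (by rw [hsup]; exact Submodule.mem_top : x ∈ N₁ ⊔ N₂)
    obtain ⟨y₁, hy₁, y₂, hy₂, hyy⟩ := Submodule.mem_sup.mp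
      (by rw [hsup]; exact Submodule.mem_top : y ∈ N₁ ⊔ N₂)
    have hlxy : l x y = l x₁ y₁ + l x₂ y₂ := by
      rw [← hxx, ← hyy]
      simp only [map_add, LinearMap.add_apply]
      rw [kil_cross l hanti N₁ N₂ hid1 hid2 horth x₁ y₂ hx₁ hy₂]
      rw [kil_cross l hanti N₂ N₁ hid2 hid1 horth' x₂ y₁ hx₂ hy₁]
      abel
    have hterm1 : ⟪c₂, l x₁ y₁⟫ = 0 := horth' c₂ hc₂ _ (hid1 x₁ hx₁ y₁)
    have hterm2 : ⟪c₂, l x₂ y₂⟫ = 0 := by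
      obtain ⟨xz, hxz, xv, hxv, hxzv⟩ := Submodule.mem_sup.mp
        (by rw [hZc.sup_eq_top]; exact Submodule.mem_top : x₂ ∈ Z ⊔ Zᗮ)
      obtain ⟨yz, hyz, yv, hyv, hyzv⟩ := Submodule.mem_sup.mp
        (by rw [hZc.sup_eq_top]; exact Submodule.mem_top : y₂ ∈ Z ⊔ Zᗮ)
      obtain ⟨hxzN, hxvN⟩ := kil_split l hanti Z hZ N₂ N₁ hid2 hid1 horth' hsup'
        x₂ hx₂ xz xv hxz hxv hxzv
      obtain ⟨hyzN, hyvN⟩ := kil_split l hanti Z hZ N₂ N₁ hid2 hid1 horth' hsup'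
        y₂ hy₂ yz yv hyz hyv hyzv
      have hl22 : l x₂ y₂ = l xv yv := by
        rw [← hxzv, ← hyzv]
        simp only [map_add, LinearMap.add_apply]
        rw [(hZ xz).1 hxz yz, (hZ xz).1 hxz yv]
        rw [kil_lZr l hanti Z hZ xv yz hyz]
        abel
      rw [hl22]
      have hc₂eq : c₂ = A0 z - c₁ := by rw [← hcc]; abel
      rw [hc₂eq, inner_sub_left]
      have h1 : ⟪c₁, l xv yv⟫ = 0 := horth c₁ hc₁ _ (hid2 xv hxvN yv)
      have h0 : ⟪A0 z, l xv yv⟫ = 0 := by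
        rw [hA0skew]
        have hw : A0 (l xv yv) = (3 : ℝ) • l (A2 xv) yv := (hkill xv hxv yv hyv).1
        rw [hw, real_inner_smul_right]
        have hA2xvN : A2 xv ∈ N₂ := kil_A2inv l hanti Z hZ N₂ N₁ hid2 hid1 horth' hsup'
          A2 hA2V (fun x hx y hy => (hkill x hx y hy).2) xv hxv hxvN
        rw [horth z hzN _ (hid2 _ hA2xvN yv)]
        simp
      rw [h0, h1, sub_zero]
    rw [hlxy, inner_add_right, hterm1, hterm2, add_zero]
  have hjc₂ : j c₂ = 0 := by
    apply LinearMap.ext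
    intro x
    refine ext_inner_right ℝ fun y => ?_
    rw [hj]
    simp [hinner x y]
  have hc₂0 : c₂ = 0 := hjinj c₂ hc₂Z hjc₂
  rw [hA0a, ← hcc, hc₂0, add_zero]
  exact hc₁

end Aux

/-- Every Killing 2-form on a reducible 2-step nilpotent metric Lie algebra
`n = n' ⊕ n''` (orthogonal direct sum of ideals, `j` injective) decomposes as `α = α' + α''`
where `α'` and `α''` are Killing 2-forms on `n'` and `n''` respectively. -/
theorem killing_stmt11 {n : Type*} [NormedAddCommGroup n] [InnerProductSpace ℝ n]
    [FiniteDimensional ℝ n]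
    (l : n →ₗ[ℝ] n →ₗ[ℝ] n) (hanti : ∀ x : n, l x x = 0)
    (Z : Submodule ℝ n) (hZ : ∀ x : n, x ∈ Z ↔ ∀ y : n, l x y = 0)
    (h2 : ∀ x y : n, l x y ∈ Z) (hna : ∃ x : n, ∃ y : n, l x y ≠ 0)
    (j : n → n →ₗ[ℝ] n) (hj : ∀ z x y : n, ⟪j z x, y⟫ = ⟪z, l x y⟫)
    (hjinj : ∀ z ∈ Z, j z = 0 → z = 0)
    -- the orthogonal decomposition into ideals n = N' ⊕ N''
    (N' N'' : Submodule ℝ n)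
    (hN'id : ∀ x ∈ N', ∀ y : n, l x y ∈ N') (hN''id : ∀ x ∈ N'', ∀ y : n, l x y ∈ N'')
    (horth : ∀ x ∈ N', ∀ y ∈ N'', ⟪x, y⟫ = 0) (hsup : N' ⊔ N'' = ⊤)
    -- a Killing 2-form α = α₂ + α₀ on n
    (A2 A0 : n →ₗ[ℝ] n)
    (hA2skew : ∀ a b : n, ⟪A2 a, b⟫ = -⟪a, A2 b⟫)
    (hA2V : ∀ x ∈ Zᗮ, A2 x ∈ Zᗮ) (hA2Z : ∀ z ∈ Z, A2 z = 0)
    (hA0skew : ∀ a b : n, ⟪A0 a, b⟫ = -⟪a, A0 b⟫)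
    (hA0V : ∀ x ∈ Zᗮ, A0 x = 0) (hA0Z : ∀ z ∈ Z, A0 z ∈ Z)
    (hkill : ∀ x ∈ Zᗮ, ∀ y ∈ Zᗮ,
      A0 (l x y) = (3 : ℝ) • l (A2 x) y ∧
      (3 : ℝ) • l (A2 x) y = (3 : ℝ) • l x (A2 y)) :
    ∃ A2' A2'' A0' A0'' : n →ₗ[ℝ] n,
      A2 = A2' + A2'' ∧ A0 = A0' + A0'' ∧
      -- α' is supported on N', α'' on N''
      (∀ a : n, A2' a ∈ N') ∧ (∀ a ∈ N'', A2' a = 0) ∧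
      (∀ a : n, A0' a ∈ N') ∧ (∀ a ∈ N'', A0' a = 0) ∧
      (∀ a : n, A2'' a ∈ N'') ∧ (∀ a ∈ N', A2'' a = 0) ∧
      (∀ a : n, A0'' a ∈ N'') ∧ (∀ a ∈ N', A0'' a = 0) ∧
      -- α' is a Killing 2-form on n'
      (∀ x ∈ Zᗮ ⊓ N', ∀ y ∈ Zᗮ ⊓ N',
        A0' (l x y) = (3 : ℝ) • l (A2' x) y ∧
        (3 : ℝ) • l (A2' x) y = (3 : ℝ) • l x (A2' y)) ∧
      -- α'' is a Killing 2-form on n''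
      (∀ x ∈ Zᗮ ⊓ N'', ∀ y ∈ Zᗮ ⊓ N'',
        A0'' (l x y) = (3 : ℝ) • l (A2'' x) y ∧
        (3 : ℝ) • l (A2'' x) y = (3 : ℝ) • l x (A2'' y)) := by
  -- symmetric versions of the hypotheses
  have horth'' : ∀ x ∈ N'', ∀ y ∈ N', ⟪x, y⟫ = 0 := fun x hx y hy => by
    rw [real_inner_comm]; exact horth y hy x hx
  have hsup'' : N'' ⊔ N' = ⊤ := by rwa [sup_comm]
  have hkill2 : ∀ x ∈ Zᗮ, ∀ y ∈ Zᗮ, (3 : ℝ) • l (A2 x) y = (3 : ℝ) • l x (A2 y) :=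
    fun x hx y hy => (hkill x hx y hy).2
  have hdisj : Disjoint N' N'' := Submodule.disjoint_def.mpr
    (fun x hx hx' => inner_self_eq_zero.mp (horth x hx x hx'))
  have hcompl : IsCompl N' N'' := ⟨hdisj, codisjoint_iff.mpr hsup⟩
  have hZc : IsCompl Z Zᗮ := Submodule.isCompl_orthogonal_of_hasOrthogonalProjection
  set P1 : n →ₗ[ℝ] n := N'.subtype ∘ₗ N'.linearProjOfIsCompl N'' hcompl with hP1
  set P2 : n →ₗ[ℝ] n := N''.subtype ∘ₗ N''.linearProjOfIsCompl N' hcompl.symm with hP2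
  have hP1mem : ∀ x : n, P1 x ∈ N' := fun x => (N'.linearProjOfIsCompl N'' hcompl x).2
  have hP2mem : ∀ x : n, P2 x ∈ N'' := fun x => (N''.linearProjOfIsCompl N' hcompl.symm x).2
  have hPadd : ∀ x : n, P1 x + P2 x = x := fun x =>
    Submodule.projection_add_projection_eq_self hcompl x
  have hP1left : ∀ x ∈ N', P1 x = x := fun x hx => by
    exact congrArg Subtype.val
      (Submodule.projectionOnto_apply_left hcompl ⟨x, hx⟩)
  have hP2left : ∀ x ∈ N'', P2 x = x := fun x hx => by
    exact congrArg Subtype.val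
      (Submodule.projectionOnto_apply_left hcompl.symm ⟨x, hx⟩)
  have hP1right : ∀ x ∈ N'', P1 x = 0 := fun x hx => by
    exact congrArg Subtype.val (Submodule.projectionOnto_apply_of_mem_right hcompl hx)
  have hP2right : ∀ x ∈ N', P2 x = 0 := fun x hx => by
    exact congrArg Subtype.val (Submodule.projectionOnto_apply_of_mem_right hcompl.symm hx)
  -- full invariance of A2 and A0
  have hA2N' : ∀ a ∈ N', A2 a ∈ N' := by
    intro a ha
    obtain ⟨z, hz, v, hv, hzv⟩ := Submodule.mem_sup.mp
      (by rw [hZc.sup_eq_top]; exact Submodule.mem_top : a ∈ Z ⊔ Zᗮ)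
    obtain ⟨hzN, hvN⟩ := kil_split l hanti Z hZ N' N'' hN'id hN''id horth hsup a ha z v hz hv hzv
    rw [← hzv, map_add, hA2Z z hz, zero_add]
    exact kil_A2inv l hanti Z hZ N' N'' hN'id hN''id horth hsup A2 hA2V hkill2 v hv hvN
  have hA2N'' : ∀ a ∈ N'', A2 a ∈ N'' := by
    intro a ha
    obtain ⟨z, hz, v, hv, hzv⟩ := Submodule.mem_sup.mp
      (by rw [hZc.sup_eq_top]; exact Submodule.mem_top : a ∈ Z ⊔ Zᗮ)
    obtain ⟨hzN, hvN⟩ := kil_split l hanti Z hZ N'' N' hN''id hN'id horth'' hsup'' a ha z v hz hv hzv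
    rw [← hzv, map_add, hA2Z z hz, zero_add]
    exact kil_A2inv l hanti Z hZ N'' N' hN''id hN'id horth'' hsup'' A2 hA2V hkill2 v hv hvN
  have hA0N' : ∀ a ∈ N', A0 a ∈ N' := fun a ha =>
    kil_A0inv l hanti Z hZ j hj hjinj N' N'' hN'id hN''id horth hsup A2 A0 hA2V
      hA0skew hA0V hA0Z hkill a ha
  have hA0N'' : ∀ a ∈ N'', A0 a ∈ N'' := fun a ha =>
    kil_A0inv l hanti Z hZ j hj hjinj N'' N' hN''id hN'id horth'' hsup'' A2 A0 hA2V
      hA0skew hA0V hA0Z hkill a ha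
  refine ⟨A2 ∘ₗ P1, A2 ∘ₗ P2, A0 ∘ₗ P1, A0 ∘ₗ P2, ?_, ?_, ?_, ?_, ?_, ?_, ?_, ?_, ?_, ?_, ?_, ?_⟩
  · refine LinearMap.ext fun x => ?_
    show A2 x = A2 (P1 x) + A2 (P2 x)
    rw [← map_add, hPadd]
  · refine LinearMap.ext fun x => ?_
    show A0 x = A0 (P1 x) + A0 (P2 x)
    rw [← map_add, hPadd]
  · exact fun a => hA2N' _ (hP1mem a)
  · exact fun a ha => by rw [LinearMap.comp_apply, hP1right a ha, map_zero]
  · exact fun a => hA0N' _ (hP1mem a)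
  · exact fun a ha => by rw [LinearMap.comp_apply, hP1right a ha, map_zero]
  · exact fun a => hA2N'' _ (hP2mem a)
  · exact fun a ha => by rw [LinearMap.comp_apply, hP2right a ha, map_zero]
  · exact fun a => hA0N'' _ (hP2mem a)
  · exact fun a ha => by rw [LinearMap.comp_apply, hP2right a ha, map_zero]
  · intro x hx y hy
    obtain ⟨hxV, hxN⟩ := Submodule.mem_inf.mp hx
    obtain ⟨hyV, hyN⟩ := Submodule.mem_inf.mp hy
    simp only [LinearMap.comp_apply]
    rw [hP1left x hxN, hP1left y hyN, hP1left _ (hN'id x hxN y)]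
    exact hkill x hxV y hyV
  · intro x hx y hy
    obtain ⟨hxV, hxN⟩ := Submodule.mem_inf.mp hx
    obtain ⟨hyV, hyN⟩ := Submodule.mem_inf.mp hy
    simp only [LinearMap.comp_apply]
    rw [hP2left x hxN, hP2left y hyN, hP2left _ (hN''id x hxN y)]
    exact hkill x hxV y hyV
end

section
/- If α is a Killing 3-form on a 2-step nilpotent metric Lie algebra, then its components α₁ ∈ v* ⊗ Λ²z* and α₃ ∈ Λ³v* both vanish; i.e. α = β + γ with β ∈ Λ²v* ⊗ z* and γ ∈ Λ³z*. -/
open scoped RealInnerProductSpace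

/-- If `α` is a Killing 3-form on a 2-step nilpotent metric Lie algebra
(`y ⌟ ∇_y α = 0` for all `y`), then its components `α₃ ∈ Λ³v*` and `α₁ ∈ v* ⊗ Λ²z*` vanish,
i.e. `α` vanishes whenever all three arguments are in `v` and whenever one argument is in `v`
and two are in `z`. -/
theorem killing_stmt12 {n : Type*} [NormedAddCommGroup n] [InnerProductSpace ℝ n]
    [FiniteDimensional ℝ n]
    (l : n →ₗ[ℝ] n →ₗ[ℝ] n) (hanti : ∀ x : n, l x x = 0)
    (Z : Submodule ℝ n) (hZ : ∀ x : n, x ∈ Z ↔ ∀ y : n, l x y = 0)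
    (h2 : ∀ x y : n, l x y ∈ Z) (hna : ∃ x : n, ∃ y : n, l x y ≠ 0)
    (j : n → n →ₗ[ℝ] n) (hj : ∀ z x y : n, ⟪j z x, y⟫ = ⟪z, l x y⟫)
    -- the Levi-Civita connection, via the Koszul formula
    (nabla : n →ₗ[ℝ] n →ₗ[ℝ] n)
    (hnab : ∀ x y w : n, 2 * ⟪nabla x y, w⟫ = ⟪l x y, w⟫ + ⟪l w x, y⟫ + ⟪l w y, x⟫)
    -- a 3-form α, assumed Killing: y ⌟ ∇_y α = 0
    (α : AlternatingMap ℝ n ℝ (Fin 3))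
    (hkill : ∀ y a b : n,
      α ![nabla y y, a, b] + α ![y, nabla y a, b] + α ![y, a, nabla y b] = 0) :
    (∀ x ∈ Zᗮ, ∀ y ∈ Zᗮ, ∀ w ∈ Zᗮ, α ![x, y, w] = 0) ∧
    (∀ x ∈ Zᗮ, ∀ z ∈ Z, ∀ z' ∈ Z, α ![x, z, z'] = 0) := by
  classical
  -- update lemmas for `![a,b,c]`
  have hu0 : ∀ a b c x : n, Function.update ![a, b, c] 0 x = ![x, b, c] := by
    intro a b c x; ext i; fin_cases i <;> simp
  have hu1 : ∀ a b c x : n, Function.update ![a, b, c] 1 x = ![a, x, c] := by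
    intro a b c x; ext i; fin_cases i <;> simp
  have hu2 : ∀ a b c x : n, Function.update ![a, b, c] 2 x = ![a, b, x] := by
    intro a b c x; ext i; fin_cases i <;> simp
  -- multilinearity in each slot
  have e0 : ∀ a a' b c : n, α ![a + a', b, c] = α ![a, b, c] + α ![a', b, c] := by
    intro a a' b c; simpa [hu0] using α.map_update_add ![a, b, c] 0 a a'
  have e1 : ∀ a b b' c : n, α ![a, b + b', c] = α ![a, b, c] + α ![a, b', c] := by
    intro a b b' c; simpa [hu1] using α.map_update_add ![a, b, c] 1 b b'
  have e2 : ∀ a b c c' : n, α ![a, b, c + c'] = α ![a, b, c] + α ![a, b, c'] := by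
    intro a b c c'; simpa [hu2] using α.map_update_add ![a, b, c] 2 c c'
  have s0 : ∀ (r : ℝ) (a b c : n), α ![r • a, b, c] = r * α ![a, b, c] := by
    intro r a b c; simpa [hu0] using α.map_update_smul ![a, b, c] 0 r a
  have s1 : ∀ (r : ℝ) (a b c : n), α ![a, r • b, c] = r * α ![a, b, c] := by
    intro r a b c; simpa [hu1] using α.map_update_smul ![a, b, c] 1 r b
  have s2 : ∀ (r : ℝ) (a b c : n), α ![a, b, r • c] = r * α ![a, b, c] := by
    intro r a b c; simpa [hu2] using α.map_update_smul ![a, b, c] 2 r c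
  have z0 : ∀ b c : n, α ![0, b, c] = 0 := by
    intro b c; simpa using s0 0 0 b c
  have z1 : ∀ a c : n, α ![a, 0, c] = 0 := by
    intro a c; simpa using s1 0 a 0 c
  have z2 : ∀ a b : n, α ![a, b, 0] = 0 := by
    intro a b; simpa using s2 0 a b 0
  have n0 : ∀ a b c : n, α ![-a, b, c] = -α ![a, b, c] := by
    intro a b c
    have := s0 (-1) a b c; simpa using this
  -- diagonal vanishing
  have d01 : ∀ a c : n, α ![a, a, c] = 0 := fun a c =>
    α.map_eq_zero_of_eq ![a, a, c] (by simp) (by decide : (0 : Fin 3) ≠ 1)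
  have d12 : ∀ a b : n, α ![a, b, b] = 0 := fun a b =>
    α.map_eq_zero_of_eq ![a, b, b] (by simp) (by decide : (1 : Fin 3) ≠ 2)
  have d02 : ∀ a b : n, α ![a, b, a] = 0 := fun a b =>
    α.map_eq_zero_of_eq ![a, b, a] (by simp) (by decide : (0 : Fin 3) ≠ 2)
  -- swaps
  have sw01 : ∀ a b c : n, α ![b, a, c] = -α ![a, b, c] := by
    intro a b c
    have h := d01 (a + b) c
    rw [e0, e1, e1] at h
    rw [d01, d01] at h
    linarith
  have sw12 : ∀ a b c : n, α ![a, c, b] = -α ![a, b, c] := by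
    intro a b c
    have h := d12 a (b + c)
    rw [e1, e2, e2] at h
    rw [d12, d12] at h
    linarith
  have sw02 : ∀ a b c : n, α ![c, b, a] = -α ![a, b, c] := by
    intro a b c
    have h := d02 (a + c) b
    rw [e0, e2, e2] at h
    rw [d02, d02] at h
    linarith
  -- bracket facts
  have lskew : ∀ x y : n, l y x = -l x y := by
    intro x y
    have h := hanti (x + y)
    simp only [map_add, LinearMap.add_apply, hanti] at h
    have h' : l x y + l y x = 0 := by
      rw [← h]; abel
    exact eq_neg_of_add_eq_zero_right h'
  have hZ1 : ∀ z ∈ Z, ∀ y : n, l z y = 0 := fun z hz y => (hZ z).1 hz y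
  have hZ2 : ∀ z ∈ Z, ∀ y : n, l y z = 0 := by
    intro z hz y; rw [lskew z y, hZ1 z hz y, neg_zero]
  -- inner product facts
  have ipz : ∀ v ∈ Zᗮ, ∀ z ∈ Z, ⟪z, v⟫ = 0 := by
    intro v hv z hz; exact (Submodule.mem_orthogonal Z v).1 hv z hz
  -- j facts
  have jadd : ∀ z w x : n, j (z + w) x = j z x + j w x := by
    intro z w x
    apply ext_inner_right ℝ
    intro y
    rw [hj, inner_add_left, inner_add_left, hj, hj]
  have jZ : ∀ (z : n), ∀ x ∈ Z, j z x = 0 := by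
    intro z x hx
    apply ext_inner_right ℝ
    intro y
    rw [hj, hZ1 x hx y, inner_zero_right, inner_zero_left]
  have jperp : ∀ z x : n, j z x ∈ Zᗮ := by
    intro z x
    rw [Submodule.mem_orthogonal]
    intro u hu
    rw [real_inner_comm, hj, hZ2 u hu x, inner_zero_right]
  -- nabla facts
  have nvz : ∀ (x : n), ∀ z ∈ Z, nabla x z = -(1 / 2 : ℝ) • j z x := by
    intro x z hz
    apply ext_inner_right ℝ
    intro w
    have h := hnab x z w
    rw [hZ2 z hz x, hZ2 z hz w, inner_zero_left, inner_zero_left] at h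
    have hkey : ⟪l w x, z⟫ = -⟪j z x, w⟫ := by
      rw [real_inner_comm, lskew x w, inner_neg_right, hj]
    rw [real_inner_smul_left]
    linarith [h, hkey]
  have nzv : ∀ z ∈ Z, ∀ x : n, nabla z x = -(1 / 2 : ℝ) • j z x := by
    intro z hz x
    apply ext_inner_right ℝ
    intro w
    have h := hnab z x w
    rw [hZ1 z hz x, hZ2 z hz w, inner_zero_left, inner_zero_left] at h
    have hkey : ⟪l w x, z⟫ = -⟪j z x, w⟫ := by
      rw [real_inner_comm, lskew x w, inner_neg_right, hj]
    rw [real_inner_smul_left]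
    linarith [h, hkey]
  have nvv : ∀ x ∈ Zᗮ, ∀ y ∈ Zᗮ, nabla x y = (1 / 2 : ℝ) • l x y := by
    intro x hx y hy
    apply ext_inner_right ℝ
    intro w
    have h := hnab x y w
    rw [ipz y hy (l w x) (h2 w x), ipz x hx (l w y) (h2 w y)] at h
    rw [real_inner_smul_left]
    linarith [h]
  have nzz : ∀ z ∈ Z, ∀ z' ∈ Z, nabla z z' = 0 := by
    intro z hz z' hz'
    rw [nzv z hz z', jZ z z' hz', smul_zero]
  have nxx : ∀ x ∈ Zᗮ, nabla x x = 0 := by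
    intro x hx
    rw [nvv x hx x hx, hanti, smul_zero]
  have nmix : ∀ x ∈ Zᗮ, ∀ z ∈ Z, nabla (x + z) (x + z) = -j z x := by
    intro x hx z hz
    have h : nabla (x + z) (x + z)
        = nabla x x + nabla x z + nabla z x + nabla z z := by
      simp only [map_add, LinearMap.add_apply]; abel
    rw [h, nxx x hx, nzz z hz z hz, nvz x z hz, nzv z hz x]
    module
  -- relation B : α(jzx, z, z') = 0
  have relB : ∀ (x : n), ∀ z ∈ Z, ∀ z' ∈ Z, α ![j z x, z, z'] = 0 := by
    intro x z hz z' hz'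
    have h := hkill z x z'
    rw [nzz z hz z hz, nzz z hz z' hz', nzv z hz x, z0, z2, s1] at h
    have h' : α ![z, j z x, z'] = 0 := by linarith
    rw [sw01]; linarith [h']
  -- polarized
  have relB' : ∀ (x : n), ∀ z ∈ Z, ∀ w ∈ Z, ∀ z' ∈ Z,
      α ![j z x, w, z'] = -α ![j w x, z, z'] := by
    intro x z hz w hw z' hz'
    have h := relB x (z + w) (Z.add_mem hz hw) z' hz'
    rw [jadd, e0, e1, e1, relB x z hz z' hz', relB x w hw z' hz'] at h
    linarith
  -- relation A
  have relA : ∀ x ∈ Zᗮ, ∀ z ∈ Z, ∀ z' ∈ Z, ∀ z'' ∈ Z,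
      2 * α ![j z x, z', z''] + α ![z, j z' x, z''] + α ![z, z', j z'' x] = 0 := by
    intro x hx z hz z' hz' z'' hz''
    have h1 := hkill (x + z) z' z''
    have h2' := hkill x z' z''
    have ea : nabla (x + z) z' = -(1 / 2 : ℝ) • j z' x := by
      have : nabla (x + z) z' = nabla x z' + nabla z z' := by
        simp only [map_add, LinearMap.add_apply]
      rw [this, nvz x z' hz', nzz z hz z' hz', add_zero]
    have eb : nabla (x + z) z'' = -(1 / 2 : ℝ) • j z'' x := by
      have : nabla (x + z) z'' = nabla x z'' + nabla z z'' := by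
        simp only [map_add, LinearMap.add_apply]
      rw [this, nvz x z'' hz'', nzz z hz z'' hz'', add_zero]
    rw [nmix x hx z hz, ea, eb, n0, e0, e0, s1, s1, s2, s2] at h1
    rw [nxx x hx, nvz x z' hz', nvz x z'' hz'', z0, s1, s2] at h2'
    linarith
  -- conclude α(jzx, z', z'') = 0
  have genB : ∀ x ∈ Zᗮ, ∀ z ∈ Z, ∀ z' ∈ Z, ∀ z'' ∈ Z, α ![j z x, z', z''] = 0 := by
    intro x hx z hz z' hz' z'' hz''
    have hA := relA x hx z hz z' hz' z'' hz''
    have t1 : α ![z, j z' x, z''] = α ![j z x, z', z''] := by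
      rw [show α ![z, j z' x, z''] = -α ![j z' x, z, z''] from by rw [sw01],
        relB' x z' hz' z hz z'' hz'']
      ring_nf
    have t2 : α ![z, z', j z'' x] = α ![j z x, z', z''] := by
      have a1 : α ![z, z', j z'' x] = α ![j z'' x, z, z'] := by
        rw [sw12 z (j z'' x) z', sw01 (j z'' x) z z']; ring
      rw [a1, relB' x z'' hz'' z hz z' hz', sw12]
      ring
    rw [t1, t2] at hA
    linarith
  -- span of the image of j is Zᗮ
  set G : Set n := {v | ∃ z ∈ Z, ∃ x ∈ Zᗮ, v = j z x} with hG
  set S : Submodule ℝ n := Submodule.span ℝ G with hS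
  have hSperp : Sᗮ ≤ Z := by
    intro y hy
    rw [hZ]
    intro w
    obtain ⟨b, hb, a, ha, rfl⟩ := Z.exists_add_mem_mem_orthogonal w
    have key : ∀ x ∈ Zᗮ, l x y = 0 := by
      intro x hx
      have h0 : ⟪l x y, l x y⟫ = 0 := by
        have hmem : j (l x y) x ∈ S := Submodule.subset_span ⟨l x y, h2 x y, x, hx, rfl⟩
        have := (Submodule.mem_orthogonal S y).1 hy _ hmem
        rw [hj] at this
        exact this
      exact inner_self_eq_zero.1 h0
    have hsplit : l y (b + a) = l y b + l y a := by simp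
    rw [hsplit, hZ2 b hb y, lskew a y, key a ha, neg_zero, add_zero]
  have hZS : Zᗮ ≤ S := by
    have h1 := Submodule.orthogonal_le hSperp
    rwa [Submodule.orthogonal_orthogonal] at h1
  -- first part of the statement : α₁ = 0
  have part1 : ∀ x ∈ Zᗮ, ∀ z ∈ Z, ∀ z' ∈ Z, α ![x, z, z'] = 0 := by
    intro x hx
    have hxS : x ∈ S := hZS hx
    refine Submodule.span_induction
      (p := fun v _ => ∀ z ∈ Z, ∀ z' ∈ Z, α ![v, z, z'] = 0) ?_ ?_ ?_ ?_ hxS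
    · rintro v ⟨z, hz, x', hx', rfl⟩ w hw w' hw'
      exact genB x' hx' z hz w hw w' hw'
    · intro w hw w' hw'; exact z0 w w'
    · intro a b _ _ pa pb w hw w' hw'
      rw [e0, pa w hw w' hw', pb w hw w' hw', add_zero]
    · intro r a _ pa w hw w' hw'
      rw [s0, pa w hw w' hw', mul_zero]
  -- relation C
  have relC : ∀ x ∈ Zᗮ, ∀ x' ∈ Zᗮ, ∀ x'' ∈ Zᗮ, ∀ z ∈ Z,
      2 * α ![j z x, x', x''] + α ![x, j z x', x''] + α ![x, x', j z x''] = 0 := by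
    intro x hx x' hx' x'' hx'' z hz
    have h1 := hkill (x + z) x' x''
    have h2' := hkill x x' x''
    have h3 := hkill z x' x''
    have ea : nabla (x + z) x' = (1 / 2 : ℝ) • l x x' + -(1 / 2 : ℝ) • j z x' := by
      have h : nabla (x + z) x' = nabla x x' + nabla z x' := by
        simp only [map_add, LinearMap.add_apply]
      rw [h, nvv x hx x' hx', nzv z hz x']
    have eb : nabla (x + z) x'' = (1 / 2 : ℝ) • l x x'' + -(1 / 2 : ℝ) • j z x'' := by
      have h : nabla (x + z) x'' = nabla x x'' + nabla z x'' := by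
        simp only [map_add, LinearMap.add_apply]
      rw [h, nvv x hx x'' hx'', nzv z hz x'']
    rw [nmix x hx z hz, ea, eb] at h1
    simp only [e0, e1, e2, s0, s1, s2, n0] at h1
    rw [nxx x hx, nvv x hx x' hx', nvv x hx x'' hx'', z0, s1, s2] at h2'
    rw [nzz z hz z hz, nzv z hz x', nzv z hz x'', z0, s1, s2] at h3
    have p1 : α ![z, l x x', x''] = 0 := by
      have hp := part1 x'' hx'' z hz (l x x') (h2 x x')
      have sa := sw12 z x'' (l x x')
      have sb := sw01 x'' z (l x x')
      linarith
    have p2 : α ![z, x', l x x''] = 0 := by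
      have hp := part1 x' hx' z hz (l x x'') (h2 x x'')
      have sa := sw01 x' z (l x x'')
      linarith
    linarith
  -- conclude α(jzx, x', x'') = 0 on v
  have genC : ∀ z ∈ Z, ∀ x ∈ Zᗮ, ∀ x' ∈ Zᗮ, ∀ x'' ∈ Zᗮ,
      α ![j z x, x', x''] = 0 := by
    intro z hz x hx x' hx' x'' hx''
    have c1 := relC x hx x' hx' x'' hx'' z hz
    have c2 := relC x' hx' x hx x'' hx'' z hz
    have c3 := relC x'' hx'' x' hx' x hx z hz
    rw [sw01 x (j z x') x'', sw01 (j z x) x' x'', sw01 x x' (j z x'')] at c2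
    rw [sw02 x x' (j z x''), sw02 x (j z x') x'', sw02 (j z x) x' x''] at c3
    linarith
  -- second part of the statement : α₃ = 0
  have part2 : ∀ x ∈ Zᗮ, ∀ y ∈ Zᗮ, ∀ w ∈ Zᗮ, α ![x, y, w] = 0 := by
    intro x hx
    have hxS : x ∈ S := hZS hx
    refine Submodule.span_induction
      (p := fun v _ => ∀ y ∈ Zᗮ, ∀ w ∈ Zᗮ, α ![v, y, w] = 0) ?_ ?_ ?_ ?_ hxS
    · rintro v ⟨z, hz, x', hx', rfl⟩ y hy w hw
      exact genC z hz x' hx' y hy w hw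
    · intro y hy w hw; exact z0 y w
    · intro a b _ _ pa pb y hy w hw
      rw [e0, pa y hy w hw, pb y hy w hw, add_zero]
    · intro r a _ pa y hy w hw
      rw [s0, pa y hy w hw, mul_zero]
  exact ⟨part2, part1⟩
end

section
/- A 3-form α = β + γ with β: z → so(v) and γ ∈ Λ³z* on a 2-step nilpotent metric Lie algebra is a Killing 3-form if and only if (i) β(z)j(z') − β(z')j(z) + [j(z), β(z')] = j(γ(z,z')) for all z,z' ∈ z, and (ii) Σ_t j(z_t)x ∧ β(z_t)x = 0 for all x ∈ v, where {z_t} is an orthonormal basis of z. -/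
open scoped RealInnerProductSpace

set_option maxHeartbeats 2000000 in
/-- A 3-form `α = β + γ` (with `β : z → so(v)`, `γ ∈ Λ³z*`) on a 2-step
nilpotent metric Lie algebra is a Killing 3-form if and only if
(i) `β(z) j(z') − β(z') j(z) + [j(z), β(z')] = j(γ(z,z'))` for all `z, z' ∈ z`, and
(ii) `Σ_t j(z_t) x ∧ β(z_t) x = 0` for all `x ∈ v`, where `{z_t}` is an orthonormal basis
of `z`. -/
theorem killing_stmt13 {n : Type*} [NormedAddCommGroup n] [InnerProductSpace ℝ n]
    [FiniteDimensional ℝ n]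
    (l : n →ₗ[ℝ] n →ₗ[ℝ] n) (hanti : ∀ x : n, l x x = 0)
    (Z : Submodule ℝ n) (hZ : ∀ x : n, x ∈ Z ↔ ∀ y : n, l x y = 0)
    (h2 : ∀ x y : n, l x y ∈ Z) (hna : ∃ x : n, ∃ y : n, l x y ≠ 0)
    (j : n → n →ₗ[ℝ] n) (hj : ∀ z x y : n, ⟪j z x, y⟫ = ⟪z, l x y⟫)
    -- the Levi-Civita connection, via the Koszul formula
    (nabla : n →ₗ[ℝ] n →ₗ[ℝ] n)
    (hnab : ∀ x y w : n, 2 * ⟪nabla x y, w⟫ = ⟪l x y, w⟫ + ⟪l w x, y⟫ + ⟪l w y, x⟫)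
    -- an orthonormal basis of the center
    (m : ℕ) (zb : OrthonormalBasis (Fin m) ℝ Z)
    -- β : z → so(v), extended by zero
    (B : n →ₗ[ℝ] n →ₗ[ℝ] n)
    (hBskew : ∀ z ∈ Z, ∀ a b : n, ⟪B z a, b⟫ = -⟪a, B z b⟫)
    (hBV : ∀ z ∈ Z, ∀ x ∈ Zᗮ, B z x ∈ Zᗮ) (hBZ : ∀ z ∈ Z, ∀ w ∈ Z, B z w = 0)
    -- γ ∈ Λ³z*, viewed as a skew bilinear map z × z → z
    (γ : n →ₗ[ℝ] n →ₗ[ℝ] n)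
    (hγZ : ∀ z ∈ Z, ∀ z' ∈ Z, γ z z' ∈ Z) (hγalt : ∀ z : n, γ z z = 0)
    (hγtot : ∀ z ∈ Z, ∀ z' ∈ Z, ∀ z'' ∈ Z, ⟪γ z z', z''⟫ = -⟪γ z z'', z'⟫)
    -- the 3-form α = β + γ
    (α : AlternatingMap ℝ n ℝ (Fin 3))
    (hα3 : ∀ x ∈ Zᗮ, ∀ y ∈ Zᗮ, ∀ w ∈ Zᗮ, α ![x, y, w] = 0)
    (hα1 : ∀ x ∈ Zᗮ, ∀ z ∈ Z, ∀ z' ∈ Z, α ![x, z, z'] = 0)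
    (hα2 : ∀ x ∈ Zᗮ, ∀ y ∈ Zᗮ, ∀ z ∈ Z, α ![x, y, z] = ⟪B z x, y⟫)
    (hα0 : ∀ z ∈ Z, ∀ z' ∈ Z, ∀ z'' ∈ Z, α ![z, z', z''] = ⟪γ z z', z''⟫) :
    -- α is Killing (y ⌟ ∇_y α = 0) iff (i) and (ii) hold
    (∀ y a b : n,
        α ![nabla y y, a, b] + α ![y, nabla y a, b] + α ![y, a, nabla y b] = 0) ↔
      ((∀ z ∈ Z, ∀ z' ∈ Z,
          (B z) ∘ₗ (j z') - (B z') ∘ₗ (j z) + ((j z) ∘ₗ (B z') - (B z') ∘ₗ (j z))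
            = j (γ z z')) ∧
        (∀ x ∈ Zᗮ, ∀ a b : n,
          ∑ t : Fin m,
            (⟪j (zb t : n) x, a⟫ * ⟪B (zb t : n) x, b⟫ -
             ⟪j (zb t : n) x, b⟫ * ⟪B (zb t : n) x, a⟫) = 0)) := by
  classical
  -- basic inner product facts
  have hinner0 : ∀ w ∈ Z, ∀ v ∈ Zᗮ, ⟪w, v⟫ = 0 := fun w hw v hv =>
    (Submodule.mem_orthogonal Z v).mp hv w hw
  have hinner0' : ∀ v ∈ Zᗮ, ∀ w ∈ Z, ⟪v, w⟫ = 0 := fun v hv w hw => by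
    rw [real_inner_comm]; exact hinner0 w hw v hv
  -- bracket facts
  have hlanti : ∀ u v : n, l u v = -l v u := by
    intro u v
    have h := hanti (u + v)
    simp only [map_add, LinearMap.add_apply, hanti u, hanti v, zero_add, add_zero] at h
    exact eq_neg_of_add_eq_zero_right h
  have hlz1 : ∀ w ∈ Z, ∀ v : n, l w v = 0 := fun w hw => (hZ w).mp hw
  have hlz2 : ∀ u : n, ∀ z ∈ Z, l u z = 0 := by
    intro u z hz; rw [hlanti, hlz1 z hz, neg_zero]
  -- j facts
  have hjskew : ∀ z x y : n, ⟪j z x, y⟫ = -⟪x, j z y⟫ := by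
    intro z x y
    rw [hj, real_inner_comm (j z y) x, hj, hlanti x y, inner_neg_right]
  have hjV : ∀ z x : n, j z x ∈ Zᗮ := by
    intro z x
    rw [Submodule.mem_orthogonal]
    intro u hu
    rw [real_inner_comm, hj, hlz2 x u hu, inner_zero_right]
  have hjZ0 : ∀ z : n, ∀ w ∈ Z, j z w = 0 := by
    intro z w hw
    apply ext_inner_right ℝ
    intro v
    rw [hj, hlz1 w hw v, inner_zero_right, inner_zero_left]
  have hj0 : ∀ u : n, j (0 : n) u = 0 := by
    intro u
    apply ext_inner_right ℝ
    intro v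
    rw [hj, inner_zero_left, inner_zero_left]
  -- nabla case lemmas
  have hnVV : ∀ x ∈ Zᗮ, ∀ y ∈ Zᗮ, nabla x y = (2⁻¹ : ℝ) • l x y := by
    intro x hx y hy
    apply ext_inner_right ℝ
    intro w
    have h := hnab x y w
    have e1 : ⟪l w x, y⟫ = 0 := by rw [real_inner_comm]; exact hinner0' y hy _ (h2 w x)
    have e2 : ⟪l w y, x⟫ = 0 := by rw [real_inner_comm]; exact hinner0' x hx _ (h2 w y)
    rw [real_inner_smul_left]
    linarith
  have hnZr : ∀ (u : n), ∀ z ∈ Z, nabla u z = -((2⁻¹ : ℝ) • j z u) := by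
    intro u z hz
    apply ext_inner_right ℝ
    intro w
    have h := hnab u z w
    rw [hlz2 u z hz, hlz2 w z hz, inner_zero_left, inner_zero_left] at h
    have e3 : ⟪l w u, z⟫ = -⟪j z u, w⟫ := by
      rw [real_inner_comm, ← hj, hjskew, real_inner_comm]
    rw [inner_neg_left, real_inner_smul_left]
    linarith
  have hnZl : ∀ z ∈ Z, ∀ (u : n), nabla z u = -((2⁻¹ : ℝ) • j z u) := by
    intro z hz u
    apply ext_inner_right ℝ
    intro w
    have h := hnab z u w
    rw [hlz1 z hz u, hlz2 w z hz, inner_zero_left, inner_zero_left] at h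
    have e3 : ⟪l w u, z⟫ = -⟪j z u, w⟫ := by
      rw [real_inner_comm, ← hj, hjskew, real_inner_comm]
    rw [inner_neg_left, real_inner_smul_left]
    linarith
  -- alternating map slot lemmas
  have hadd1 : ∀ a a' b c : n, α ![a + a', b, c] = α ![a, b, c] + α ![a', b, c] := by
    intro a a' b c
    have h0 : ∀ x : n, Function.update ![a + a', b, c] 0 x = ![x, b, c] := by
      intro x; ext i; fin_cases i <;> simp [Function.update]
    have := α.map_update_add ![a + a', b, c] 0 a a'
    simpa [h0] using this
  have hadd2 : ∀ a b b' c : n, α ![a, b + b', c] = α ![a, b, c] + α ![a, b', c] := by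
    intro a b b' c
    have h0 : ∀ x : n, Function.update ![a, b + b', c] 1 x = ![a, x, c] := by
      intro x; ext i; fin_cases i <;> simp [Function.update]
    have := α.map_update_add ![a, b + b', c] 1 b b'
    simpa [h0] using this
  have hadd3 : ∀ a b c c' : n, α ![a, b, c + c'] = α ![a, b, c] + α ![a, b, c'] := by
    intro a b c c'
    have h0 : ∀ x : n, Function.update ![a, b, c + c'] 2 x = ![a, b, x] := by
      intro x; ext i; fin_cases i <;> simp [Function.update]
    have := α.map_update_add ![a, b, c + c'] 2 c c'
    simpa [h0] using this
  have hswap01 : ∀ a b c : n, α ![b, a, c] = -α ![a, b, c] := by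
    intro a b c
    have h : ![a, b, c] ∘ (Equiv.swap (0 : Fin 3) 1) = ![b, a, c] := by
      ext i; fin_cases i <;> simp [Equiv.swap_apply_of_ne_of_ne]
    have := α.map_swap ![a, b, c] (by decide : (0 : Fin 3) ≠ 1)
    rwa [h] at this
  have hswap12 : ∀ a b c : n, α ![a, c, b] = -α ![a, b, c] := by
    intro a b c
    have h : ![a, b, c] ∘ (Equiv.swap (1 : Fin 3) 2) = ![a, c, b] := by
      ext i; fin_cases i <;> simp [Equiv.swap_apply_of_ne_of_ne]
    have := α.map_swap ![a, b, c] (by decide : (1 : Fin 3) ≠ 2)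
    rwa [h] at this
  -- the master formula for α on decomposed vectors
  have hT : ∀ u1 ∈ Zᗮ, ∀ u2 ∈ Z, ∀ v1 ∈ Zᗮ, ∀ v2 ∈ Z, ∀ w1 ∈ Zᗮ, ∀ w2 ∈ Z,
      α ![u1 + u2, v1 + v2, w1 + w2] =
        ⟪B w2 u1, v1⟫ - ⟪B v2 u1, w1⟫ + ⟪B u2 v1, w1⟫ + ⟪γ u2 v2, w2⟫ := by
    intro u1 hu1 u2 hu2 v1 hv1 v2 hv2 w1 hw1 w2 hw2
    simp only [hadd1, hadd2, hadd3]
    rw [hα3 u1 hu1 v1 hv1 w1 hw1, hα2 u1 hu1 v1 hv1 w2 hw2,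
      hswap12 u1 w1 v2, hα2 u1 hu1 w1 hw1 v2 hv2,
      hα1 u1 hu1 v2 hv2 w2 hw2,
      hswap01 v1 u2 w1, hswap12 v1 w1 u2, hα2 v1 hv1 w1 hw1 u2 hu2,
      hswap01 v1 u2 w2, hα1 v1 hv1 u2 hu2 w2 hw2,
      hswap12 u2 w1 v2, hswap01 w1 u2 v2, hα1 w1 hw1 u2 hu2 v2 hv2,
      hα0 u2 hu2 v2 hv2 w2 hw2]
    ring
  -- expansion of B w along the orthonormal basis of Z
  have hBrep : ∀ w ∈ Z, ∀ x b : n, ⟪B w x, b⟫ = ∑ t : Fin m, ⟪(zb t : n), w⟫ * ⟪B (zb t : n) x, b⟫ := by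
    intro w hw x b
    have h := congrArg (Subtype.val) (zb.sum_repr ⟨w, hw⟩)
    have hrep : ∑ t : Fin m, ⟪(zb t : n), w⟫ • (zb t : n) = w := by
      simpa [zb.repr_apply_apply, Submodule.coe_inner] using h
    conv_lhs => rw [← hrep]
    rw [map_sum, LinearMap.coe_sum, Finset.sum_apply, sum_inner]
    refine Finset.sum_congr rfl fun t _ => ?_
    rw [map_smul, LinearMap.smul_apply, real_inner_smul_left]
  have hsum : ∀ x a b : n,
      (∑ t : Fin m, (⟪j (zb t : n) x, a⟫ * ⟪B (zb t : n) x, b⟫ -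
        ⟪j (zb t : n) x, b⟫ * ⟪B (zb t : n) x, a⟫))
      = ⟪B (l x a) x, b⟫ - ⟪B (l x b) x, a⟫ := by
    intro x a b
    rw [Finset.sum_sub_distrib, hBrep (l x a) (h2 x a) x b, hBrep (l x b) (h2 x b) x a]
    congr 1 <;> exact Finset.sum_congr rfl fun t _ => by rw [hj]
  -- nabla on decomposed vectors
  have hnexp : ∀ x ∈ Zᗮ, ∀ z ∈ Z, ∀ c1 ∈ Zᗮ, ∀ c2 ∈ Z,
      nabla (x + z) (c1 + c2)
        = ((-((2⁻¹ : ℝ) • j c2 x)) + (-((2⁻¹ : ℝ) • j z c1))) + (2⁻¹ : ℝ) • l x c1 := by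
    intro x hx z hz c1 hc1 c2 hc2
    simp only [map_add, LinearMap.add_apply]
    rw [hnVV x hx c1 hc1, hnZr x c2 hc2, hnZl z hz c1, hnZr z c2 hc2, hjZ0 c2 z hz]
    module
  have hnyy : ∀ x ∈ Zᗮ, ∀ z ∈ Z, nabla (x + z) (x + z) = -(j z x) + 0 := by
    intro x hx z hz
    rw [hnexp x hx z hz x hx z hz, hanti x]
    module
  -- the master expansion of the Killing expression
  have hK : ∀ x ∈ Zᗮ, ∀ z ∈ Z, ∀ a1 ∈ Zᗮ, ∀ a2 ∈ Z, ∀ b1 ∈ Zᗮ, ∀ b2 ∈ Z,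
      α ![nabla (x + z) (x + z), a1 + a2, b1 + b2]
        + α ![x + z, nabla (x + z) (a1 + a2), b1 + b2]
        + α ![x + z, a1 + a2, nabla (x + z) (b1 + b2)]
      = -⟪B b2 (j z x), a1⟫ + ⟪B a2 (j z x), b1⟫
        - 2⁻¹ * ⟪B b2 x, j z a1⟫ - 2⁻¹ * ⟪B b2 x, j a2 x⟫
        - 2⁻¹ * ⟪B (l x a1) x, b1⟫
        - 2⁻¹ * ⟪B z (j z a1), b1⟫ - 2⁻¹ * ⟪B z (j a2 x), b1⟫
        + 2⁻¹ * ⟪γ z (l x a1), b2⟫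
        + 2⁻¹ * ⟪B (l x b1) x, a1⟫
        + 2⁻¹ * ⟪B a2 x, j z b1⟫ + 2⁻¹ * ⟪B a2 x, j b2 x⟫
        - 2⁻¹ * ⟪B z a1, j z b1⟫ - 2⁻¹ * ⟪B z a1, j b2 x⟫
        + 2⁻¹ * ⟪γ z a2, l x b1⟫ := by
    intro x hx z hz a1 ha1 a2 ha2 b1 hb1 b2 hb2
    have qa_mem : (-((2⁻¹ : ℝ) • j a2 x)) + (-((2⁻¹ : ℝ) • j z a1)) ∈ Zᗮ :=
      add_mem (neg_mem (Submodule.smul_mem _ _ (hjV a2 x)))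
        (neg_mem (Submodule.smul_mem _ _ (hjV z a1)))
    have qb_mem : (-((2⁻¹ : ℝ) • j b2 x)) + (-((2⁻¹ : ℝ) • j z b1)) ∈ Zᗮ :=
      add_mem (neg_mem (Submodule.smul_mem _ _ (hjV b2 x)))
        (neg_mem (Submodule.smul_mem _ _ (hjV z b1)))
    have wa_mem : (2⁻¹ : ℝ) • l x a1 ∈ Z := Submodule.smul_mem _ _ (h2 x a1)
    have wb_mem : (2⁻¹ : ℝ) • l x b1 ∈ Z := Submodule.smul_mem _ _ (h2 x b1)
    rw [hnyy x hx z hz, hnexp x hx z hz a1 ha1 a2 ha2, hnexp x hx z hz b1 hb1 b2 hb2,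
      hT (-(j z x)) (neg_mem (hjV z x)) 0 (zero_mem Z) a1 ha1 a2 ha2 b1 hb1 b2 hb2,
      hT x hx z hz _ qa_mem _ wa_mem b1 hb1 b2 hb2,
      hT x hx z hz a1 ha1 a2 ha2 _ qb_mem _ wb_mem]
    simp only [map_add, map_neg, map_smul, map_zero, LinearMap.add_apply, LinearMap.neg_apply,
      LinearMap.smul_apply, LinearMap.zero_apply, inner_add_left, inner_add_right,
      inner_neg_left, inner_neg_right, real_inner_smul_left, real_inner_smul_right,
      inner_zero_left, inner_zero_right]
    ring
  constructor
  · intro H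
    constructor
    · intro z hz z' hz'
      apply LinearMap.ext
      intro u
      obtain ⟨u2, hu2, u1, hu1, rfl⟩ := Z.exists_add_mem_mem_orthogonal u
      have key : ∀ w1 ∈ Zᗮ,
          ⟪B z (j z' u1), w1⟫ - 2 * ⟪B z' (j z u1), w1⟫ + ⟪j z (B z' u1), w1⟫
            = ⟪j (γ z z') u1, w1⟫ := by
        intro w1 hw1
        have h := H (u1 + z) (w1 + 0) (0 + z')
        rw [hK u1 hu1 z hz w1 hw1 0 (zero_mem Z) 0 (zero_mem Zᗮ) z' hz'] at h
        simp only [map_zero, LinearMap.zero_apply, hj0, inner_zero_left, inner_zero_right,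
          mul_zero, zero_mul, add_zero, zero_add, neg_zero, sub_zero, zero_sub] at h
        have c1 := hjskew z (B z' u1) w1
        have c2 : ⟪γ z (l u1 w1), z'⟫ = -⟪j (γ z z') u1, w1⟫ := by
          rw [hγtot z hz (l u1 w1) (h2 u1 w1) z' hz', ← hj]
        have c3 : ⟪B z w1, j z' u1⟫ = -⟪B z (j z' u1), w1⟫ := by
          rw [hBskew z hz w1 (j z' u1), real_inner_comm (B z (j z' u1)) w1]
        linarith
      simp only [LinearMap.sub_apply, LinearMap.add_apply, LinearMap.comp_apply, map_add]
      rw [hjZ0 z' u2 hu2, hjZ0 z u2 hu2, hBZ z' hz' u2 hu2, hjZ0 (γ z z') u2 hu2]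
      simp only [map_zero, zero_add, add_zero]
      apply ext_inner_right ℝ
      intro w
      obtain ⟨w2, hw2, w1, hw1, rfl⟩ := Z.exists_add_mem_mem_orthogonal w
      have m1 : B z (j z' u1) ∈ Zᗮ := hBV z hz _ (hjV z' u1)
      have m2 : B z' (j z u1) ∈ Zᗮ := hBV z' hz' _ (hjV z u1)
      have m3 : j z (B z' u1) ∈ Zᗮ := hjV z _
      have m4 : j (γ z z') u1 ∈ Zᗮ := hjV _ u1
      simp only [inner_sub_left, inner_add_left, inner_add_right,
        hinner0' _ m1 w2 hw2, hinner0' _ m2 w2 hw2, hinner0' _ m3 w2 hw2,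
        hinner0' _ m4 w2 hw2, zero_add]
      linarith [key w1 hw1]
    · intro x hx a b
      rw [hsum x a b, sub_eq_zero]
      obtain ⟨a2, ha2, a1, ha1, rfl⟩ := Z.exists_add_mem_mem_orthogonal a
      obtain ⟨b2, hb2, b1, hb1, rfl⟩ := Z.exists_add_mem_mem_orthogonal b
      rw [map_add, hlz2 x a2 ha2, zero_add, map_add, hlz2 x b2 hb2, zero_add,
        inner_add_right, hinner0' _ (hBV _ (h2 x a1) x hx) b2 hb2, zero_add,
        inner_add_right, hinner0' _ (hBV _ (h2 x b1) x hx) a2 ha2, zero_add]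
      have h := H (x + 0) (a1 + 0) (b1 + 0)
      rw [hK x hx 0 (zero_mem Z) a1 ha1 0 (zero_mem Z) b1 hb1 0 (zero_mem Z)] at h
      simp only [map_zero, LinearMap.zero_apply, hj0, inner_zero_left, inner_zero_right,
        mul_zero, zero_mul, add_zero, zero_add, neg_zero, sub_zero, zero_sub] at h
      linarith
  · rintro ⟨hi, hii⟩
    have hi' : ∀ z ∈ Z, ∀ z' ∈ Z, ∀ u w : n,
        ⟪B z (j z' u), w⟫ - 2 * ⟪B z' (j z u), w⟫ + ⟪j z (B z' u), w⟫
          = ⟪j (γ z z') u, w⟫ := by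
      intro z hz z' hz' u w
      have h := LinearMap.ext_iff.mp (hi z hz z' hz') u
      simp only [LinearMap.sub_apply, LinearMap.add_apply, LinearMap.comp_apply] at h
      have h' := congrArg (fun v => ⟪v, w⟫) h
      simp only [inner_sub_left, inner_add_left] at h'
      linarith
    have hd1 : ∀ z ∈ Z, ∀ z' ∈ Z, ∀ u : n, ⟪j z' u, B z u⟫ = ⟪j z u, B z' u⟫ := by
      intro z hz z' hz' u
      have h := hi' z hz z' hz' u u
      have e1 : ⟪B z (j z' u), u⟫ = -⟪j z' u, B z u⟫ := hBskew z hz _ u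
      have e2 : ⟪B z' (j z u), u⟫ = -⟪j z u, B z' u⟫ := hBskew z' hz' _ u
      have e3 : ⟪j z (B z' u), u⟫ = -⟪B z' u, j z u⟫ := hjskew z _ u
      have e4 : ⟪j (γ z z') u, u⟫ = 0 := by
        have h1 := hjskew (γ z z') u u
        have h2' := real_inner_comm (j (γ z z') u) u
        linarith
      have e5 := real_inner_comm (j z u) (B z' u)
      linarith
    have hd2 : ∀ z ∈ Z, ∀ a b : n, ⟪B z (j z a), b⟫ = ⟪B z (j z b), a⟫ := by
      intro z hz a b
      have hcomm : ∀ u : n, j z (B z u) = B z (j z u) := by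
        intro u
        have h := LinearMap.ext_iff.mp (hi z hz z hz) u
        simp only [LinearMap.sub_apply, LinearMap.add_apply, LinearMap.comp_apply,
          hγalt, hj0, sub_self, zero_add] at h
        exact sub_eq_zero.mp h
      rw [hBskew z hz (j z a) b, hjskew z a (B z b), neg_neg, hcomm b]
      exact real_inner_comm (B z (j z b)) a
    intro y a b
    obtain ⟨yz, hyz, yv, hyv, rfl⟩ := Z.exists_add_mem_mem_orthogonal y
    obtain ⟨az, haz, av, hav, rfl⟩ := Z.exists_add_mem_mem_orthogonal a
    obtain ⟨bz, hbz, bv, hbv, rfl⟩ := Z.exists_add_mem_mem_orthogonal b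
    rw [add_comm yz yv, add_comm az av, add_comm bz bv,
      hK yv hyv yz hyz av hav az haz bv hbv bz hbz]
    have g1 : ⟪B (l yv av) yv, bv⟫ = ⟪B (l yv bv) yv, av⟫ := by
      have h := hii yv hyv av bv
      rw [hsum] at h
      linarith
    have g2 : ⟪B yz (j yz av), bv⟫ = ⟪B yz (j yz bv), av⟫ := hd2 yz hyz av bv
    have c1 : ⟪B yz av, j yz bv⟫ = -⟪B yz (j yz bv), av⟫ := by
      rw [hBskew yz hyz av (j yz bv), real_inner_comm (B yz (j yz bv)) av]
    have c2 : ⟪B bz yv, j yz av⟫ = -⟪j yz (B bz yv), av⟫ := by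
      have h := hjskew yz (B bz yv) av
      linarith
    have c3 : ⟪γ yz (l yv av), bz⟫ = -⟪j (γ yz bz) yv, av⟫ := by
      rw [hγtot yz hyz (l yv av) (h2 yv av) bz hbz, ← hj]
    have c4 : ⟪B yz av, j bz yv⟫ = -⟪B yz (j bz yv), av⟫ := by
      rw [hBskew yz hyz av (j bz yv), real_inner_comm (B yz (j bz yv)) av]
    have g3 : ⟪B yz (j bz yv), av⟫ - 2 * ⟪B bz (j yz yv), av⟫ + ⟪j yz (B bz yv), av⟫
        = ⟪j (γ yz bz) yv, av⟫ := hi' yz hyz bz hbz yv av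
    have c5 : ⟪B az yv, j yz bv⟫ = -⟪j yz (B az yv), bv⟫ := by
      have h := hjskew yz (B az yv) bv
      linarith
    have c6 : ⟪γ yz az, l yv bv⟫ = ⟪j (γ yz az) yv, bv⟫ := (hj _ yv bv).symm
    have g4 : ⟪B yz (j az yv), bv⟫ - 2 * ⟪B az (j yz yv), bv⟫ + ⟪j yz (B az yv), bv⟫
        = ⟪j (γ yz az) yv, bv⟫ := hi' yz hyz az haz yv bv
    have c7 := real_inner_comm (j az yv) (B bz yv)
    have c8 := real_inner_comm (j bz yv) (B az yv)
    have g5 : ⟪j az yv, B bz yv⟫ = ⟪j bz yv, B az yv⟫ := hd1 bz hbz az haz yv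
    linarith
end

section
/- Let v be a Euclidean space and A₁,…,A_m, D₁,…,D_m skew-symmetric endomorphisms of v with A₁,…,A_m linearly independent. If Σ_t A_t x ∧ D_t x = 0 for all x ∈ v, then each D_t is a linear combination of A₁,…,A_m. Moreover, with G the Gram matrix G_{ts} = ⟨A_s, A_t⟩ and C_{ts} = ⟨A_s, D_t⟩, one has Σ_t G_{ts} D_t = Σ_t C_{ts} A_t for each s. -/
open scoped RealInnerProductSpace

lemma trace_onb {V : Type*} [NormedAddCommGroup V] [InnerProductSpace ℝ V]
    [FiniteDimensional ℝ V] {ι : Type*} [Fintype ι] [DecidableEq ι]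
    (b : OrthonormalBasis ι ℝ V) (f : V →ₗ[ℝ] V) :
    LinearMap.trace ℝ V f = ∑ i, ⟪b i, f (b i)⟫ := by
  rw [LinearMap.trace_eq_matrix_trace ℝ b.toBasis f, Matrix.trace]
  simp [Matrix.diag, LinearMap.toMatrix_apply, OrthonormalBasis.coe_toBasis_repr_apply,
    OrthonormalBasis.repr_apply_apply, OrthonormalBasis.coe_toBasis]

/-- The key scalar identity: `Σ_t (G_{ts} ⟪D_t x, c⟫ - C_{ts} ⟪A_t x, c⟫) = 0`. -/
lemma killing_aux {V : Type*} [NormedAddCommGroup V] [InnerProductSpace ℝ V]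
    {ι : Type*} [Fintype ι]
    (m : ℕ) (A D : Fin m → (V →ₗ[ℝ] V))
    (hAskew : ∀ t : Fin m, ∀ a b : V, ⟪A t a, b⟫ = -⟪a, A t b⟫)
    (hDskew : ∀ t : Fin m, ∀ a b : V, ⟪D t a, b⟫ = -⟪a, D t b⟫)
    (hwedge : ∀ x a b : V,
      ∑ t : Fin m, (⟪A t x, a⟫ * ⟪D t x, b⟫ - ⟪A t x, b⟫ * ⟪D t x, a⟫) = 0)
    (b : OrthonormalBasis ι ℝ V) (s : Fin m) (x c : V) :
    ∑ t : Fin m, ((∑ i, ⟪A t (b i), A s (b i)⟫) * ⟪D t x, c⟫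
      - (∑ i, ⟪D t (b i), A s (b i)⟫) * ⟪A t x, c⟫) = 0 := by
  have hA' : ∀ t : Fin m, ∀ u w : V, ⟪u, A t w⟫ = -⟪A t u, w⟫ := fun t u w => by
    rw [hAskew t u w]; ring
  have hD' : ∀ t : Fin m, ∀ u w : V, ⟪u, D t w⟫ = -⟪D t u, w⟫ := fun t u w => by
    rw [hDskew t u w]; ring
  -- polarized identity
  have hpol : ∀ x y a c : V,
      ∑ t : Fin m, (⟪A t x, a⟫ * ⟪D t y, c⟫ - ⟪A t x, c⟫ * ⟪D t y, a⟫
           + ⟪A t y, a⟫ * ⟪D t x, c⟫ - ⟪A t y, c⟫ * ⟪D t x, a⟫) = 0 := by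
    intro x y a c
    have h1 := hwedge (x + y) a c
    have h2 := hwedge x a c
    have h3 := hwedge y a c
    have expand : ∀ t ∈ Finset.univ (α := Fin m),
        (⟪A t (x+y), a⟫ * ⟪D t (x+y), c⟫ - ⟪A t (x+y), c⟫ * ⟪D t (x+y), a⟫)
      = ((⟪A t x, a⟫ * ⟪D t x, c⟫ - ⟪A t x, c⟫ * ⟪D t x, a⟫)
      + (⟪A t y, a⟫ * ⟪D t y, c⟫ - ⟪A t y, c⟫ * ⟪D t y, a⟫))
      + (⟪A t x, a⟫ * ⟪D t y, c⟫ - ⟪A t x, c⟫ * ⟪D t y, a⟫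
           + ⟪A t y, a⟫ * ⟪D t x, c⟫ - ⟪A t y, c⟫ * ⟪D t x, a⟫) := by
      intro t _
      simp only [map_add, inner_add_left]
      ring
    rw [Finset.sum_congr rfl expand, Finset.sum_add_distrib, Finset.sum_add_distrib,
      h2, h3, zero_add, zero_add] at h1
    exact h1
  -- the key identity with cubic terms
  have hkey : ∀ x c : V, ∑ t : Fin m, (-⟪D t (A s (A t x)), c⟫
      - (∑ i, ⟪D t (b i), A s (b i)⟫) * ⟪A t x, c⟫
      + (∑ i, ⟪A t (b i), A s (b i)⟫) * ⟪D t x, c⟫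
      + ⟪A t (A s (D t x)), c⟫) = 0 := by
    intro x c
    have h0 : ∑ i, ∑ t : Fin m,
        (⟪A t x, A s (b i)⟫ * ⟪D t (b i), c⟫ - ⟪A t x, c⟫ * ⟪D t (b i), A s (b i)⟫
        + ⟪A t (b i), A s (b i)⟫ * ⟪D t x, c⟫ - ⟪A t (b i), c⟫ * ⟪D t x, A s (b i)⟫) = 0 :=
      Finset.sum_eq_zero fun i _ => hpol x (b i) (A s (b i)) c
    rw [Finset.sum_comm] at h0
    rw [← h0]
    refine Finset.sum_congr rfl fun t _ => ?_
    refine Eq.symm ?_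
    have e1 : ∑ i, ⟪A t x, A s (b i)⟫ * ⟪D t (b i), c⟫ = -⟪D t (A s (A t x)), c⟫ := by
      have h : ∀ i ∈ Finset.univ (α := ι), ⟪A t x, A s (b i)⟫ * ⟪D t (b i), c⟫
          = ⟪A s (A t x), b i⟫ * ⟪b i, D t c⟫ := fun i _ => by
        rw [hA' s (A t x) (b i), hDskew t (b i) c]; ring
      rw [Finset.sum_congr rfl h, b.sum_inner_mul_inner, hD' t (A s (A t x)) c]
    have e4 : ∑ i, ⟪A t (b i), c⟫ * ⟪D t x, A s (b i)⟫ = -⟪A t (A s (D t x)), c⟫ := by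
      have h : ∀ i ∈ Finset.univ (α := ι), ⟪A t (b i), c⟫ * ⟪D t x, A s (b i)⟫
          = ⟪A s (D t x), b i⟫ * ⟪b i, A t c⟫ := fun i _ => by
        rw [hAskew t (b i) c, hA' s (D t x) (b i)]; ring
      rw [Finset.sum_congr rfl h, b.sum_inner_mul_inner, hA' t (A s (D t x)) c]
    have split : ∑ i, (⟪A t x, A s (b i)⟫ * ⟪D t (b i), c⟫
        - ⟪A t x, c⟫ * ⟪D t (b i), A s (b i)⟫
        + ⟪A t (b i), A s (b i)⟫ * ⟪D t x, c⟫
        - ⟪A t (b i), c⟫ * ⟪D t x, A s (b i)⟫)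
      = (∑ i, ⟪A t x, A s (b i)⟫ * ⟪D t (b i), c⟫)
        - (∑ i, ⟪A t x, c⟫ * ⟪D t (b i), A s (b i)⟫)
        + (∑ i, ⟪A t (b i), A s (b i)⟫ * ⟪D t x, c⟫)
        - (∑ i, ⟪A t (b i), c⟫ * ⟪D t x, A s (b i)⟫) := by
      rw [← Finset.sum_sub_distrib, ← Finset.sum_add_distrib, ← Finset.sum_sub_distrib]
    rw [split, e1, e4, ← Finset.mul_sum, ← Finset.sum_mul]
    ring
  -- swap x and c in hkey and use skewness
  have h1 := hkey x c
  have h2 := hkey c x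
  have h2' : ∑ t : Fin m, (⟪A t (A s (D t x)), c⟫
      + (∑ i, ⟪D t (b i), A s (b i)⟫) * ⟪A t x, c⟫
      - (∑ i, ⟪A t (b i), A s (b i)⟫) * ⟪D t x, c⟫
      - ⟪D t (A s (A t x)), c⟫) = 0 := by
    rw [← h2]
    refine Finset.sum_congr rfl fun t _ => ?_
    have f1 : ⟪D t (A s (A t c)), x⟫ = -⟪A t (A s (D t x)), c⟫ := by
      rw [hDskew t (A s (A t c)) x, hAskew s (A t c) (D t x), hAskew t c (A s (D t x)),
        real_inner_comm c (A t (A s (D t x)))]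
      ring
    have f2 : ⟪A t (A s (D t c)), x⟫ = -⟪D t (A s (A t x)), c⟫ := by
      rw [hAskew t (A s (D t c)) x, hAskew s (D t c) (A t x), hDskew t c (A s (A t x)),
        real_inner_comm c (D t (A s (A t x)))]
      ring
    have f3 : ⟪A t c, x⟫ = -⟪A t x, c⟫ := by
      rw [hAskew t c x, real_inner_comm c (A t x)]
    have f4 : ⟪D t c, x⟫ = -⟪D t x, c⟫ := by
      rw [hDskew t c x, real_inner_comm c (D t x)]
    rw [f1, f2, f3, f4]
    ring
  have h3 : ∑ t : Fin m, ((-⟪D t (A s (A t x)), c⟫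
      - (∑ i, ⟪D t (b i), A s (b i)⟫) * ⟪A t x, c⟫
      + (∑ i, ⟪A t (b i), A s (b i)⟫) * ⟪D t x, c⟫
      + ⟪A t (A s (D t x)), c⟫)
      - (⟪A t (A s (D t x)), c⟫
      + (∑ i, ⟪D t (b i), A s (b i)⟫) * ⟪A t x, c⟫
      - (∑ i, ⟪A t (b i), A s (b i)⟫) * ⟪D t x, c⟫
      - ⟪D t (A s (A t x)), c⟫)) = 0 := by
    rw [Finset.sum_sub_distrib, h1, h2', sub_zero]
  have h4 : (2 : ℝ) * ∑ t : Fin m, ((∑ i, ⟪A t (b i), A s (b i)⟫) * ⟪D t x, c⟫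
      - (∑ i, ⟪D t (b i), A s (b i)⟫) * ⟪A t x, c⟫) = 0 := by
    rw [Finset.mul_sum, ← h3]
    exact Finset.sum_congr rfl fun t _ => by ring
  linarith

/-- Let `v` be a Euclidean space and `A₁,…,A_m, D₁,…,D_m` skew-symmetric
endomorphisms with `A₁,…,A_m` linearly independent.  If `Σ_t A_t x ∧ D_t x = 0` for all
`x ∈ v`, then each `D_t` is a linear combination of the `A_t`; moreover, with
`G_{ts} = ⟨A_s, A_t⟩` and `C_{ts} = ⟨A_s, D_t⟩` (trace inner products), one has
`Σ_t G_{ts} D_t = Σ_t C_{ts} A_t` for each `s`. -/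
theorem killing_stmt14 {V : Type*} [NormedAddCommGroup V] [InnerProductSpace ℝ V]
    [FiniteDimensional ℝ V]
    (m : ℕ) (A D : Fin m → (V →ₗ[ℝ] V))
    (hAskew : ∀ t : Fin m, ∀ a b : V, ⟪A t a, b⟫ = -⟪a, A t b⟫)
    (hDskew : ∀ t : Fin m, ∀ a b : V, ⟪D t a, b⟫ = -⟪a, D t b⟫)
    (hAind : LinearIndependent ℝ A)
    -- Σ_t A_t x ∧ D_t x = 0 as a 2-form
    (hwedge : ∀ x a b : V,
      ∑ t : Fin m, (⟪A t x, a⟫ * ⟪D t x, b⟫ - ⟪A t x, b⟫ * ⟪D t x, a⟫) = 0) :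
    (∀ t : Fin m, D t ∈ Submodule.span ℝ (Set.range A)) ∧
    (∀ s : Fin m,
      ∑ t : Fin m, (LinearMap.trace ℝ V ((LinearMap.adjoint (A s)) ∘ₗ (A t))) • D t =
      ∑ t : Fin m, (LinearMap.trace ℝ V ((LinearMap.adjoint (A s)) ∘ₗ (D t))) • A t) := by
  classical
  set b := stdOrthonormalBasis ℝ V with hb
  set G : Fin m → Fin m → ℝ := fun s t => ∑ i, ⟪A t (b i), A s (b i)⟫ with hGdef
  set Cm : Fin m → Fin m → ℝ := fun s t => ∑ i, ⟪D t (b i), A s (b i)⟫ with hCdef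
  -- the trace inner products equal G and Cm
  have hGtr : ∀ s t : Fin m,
      LinearMap.trace ℝ V ((LinearMap.adjoint (A s)) ∘ₗ (A t)) = G s t := by
    intro s t
    rw [trace_onb b]
    exact Finset.sum_congr rfl fun i _ => by
      rw [LinearMap.comp_apply, real_inner_comm, LinearMap.adjoint_inner_left,
        real_inner_comm]
  have hCtr : ∀ s t : Fin m,
      LinearMap.trace ℝ V ((LinearMap.adjoint (A s)) ∘ₗ (D t)) = Cm s t := by
    intro s t
    rw [trace_onb b]
    exact Finset.sum_congr rfl fun i _ => by
      rw [LinearMap.comp_apply, real_inner_comm, LinearMap.adjoint_inner_left,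
        real_inner_comm]
  -- Goal 2 in G/Cm form
  have goal2 : ∀ s : Fin m, ∑ t : Fin m, G s t • D t = ∑ t : Fin m, Cm s t • A t := by
    intro s
    apply LinearMap.ext
    intro x
    have hz : ∀ c : V, ⟪(∑ t : Fin m, G s t • D t) x - (∑ t : Fin m, Cm s t • A t) x, c⟫ = 0 := by
      intro c
      have haux := killing_aux m A D hAskew hDskew hwedge b s x c
      have e : ⟪(∑ t : Fin m, G s t • D t) x, c⟫ - ⟪(∑ t : Fin m, Cm s t • A t) x, c⟫
          = ∑ t : Fin m, (G s t * ⟪D t x, c⟫ - Cm s t * ⟪A t x, c⟫) := by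
        simp only [LinearMap.sum_apply, LinearMap.smul_apply, sum_inner,
          real_inner_smul_left, Finset.sum_sub_distrib]
      rw [inner_sub_left, e]
      exact haux
    have h0 := hz ((∑ t : Fin m, G s t • D t) x - (∑ t : Fin m, Cm s t • A t) x)
    rw [inner_self_eq_zero, sub_eq_zero] at h0
    exact h0
  refine ⟨?_, fun s => by simp only [hGtr, hCtr]; exact goal2 s⟩
  -- Goal 1: invert the Gram matrix
  intro t
  set W := Submodule.span ℝ (Set.range A) with hW
  have hFW : ∀ s : Fin m, (∑ t' : Fin m, G s t' • D t') ∈ W := by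
    intro s
    rw [goal2 s]
    exact Submodule.sum_mem _ fun t' _ =>
      Submodule.smul_mem _ _ (Submodule.subset_span ⟨t', rfl⟩)
  set M : Matrix (Fin m) (Fin m) ℝ := Matrix.of G with hM
  have hMsym : ∀ s t' : Fin m, M s t' = M t' s := by
    intro s t'
    simp only [hM, Matrix.of_apply, hGdef]
    exact Finset.sum_congr rfl fun i _ => real_inner_comm _ _
  -- injectivity of mulVec
  have hker : ∀ cv : Fin m → ℝ, M.mulVec cv = 0 → cv = 0 := by
    intro cv hcv
    set X : V →ₗ[ℝ] V := ∑ t' : Fin m, cv t' • A t' with hX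
    have key : ∑ i, ⟪X (b i), X (b i)⟫ = ∑ s : Fin m, cv s * M.mulVec cv s := by
      have lhs : ∀ i, ⟪X (b i), X (b i)⟫
          = ∑ s : Fin m, ∑ t' : Fin m, cv s * (cv t' * ⟪A t' (b i), A s (b i)⟫) := by
        intro i
        simp only [hX, LinearMap.sum_apply, LinearMap.smul_apply, sum_inner,
          real_inner_smul_left, inner_sum, real_inner_smul_right, Finset.mul_sum]
      have rhs : ∀ s : Fin m, cv s * M.mulVec cv s
          = ∑ t' : Fin m, ∑ i, cv s * (cv t' * ⟪A t' (b i), A s (b i)⟫) := by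
        intro s
        simp only [Matrix.mulVec, dotProduct, hM, Matrix.of_apply, hGdef,
          Finset.mul_sum, Finset.sum_mul]
        refine Finset.sum_congr rfl fun t' _ => Finset.sum_congr rfl fun i _ => ?_
        ring
      simp only [lhs, rhs]
      rw [Finset.sum_comm]
      exact Finset.sum_congr rfl fun s _ => Finset.sum_comm
    rw [hcv] at key
    simp only [Pi.zero_apply, mul_zero, Finset.sum_const_zero] at key
    have hXz : ∀ i, X (b i) = 0 := by
      intro i
      have hnn : ∀ i ∈ Finset.univ, (0:ℝ) ≤ ⟪X (b i), X (b i)⟫ := fun i _ =>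
        real_inner_self_nonneg
      have := (Finset.sum_eq_zero_iff_of_nonneg hnn).mp key i (Finset.mem_univ i)
      rwa [inner_self_eq_zero (𝕜 := ℝ)] at this
    have hX0 : X = 0 := by
      apply b.toBasis.ext
      intro i
      simp only [OrthonormalBasis.coe_toBasis, LinearMap.zero_apply]
      exact hXz i
    have := Fintype.linearIndependent_iff.mp hAind cv (by rw [← hX]; exact hX0)
    funext j; exact this j
  have hinj : Function.Injective M.mulVecLin := by
    rw [← LinearMap.ker_eq_bot]
    exact LinearMap.ker_eq_bot'.mpr fun cv h => hker cv (by rwa [Matrix.mulVecLin_apply] at h)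
  have hsurj : Function.Surjective M.mulVecLin :=
    (LinearMap.injective_iff_surjective).mp hinj
  obtain ⟨cv, hcv⟩ := hsurj (Pi.single t 1)
  rw [Matrix.mulVecLin_apply] at hcv
  have hDt : D t = ∑ s : Fin m, cv s • (∑ t' : Fin m, G s t' • D t') := by
    have step : ∑ s : Fin m, cv s • (∑ t' : Fin m, G s t' • D t')
        = ∑ t' : Fin m, (M.mulVec cv t') • D t' := by
      have s1 : ∑ s : Fin m, cv s • (∑ t' : Fin m, G s t' • D t')
          = ∑ s : Fin m, ∑ t' : Fin m, (M t' s * cv s) • D t' := by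
        refine Finset.sum_congr rfl fun s _ => ?_
        rw [Finset.smul_sum]
        refine Finset.sum_congr rfl fun t' _ => ?_
        rw [smul_smul]
        congr 1
        rw [← hMsym s t']
        simp only [hM, Matrix.of_apply]
        ring
      have s2 : ∑ t' : Fin m, ∑ s : Fin m, (M t' s * cv s) • D t'
          = ∑ t' : Fin m, (M.mulVec cv t') • D t' := by
        refine Finset.sum_congr rfl fun t' _ => ?_
        rw [← Finset.sum_smul]
        rfl
      rw [s1, Finset.sum_comm, s2]
    rw [step, hcv]
    simp [Pi.single_apply, ite_smul]
  rw [hDt]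
  exact Submodule.sum_mem _ fun s _ => Submodule.smul_mem _ _ (hFW s)
end
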